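/- arXiv:1808.01221 — 6 statements merged into one kernel-verified Lean document; each statement's English description precedes it below -/
import Mathlib

section
/- Let $\alpha \in \mathbb{Z}^n$ and let $\pi_\alpha \in S_n$ be the unique permutation such that for all $i < j$: $\pi_\alpha^{-1}(i) < \pi_\alpha^{-1}(j)$ if and only if $|\alpha_i| > |\alpha_j|$ or $0 \le \alpha_i = \alpha_j$ or $0 \le \alpha_i = -\alpha_j$. Let $\sigma_\alpha := (\mathrm{sgn}(\alpha_1), \ldots, \mathrm{sgn}(\alpha_n)) \in \{\pm1\}^n$ where $\mathrm{sgn}(a) = 1$ if $a \ge 0$ and $-1$ if $a < 0$. Then $w_\alpha := \sigma_\alpha \pi_\alpha$ is the unique element of minimal length in $W_n$ with $w_\alpha^{-1}\alpha = \alpha^+$, where $\alpha^+$ is the unique partition in the $W_n$-orbit of $\alpha$. -/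
noncomputable section

/-- `l ∈ ℤⁿ` is a partition: weakly decreasing and nonnegative. -/
def IsPartition {n : ℕ} (l : Fin n → ℤ) : Prop :=
  (∀ i j : Fin n, i ≤ j → l j ≤ l i) ∧ ∀ i, 0 ≤ l i

/-- The action of `σπ ∈ Wₙ = {±1}ⁿ ⋊ Sₙ` on `ℤⁿ`: `(σπ α)_j = σ_j α_{π⁻¹(j)}`. -/
def actZ {n : ℕ} (ε : Fin n → Bool) (π : Equiv.Perm (Fin n)) (α : Fin n → ℤ) : Fin n → ℤ :=
  fun j => (if ε j then -1 else 1) * α (π.symm j)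

/-- The simple reflection `s_j` of type `Bₙ` acting on `ℤⁿ`:
for `j+1 < n` it swaps coordinates `j` and `j+1`, and for `j` the last index it
negates the last coordinate. -/
def sjZ {n : ℕ} (j : Fin n) (α : Fin n → ℤ) : Fin n → ℤ :=
  if h : (j : ℕ) + 1 < n then α ∘ (Equiv.swap j ⟨(j : ℕ) + 1, h⟩)
  else Function.update α j (-(α j))

/-- `w : ℤⁿ → ℤⁿ` is expressible as a word of length `r` in the simple reflections. -/
def IsWord {n : ℕ} (w : (Fin n → ℤ) → (Fin n → ℤ)) (r : ℕ) : Prop :=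
  ∃ L : List (Fin n), L.length = r ∧ w = (L.map (fun j => sjZ j)).foldr (· ∘ ·) id

/-- The length of `w ∈ Wₙ`: the minimal length of a word in the simple reflections. -/
def lenW {n : ℕ} (w : (Fin n → ℤ) → (Fin n → ℤ)) : ℕ := sInf {r | IsWord w r}

/-- `π` is the Sahi permutation `π_α` of `α`: for `i < j`,
`π⁻¹(i) < π⁻¹(j)` iff `|α_i| > |α_j|` or `0 ≤ α_i = α_j` or `0 ≤ α_i = -α_j`. -/
def SahiPerm {n : ℕ} (α : Fin n → ℤ) (π : Equiv.Perm (Fin n)) : Prop :=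
  ∀ i j : Fin n, i < j →
    (π.symm i < π.symm j ↔
      ((α j).natAbs < (α i).natAbs ∨ (0 ≤ α i ∧ (α i = α j ∨ α i = -α j))))

/- ## auxiliary development -/

namespace SahiAux
open Finset

variable {n : ℕ}

/-- test vector (1, 2, …, n) -/
def tv (n : ℕ) : Fin n → ℤ := fun k => (k : ℤ) + 1

/-- rank of a signed value in the order 1 < 2 < … < n < -n < … < -1 -/
def Rk (n : ℕ) (a : ℤ) : ℤ := if 0 < a then a else 2 * n + 1 + a

/-- the window vector of a group element -/
def uvec (ε : Fin n → Bool) (π : Equiv.Perm (Fin n)) : Fin n → ℤ := actZ ε π (tv n)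

/-- signed-permutation-vector predicate -/
def SPV (n : ℕ) (u : Fin n → ℤ) : Prop :=
  (∀ j, u j ≠ 0 ∧ (u j).natAbs ≤ n) ∧ ∀ i j, (u i).natAbs = (u j).natAbs → i = j

theorem actZ_comp (ε1 ε2 : Fin n → Bool) (π1 π2 : Equiv.Perm (Fin n)) :
    actZ ε1 π1 ∘ actZ ε2 π2
      = actZ (fun j => xor (ε1 j) (ε2 (π1.symm j))) (π1 * π2) := by
  funext α j
  simp only [Function.comp_apply, actZ, Equiv.Perm.mul_apply, Equiv.symm_apply_apply]
  have : (π1 * π2).symm j = π2.symm (π1.symm j) := rfl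
  rw [this]
  rcases Bool.eq_false_or_eq_true (ε1 j) with h1 | h1 <;>
    rcases Bool.eq_false_or_eq_true (ε2 (π1.symm j)) with h2 | h2 <;>
    simp [h1, h2]

theorem uvec_apply (ε : Fin n → Bool) (π : Equiv.Perm (Fin n)) (j : Fin n) :
    uvec ε π j = (if ε j then -1 else 1) * ((π.symm j : ℤ) + 1) := rfl

theorem SPV_uvec (ε : Fin n → Bool) (π : Equiv.Perm (Fin n)) : SPV n (uvec ε π) := by
  constructor
  · intro j
    have h1 : ((π.symm j : ℕ)) < n := (π.symm j).isLt
    rw [uvec_apply]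
    cases h : ε j <;> simp <;> constructor <;> omega
  · intro i j hij
    have hi : (uvec ε π i).natAbs = (π.symm i : ℕ) + 1 := by
      rw [uvec_apply]; cases h : ε i <;> simp <;> omega
    have hj : (uvec ε π j).natAbs = (π.symm j : ℕ) + 1 := by
      rw [uvec_apply]; cases h : ε j <;> simp <;> omega
    rw [hi, hj] at hij
    have : π.symm i = π.symm j := by
      apply Fin.ext; omega
    simpa using congrArg π this

theorem sjZ_swap_eq (j : Fin n) (h : (j : ℕ) + 1 < n) :
    sjZ j = actZ (fun _ => false) (Equiv.swap j ⟨(j : ℕ) + 1, h⟩) := by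
  funext α m
  simp [sjZ, h, actZ, Equiv.symm_swap]

theorem sjZ_last_eq (j : Fin n) (h : ¬ (j : ℕ) + 1 < n) :
    sjZ j = actZ (fun m => decide (m = j)) 1 := by
  funext α m
  simp only [sjZ, h, dif_neg, not_false_iff, actZ]
  by_cases hm : m = j
  · subst hm; simp [Function.update_self, Equiv.Perm.one_symm]
  · simp [Function.update_of_ne hm, hm, Equiv.Perm.one_symm]

theorem sjZ_eq_actZ (j : Fin n) : ∃ ε π, sjZ j = actZ ε π := by
  by_cases h : (j : ℕ) + 1 < n
  · exact ⟨_, _, sjZ_swap_eq j h⟩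
  · exact ⟨_, _, sjZ_last_eq j h⟩

theorem word_eq_actZ (L : List (Fin n)) :
    ∃ ε π, (L.map (fun j => sjZ j)).foldr (· ∘ ·) id = actZ ε π := by
  induction L with
  | nil =>
    refine ⟨fun _ => false, 1, ?_⟩
    funext α m; simp [actZ, Equiv.Perm.one_symm]
  | cons a t ih =>
    obtain ⟨ε, π, hεπ⟩ := ih
    obtain ⟨ε1, π1, h1⟩ := sjZ_eq_actZ (n := n) a
    rw [List.map_cons, List.foldr_cons, hεπ, h1, actZ_comp]
    exact ⟨_, _, rfl⟩

theorem sjZ_invol (j : Fin n) : sjZ j ∘ sjZ j = id := by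
  funext α m
  by_cases h : (j : ℕ) + 1 < n
  · simp [sjZ, h, Function.comp]
  · simp only [sjZ, h, dif_neg, not_false_iff, Function.comp, id]
    by_cases hm : m = j
    · subst hm; simp
    · simp [Function.update_of_ne hm]

theorem actZ_inv_right (ε : Fin n → Bool) (π : Equiv.Perm (Fin n)) :
    actZ ε π ∘ actZ (fun j => ε (π j)) π.symm = id := by
  funext α m
  simp only [Function.comp_apply, actZ, Equiv.symm_symm, Equiv.apply_symm_apply, id]
  cases h : ε m <;> simp [h]

theorem actZ_inv_left (ε : Fin n → Bool) (π : Equiv.Perm (Fin n)) :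
    actZ (fun j => ε (π j)) π.symm ∘ actZ ε π = id := by
  funext α m
  simp only [Function.comp_apply, actZ, Equiv.symm_symm, Equiv.apply_symm_apply, id]
  rcases Bool.eq_false_or_eq_true (ε (π m)) with h | h <;> simp [h]




def T1 (n : ℕ) (u : Fin n → ℤ) (x : Fin n × Fin n) : ℕ :=
  if x.1 < x.2 ∧ Rk n (u x.2) < Rk n (u x.1) then 1 else 0

def T2 (n : ℕ) (u : Fin n → ℤ) (x : Fin n × Fin n) : ℕ :=
  if x.1 ≤ x.2 ∧ Rk n (-(u x.2)) < Rk n (u x.1) then 1 else 0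

def Fcnt (n : ℕ) (u : Fin n → ℤ) : ℕ := ∑ x : Fin n × Fin n, (T1 n u x + T2 n u x)

theorem Rk_sym {a b : ℤ} (ha : a ≠ 0 ∧ a.natAbs ≤ n) (hb : b ≠ 0 ∧ b.natAbs ≤ n) :
    (Rk n (-b) < Rk n a ↔ Rk n (-a) < Rk n b) := by
  obtain ⟨ha1, ha2⟩ := ha; obtain ⟨hb1, hb2⟩ := hb
  unfold Rk; split_ifs <;> omega

theorem Rk_inj {a b : ℤ} (ha : a ≠ 0 ∧ a.natAbs ≤ n) (hb : b ≠ 0 ∧ b.natAbs ≤ n)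
    (h : Rk n a = Rk n b) : a = b := by
  obtain ⟨ha1, ha2⟩ := ha; obtain ⟨hb1, hb2⟩ := hb
  unfold Rk at h; split_ifs at h <;> omega

theorem sum_split (p q : Fin n) (hne : p ≠ q) (f : Fin n × Fin n → ℕ) :
    ∑ x : Fin n × Fin n, f x
      = f (p, q) + (f (q, p) + ∑ x ∈ ((univ.erase (p,q)).erase (q,p)), f x) := by
  have h1 : ((q,p) : Fin n × Fin n) ∈ univ.erase (p,q) := by
    simp [Finset.mem_erase, Prod.ext_iff]
    intro h; exact absurd h.symm hne
  rw [← Finset.add_sum_erase _ f (Finset.mem_univ (p,q)), ← Finset.add_sum_erase _ f h1]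

set_option maxHeartbeats 1000000 in
theorem swap_lt (p q : Fin n) (hpq : (p : ℕ) + 1 = (q : ℕ)) (i j : Fin n)
    (h1 : ¬(i = p ∧ j = q)) (h2 : ¬(i = q ∧ j = p)) :
    ((Equiv.swap p q i < Equiv.swap p q j ↔ i < j) ∧
     (Equiv.swap p q i ≤ Equiv.swap p q j ↔ i ≤ j)) := by
  rw [Fin.ext_iff, Fin.ext_iff] at h1 h2
  rw [Equiv.swap_apply_def, Equiv.swap_apply_def]
  constructor <;>
  · split_ifs with a b c d e f g h <;>
      simp only [Fin.lt_def, Fin.le_def, Fin.ext_iff] at * <;> omega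

theorem F_swap (u : Fin n → ℤ) (hu : ∀ j, u j ≠ 0 ∧ (u j).natAbs ≤ n)
    (p q : Fin n) (hpq : (p : ℕ) + 1 = (q : ℕ)) (hne : u p ≠ u q) :
    if Rk n (u p) < Rk n (u q) then Fcnt n (u ∘ Equiv.swap p q) = Fcnt n u + 1
    else Fcnt n (u ∘ Equiv.swap p q) + 1 = Fcnt n u := by
  set τ := Equiv.swap p q with hτ
  have hpqne : p ≠ q := by intro h; rw [h] at hpq; omega
  have hplt : p < q := by rw [Fin.lt_def]; omega
  have hτp : τ p = q := Equiv.swap_apply_left p q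
  have hτq : τ q = p := Equiv.swap_apply_right p q
  have hττ : ∀ x, u (τ (τ x)) = u x := fun x => by rw [Equiv.swap_apply_self]
  have e : (Fin n × Fin n) ≃ (Fin n × Fin n) := Equiv.prodCongr τ τ
  -- sum over reindexed
  have hre : Fcnt n (u ∘ τ) =
      ∑ x : Fin n × Fin n, (T1 n (u ∘ τ) (τ x.1, τ x.2) + T2 n (u ∘ τ) (τ x.1, τ x.2)) := by
    rw [Fcnt]
    exact (Equiv.sum_comp (Equiv.prodCongr τ τ)
      (fun x => T1 n (u ∘ τ) x + T2 n (u ∘ τ) x)).symm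
  have hsplitG := sum_split p q hpqne
      (fun x => T1 n (u ∘ τ) (τ x.1, τ x.2) + T2 n (u ∘ τ) (τ x.1, τ x.2))
  have hsplitH := sum_split p q hpqne (fun x => T1 n u x + T2 n u x)
  have hrest : ∑ x ∈ ((univ.erase ((p:Fin n),q)).erase (q,p)),
        (T1 n (u ∘ τ) (τ x.1, τ x.2) + T2 n (u ∘ τ) (τ x.1, τ x.2))
      = ∑ x ∈ ((univ.erase ((p:Fin n),q)).erase (q,p)), (T1 n u x + T2 n u x) := by
    apply Finset.sum_congr rfl
    intro x hx
    simp only [Finset.mem_erase] at hx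
    have hx1 : ¬(x.1 = p ∧ x.2 = q) := by
      intro h; exact hx.2.1 (Prod.ext_iff.2 ⟨h.1, h.2⟩)
    have hx2 : ¬(x.1 = q ∧ x.2 = p) := by
      intro h; exact hx.1 (Prod.ext_iff.2 ⟨h.1, h.2⟩)
    obtain ⟨hlt, hle⟩ := swap_lt p q hpq x.1 x.2 hx1 hx2
    rw [← hτ] at hlt hle
    simp only [T1, T2, Function.comp_apply, hττ, hlt, hle]
  -- compute corner terms
  have hGa : T1 n (u ∘ τ) (τ (p,q).1, τ (p,q).2) + T2 n (u ∘ τ) (τ (p,q).1, τ (p,q).2) = 0 := by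
    show T1 n (u ∘ τ) (τ p, τ q) + T2 n (u ∘ τ) (τ p, τ q) = 0
    simp only [T1, T2, hτp, hτq]
    rw [if_neg, if_neg]
    · rintro ⟨h, -⟩; exact absurd hplt (not_lt_of_ge h)
    · rintro ⟨h, -⟩; exact absurd h (not_lt_of_ge (le_of_lt hplt))
  have hGb : T1 n (u ∘ τ) (τ (q,p).1, τ (q,p).2) + T2 n (u ∘ τ) (τ (q,p).1, τ (q,p).2)
      = (if Rk n (u p) < Rk n (u q) then 1 else 0)
        + (if Rk n (-(u q)) < Rk n (u p) then 1 else 0) := by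
    show T1 n (u ∘ τ) (τ q, τ p) + T2 n (u ∘ τ) (τ q, τ p) = _
    simp only [T1, T2, hτp, hτq, Function.comp_apply]
    have hsym : Rk n (-(u p)) < Rk n (u q) ↔ Rk n (-(u q)) < Rk n (u p) := Rk_sym (hu q) (hu p)
    simp [hplt, le_of_lt hplt, hsym]
  have hHa : T1 n u (p, q) + T2 n u (p, q)
      = (if Rk n (u q) < Rk n (u p) then 1 else 0)
        + (if Rk n (-(u q)) < Rk n (u p) then 1 else 0) := by
    simp [T1, T2, hplt, le_of_lt hplt]
  have hHb : T1 n u (q, p) + T2 n u (q, p) = 0 := by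
    simp only [T1, T2]
    rw [if_neg, if_neg]
    · rintro ⟨h, -⟩; exact absurd hplt (not_lt_of_ge h)
    · rintro ⟨h, -⟩; exact absurd h (not_lt_of_ge (le_of_lt hplt))
  have EqG : Fcnt n (u ∘ τ)
      = ((if Rk n (u p) < Rk n (u q) then 1 else 0)
        + (if Rk n (-(u q)) < Rk n (u p) then 1 else 0))
        + ∑ x ∈ ((univ.erase ((p : Fin n), q)).erase (q, p)), (T1 n u x + T2 n u x) := by
    rw [hre, hsplitG, hrest, hGa, hGb, zero_add]
  have EqH : Fcnt n u
      = ((if Rk n (u q) < Rk n (u p) then 1 else 0)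
        + (if Rk n (-(u q)) < Rk n (u p) then 1 else 0))
        + ∑ x ∈ ((univ.erase ((p : Fin n), q)).erase (q, p)), (T1 n u x + T2 n u x) := by
    have h0 : Fcnt n u = ∑ x : Fin n × Fin n, (T1 n u x + T2 n u x) := rfl
    rw [h0, hsplitH, hHa, hHb, zero_add]
  have htri : Rk n (u p) ≠ Rk n (u q) := fun h => hne (Rk_inj (hu p) (hu q) h)
  rw [EqG, EqH]
  split_ifs at * <;> omega

theorem F_neg (u : Fin n → ℤ) (hu : ∀ j, u j ≠ 0 ∧ (u j).natAbs ≤ n)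
    (m : Fin n) (hm : ∀ i, i ≤ m) :
    if 0 < u m then Fcnt n (Function.update u m (-(u m))) = Fcnt n u + 1
    else Fcnt n (Function.update u m (-(u m))) + 1 = Fcnt n u := by
  set u' := Function.update u m (-(u m)) with hu'
  have hum : u' m = -(u m) := Function.update_self m _ u
  have hune : ∀ i, i ≠ m → u' i = u i := fun i hi => Function.update_of_ne hi _ u
  have hsplitG : Fcnt n u' = (T1 n u' (m, m) + T2 n u' (m, m))
      + ∑ x ∈ univ.erase (m, m), (T1 n u' x + T2 n u' x) := by
    rw [Fcnt, ← Finset.add_sum_erase _ _ (Finset.mem_univ ((m : Fin n), m))]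
  have hsplitH : Fcnt n u = (T1 n u (m, m) + T2 n u (m, m))
      + ∑ x ∈ univ.erase (m, m), (T1 n u x + T2 n u x) := by
    rw [Fcnt, ← Finset.add_sum_erase _ _ (Finset.mem_univ ((m : Fin n), m))]
  have hrest : ∑ x ∈ univ.erase ((m : Fin n), m), (T1 n u' x + T2 n u' x)
      = ∑ x ∈ univ.erase ((m : Fin n), m), (T1 n u x + T2 n u x) := by
    apply Finset.sum_congr rfl
    intro x hx
    simp only [Finset.mem_erase] at hx
    by_cases h2 : x.2 = m
    · have h1 : x.1 ≠ m := by
        intro h1; exact hx.1 (Prod.ext_iff.2 ⟨h1, h2⟩)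
      have hlt : x.1 < m := lt_of_le_of_ne (hm x.1) h1
      simp only [T1, T2, h2, hum, hune x.1 h1, neg_neg]
      simp [hlt, le_of_lt hlt, Nat.add_comm]
    · by_cases h1 : x.1 = m
      · have hlt : ¬ (m < x.2) := fun h => h2 (le_antisymm (hm x.2) (le_of_lt h))
        have hle : ¬ ((m : Fin n) ≤ x.2) := fun h => h2 (le_antisymm (hm x.2) h)
        simp [T1, T2, h1, hlt, hle]
      · simp [T1, T2, hune x.1 h1, hune x.2 h2]
  have hd : T1 n u' (m, m) = 0 := by simp [T1]
  have hd2 : T1 n u (m, m) = 0 := by simp [T1]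
  have hT2' : T2 n u' (m, m) = if Rk n (u m) < Rk n (-(u m)) then 1 else 0 := by
    simp [T2, hum]
  have hT2 : T2 n u (m, m) = if Rk n (-(u m)) < Rk n (u m) then 1 else 0 := by
    simp [T2]
  rw [hsplitG, hsplitH, hrest, hd, hd2, hT2', hT2]
  have h1 := (hu m).1
  have h2 := (hu m).2
  have : (0 < u m ∧ Rk n (u m) < Rk n (-(u m)) ∧ ¬ Rk n (-(u m)) < Rk n (u m))
       ∨ (¬ 0 < u m ∧ ¬ Rk n (u m) < Rk n (-(u m)) ∧ Rk n (-(u m)) < Rk n (u m)) := by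
    unfold Rk; split_ifs <;> omega
  rcases this with ⟨ha, hb, hc⟩ | ⟨ha, hb, hc⟩ <;> simp [ha, hb, hc] <;> omega


def descIdx (u : Fin n → ℤ) (j : Fin n) : Prop :=
  if h : (j : ℕ) + 1 < n then Rk n (u ⟨(j : ℕ) + 1, h⟩) < Rk n (u j) else u j < 0

theorem F_sjZ (u : Fin n → ℤ) (hu : SPV n u) (j : Fin n) :
    (descIdx u j → Fcnt n (sjZ j u) + 1 = Fcnt n u)
    ∧ (¬ descIdx u j → Fcnt n (sjZ j u) = Fcnt n u + 1) := by
  by_cases h : (j : ℕ) + 1 < n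
  · set q : Fin n := ⟨(j : ℕ) + 1, h⟩ with hq
    have hpq : (j : ℕ) + 1 = (q : ℕ) := rfl
    have hne : u j ≠ u q := by
      intro hh
      have hjq : j = q := hu.2 j q (by rw [hh])
      have := congrArg Fin.val hjq
      simp [hq] at this
    have hF := F_swap u hu.1 j q hpq hne
    have hs : sjZ j u = u ∘ Equiv.swap j q := by rw [sjZ, dif_pos h]
    have hdesc : descIdx u j ↔ Rk n (u q) < Rk n (u j) := by rw [descIdx, dif_pos h]
    constructor
    · intro hd
      rw [hdesc] at hd
      rw [if_neg (lt_asymm hd)] at hF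
      rw [hs]; exact hF
    · intro hd
      rw [hdesc] at hd
      have hRne : Rk n (u j) ≠ Rk n (u q) := fun hh => hne (Rk_inj (hu.1 j) (hu.1 q) hh)
      have hlt : Rk n (u j) < Rk n (u q) := lt_of_le_of_ne (not_lt.1 hd) hRne
      rw [if_pos hlt] at hF; rw [hs]; exact hF
  · have hm : ∀ i : Fin n, i ≤ j := by
      intro i; rw [Fin.le_def]; have := i.isLt; have := j.isLt; omega
    have hF := F_neg u hu.1 j hm
    have hs : sjZ j u = Function.update u j (-(u j)) := by rw [sjZ, dif_neg h]
    have hdesc : descIdx u j ↔ u j < 0 := by rw [descIdx, dif_neg h]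
    constructor
    · intro hd; rw [hdesc] at hd
      rw [if_neg (by omega : ¬ 0 < u j)] at hF
      rw [hs]; exact hF
    · intro hd; rw [hdesc] at hd
      have h0 := (hu.1 j).1
      rw [if_pos (by omega)] at hF
      rw [hs]; exact hF

theorem F_tv : Fcnt n (tv n) = 0 := by
  rw [Fcnt]
  apply Finset.sum_eq_zero
  intro x _
  have h1 : T1 n (tv n) x = 0 := by
    rw [T1, if_neg]
    rintro ⟨hlt, hR⟩
    have hx1 := x.1.isLt; have hx2 := x.2.isLt
    rw [Fin.lt_def] at hlt
    unfold Rk tv at hR; split_ifs at hR <;> omega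
  have h2 : T2 n (tv n) x = 0 := by
    rw [T2, if_neg]
    rintro ⟨hle, hR⟩
    have hx1 := x.1.isLt; have hx2 := x.2.isLt
    unfold Rk tv at hR; split_ifs at hR <;> omega
  omega

theorem eq_tv_of_noDesc (u : Fin n → ℤ) (hu : SPV n u)
    (hnd : ∀ j, ¬ descIdx u j) : u = tv n := by
  have hadj0 : ∀ (j : Fin n) (h2 : (j : ℕ) + 1 < n),
      Rk n (u j) < Rk n (u ⟨(j : ℕ) + 1, h2⟩) := by
    intro j h2
    have hj := hnd j
    rw [descIdx, dif_pos h2] at hj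
    have hne : u j ≠ u ⟨(j : ℕ) + 1, h2⟩ := by
      intro hh
      have := hu.2 j ⟨(j : ℕ) + 1, h2⟩ (by rw [hh])
      have := congrArg Fin.val this
      simp at this
    have : Rk n (u j) ≠ Rk n (u ⟨(j : ℕ) + 1, h2⟩) :=
      fun hh => hne (Rk_inj (hu.1 _) (hu.1 _) hh)
    omega
  have hadj : ∀ (k : ℕ) (h1 : k < n) (h2 : k + 1 < n),
      Rk n (u ⟨k, h1⟩) < Rk n (u ⟨k+1, h2⟩) := by
    intro k h1 h2
    have ha := hadj0 ⟨k, h1⟩ h2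
    have he : (⟨((⟨k, h1⟩ : Fin n) : ℕ) + 1, h2⟩ : Fin n) = ⟨k+1, h2⟩ := by
      apply Fin.ext; simp
    rw [he] at ha
    exact ha
  have hlast : ∀ (k : ℕ) (h1 : k < n), k + 1 = n → 0 < u ⟨k, h1⟩ := by
    intro k h1 h2
    have hj := hnd ⟨k, h1⟩
    rw [descIdx, dif_neg (show ¬ ((⟨k,h1⟩ : Fin n) : ℕ) + 1 < n by simp; omega)] at hj
    have := (hu.1 ⟨k,h1⟩).1
    omega
  have hlow : ∀ (k : ℕ) (h1 : k < n), (k : ℤ) + 1 ≤ Rk n (u ⟨k, h1⟩) := by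
    intro k
    induction k with
    | zero =>
      intro h1
      have h0 := (hu.1 ⟨0, h1⟩).1; have hb := (hu.1 ⟨0, h1⟩).2
      unfold Rk; split_ifs <;> omega
    | succ k ih =>
      intro h1
      have hk : k < n := by omega
      have ha := hadj k hk h1
      have hb := ih hk
      push_cast at hb ⊢
      omega
  have hhigh : ∀ (d : ℕ), d < n → ∀ (h1 : n - 1 - d < n),
      Rk n (u ⟨n-1-d, h1⟩) ≤ (n : ℤ) - (d : ℤ) := by
    intro d
    induction d with
    | zero =>
      intro _ h1
      have hp := hlast (n-1-0) h1 (by omega)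
      have hb := (hu.1 ⟨n-1-0, h1⟩).2
      unfold Rk; split_ifs <;> push_cast <;> omega
    | succ d ih =>
      intro hdn h1
      have h2 : n - 1 - d < n := by omega
      have hlt := hadj (n-1-(d+1)) h1 (show n-1-(d+1)+1 < n by omega)
      have he : (⟨n-1-(d+1)+1, by omega⟩ : Fin n) = ⟨n-1-d, h2⟩ := by
        apply Fin.ext; simp; omega
      rw [he] at hlt
      have hi := ih (by omega) h2
      push_cast at hi ⊢
      omega
  funext j
  obtain ⟨k, hk⟩ := j
  have hl := hlow k hk
  have hd : n - 1 - (n - 1 - k) = k := by omega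
  have hh := hhigh (n-1-k) (by omega) (by omega)
  have he : (⟨n-1-(n-1-k), by omega⟩ : Fin n) = ⟨k, hk⟩ := by apply Fin.ext; simp; omega
  rw [he] at hh
  have hcast : ((n - 1 - k : ℕ) : ℤ) = (n : ℤ) - 1 - (k : ℤ) := by omega
  rw [hcast] at hh
  have hb := (hu.1 ⟨k, hk⟩).2
  have h0 := (hu.1 ⟨k, hk⟩).1
  show u ⟨k, hk⟩ = (k : ℤ) + 1
  unfold Rk at hl hh; split_ifs at hl <;> omega

theorem actZ_eq_id_of_uvec_tv (ε : Fin n → Bool) (π : Equiv.Perm (Fin n))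
    (h : uvec ε π = tv n) : actZ ε π = id := by
  funext α m
  have hm := congrFun h m
  rw [uvec_apply] at hm
  unfold tv at hm
  have hεm : ε m = false := by
    rcases Bool.eq_false_or_eq_true (ε m) with hh | hh
    · rw [hh] at hm
      exfalso
      simp at hm
      omega
    · exact hh
  rw [hεm] at hm
  simp at hm
  have hπ : π.symm m = m := by apply Fin.ext; omega
  simp [actZ, hεm, hπ]

theorem isWord_actZ : ∀ (N : ℕ) (ε : Fin n → Bool) (π : Equiv.Perm (Fin n)),
    Fcnt n (uvec ε π) = N → IsWord (actZ ε π) N := by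
  intro N
  induction N using Nat.strong_induction_on with
  | _ N ih =>
    intro ε π hN
    by_cases hd : ∃ j, descIdx (uvec ε π) j
    · obtain ⟨j, hj⟩ := hd
      have hF := (F_sjZ (uvec ε π) (SPV_uvec ε π) j).1 hj
      obtain ⟨ε1, π1, h1⟩ := sjZ_eq_actZ (n := n) j
      have hcomp : sjZ j ∘ actZ ε π
          = actZ (fun m => xor (ε1 m) (ε (π1.symm m))) (π1 * π) := by
        rw [h1, actZ_comp]
      have huv : uvec (fun m => xor (ε1 m) (ε (π1.symm m))) (π1 * π) = sjZ j (uvec ε π) :=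
        (congrFun hcomp (tv n)).symm
      have hN1 : Fcnt n (uvec (fun m => xor (ε1 m) (ε (π1.symm m))) (π1 * π)) = N - 1 := by
        rw [huv]; omega
      obtain ⟨L, hL1, hL2⟩ := ih (N - 1) (by omega) _ _ hN1
      refine ⟨j :: L, by simp [hL1]; omega, ?_⟩
      calc actZ ε π = (sjZ j ∘ sjZ j) ∘ actZ ε π := by rw [sjZ_invol]; rfl
        _ = sjZ j ∘ (sjZ j ∘ actZ ε π) := rfl
        _ = sjZ j ∘ actZ (fun m => xor (ε1 m) (ε (π1.symm m))) (π1 * π) := by rw [hcomp]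
        _ = (List.map (fun j => sjZ j) (j :: L)).foldr (· ∘ ·) id := by
            rw [List.map_cons, List.foldr_cons, ← hL2]
    · push_neg at hd
      have htv : uvec ε π = tv n := eq_tv_of_noDesc _ (SPV_uvec ε π) hd
      have hid := actZ_eq_id_of_uvec_tv ε π htv
      have hN0 : N = 0 := by
        rw [← hN, uvec, hid]
        show Fcnt n (tv n) = 0
        exact F_tv
      rw [hid, hN0]
      exact ⟨[], rfl, rfl⟩

theorem F_le_len : ∀ (L : List (Fin n)) (ε : Fin n → Bool) (π : Equiv.Perm (Fin n)),
    (L.map (fun j => sjZ j)).foldr (· ∘ ·) id = actZ ε π → Fcnt n (uvec ε π) ≤ L.length := by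
  intro L
  induction L with
  | nil =>
    intro ε π h
    have htv : uvec ε π = tv n := by
      rw [uvec, ← h]; rfl
    rw [htv, F_tv]
    exact Nat.zero_le _
  | cons a t ih =>
    intro ε π h
    obtain ⟨ε2, π2, h2⟩ := word_eq_actZ (n := n) t
    rw [List.map_cons, List.foldr_cons, h2] at h
    have huv : uvec ε π = sjZ a (uvec ε2 π2) := (congrFun h (tv n)).symm
    have hle := ih ε2 π2 h2
    have hF := F_sjZ (uvec ε2 π2) (SPV_uvec ε2 π2) a
    by_cases hd : descIdx (uvec ε2 π2) a
    · have := hF.1 hd; rw [huv]; simp only [List.length_cons]; omega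
    · have := hF.2 hd; rw [huv]; simp only [List.length_cons]; omega

theorem lenW_actZ (ε : Fin n → Bool) (π : Equiv.Perm (Fin n)) :
    lenW (actZ ε π) = Fcnt n (uvec ε π) := by
  have hmem : Fcnt n (uvec ε π) ∈ {r | IsWord (actZ ε π) r} := isWord_actZ _ ε π rfl
  rw [lenW]
  apply le_antisymm
  · exact Nat.sInf_le hmem
  · have hne : {r | IsWord (actZ ε π) r}.Nonempty := ⟨_, hmem⟩
    obtain ⟨L, hL1, hL2⟩ := Nat.sInf_mem hne
    have := F_le_len L ε π hL2.symm
    omega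

theorem foldr_comp_right (L : List (Fin n)) (g : (Fin n → ℤ) → (Fin n → ℤ)) :
    (L.map (fun j => sjZ j)).foldr (· ∘ ·) g
      = ((L.map (fun j => sjZ j)).foldr (· ∘ ·) id) ∘ g := by
  induction L with
  | nil => rfl
  | cons a t ih => simp only [List.map_cons, List.foldr_cons, ih]; rfl

theorem foldr_reverse_comp (L : List (Fin n)) :
    ((L.reverse.map (fun j => sjZ j)).foldr (· ∘ ·) id)
        ∘ ((L.map (fun j => sjZ j)).foldr (· ∘ ·) id) = id
    ∧ ((L.map (fun j => sjZ j)).foldr (· ∘ ·) id)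
        ∘ ((L.reverse.map (fun j => sjZ j)).foldr (· ∘ ·) id) = id := by
  induction L with
  | nil => exact ⟨rfl, rfl⟩
  | cons a t ih =>
    have hfold : ((a :: t).reverse.map (fun j => sjZ j)).foldr (· ∘ ·) id
        = ((t.reverse.map (fun j => sjZ j)).foldr (· ∘ ·) id) ∘ sjZ a := by
      rw [List.reverse_cons, List.map_append, List.foldr_append, foldr_comp_right]
      congr 1
    constructor
    · rw [hfold, List.map_cons, List.foldr_cons]
      funext β
      have h1 := congrFun (sjZ_invol (n := n) a)
        (((t.map (fun j => sjZ j)).foldr (· ∘ ·) id) β)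
      have h2 := congrFun ih.1 β
      simp only [Function.comp_apply, id] at h1 h2 ⊢
      rw [h1, h2]
    · rw [hfold, List.map_cons, List.foldr_cons]
      funext β
      have h2 := congrFun ih.2 (sjZ a β)
      simp only [Function.comp_apply, id] at h2 ⊢
      rw [h2]
      exact congrFun (sjZ_invol (n := n) a) β

theorem isWord_inv (ε : Fin n → Bool) (π : Equiv.Perm (Fin n)) (r : ℕ)
    (h : IsWord (actZ ε π) r) : IsWord (actZ (fun j => ε (π j)) π.symm) r := by
  obtain ⟨L, hL1, hL2⟩ := h
  refine ⟨L.reverse, by simpa using hL1, ?_⟩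
  have hrc := foldr_reverse_comp (n := n) L
  have key : ((L.reverse.map (fun j => sjZ j)).foldr (· ∘ ·) id)
      = actZ (fun j => ε (π j)) π.symm := by
    calc ((L.reverse.map (fun j => sjZ j)).foldr (· ∘ ·) id)
        = ((L.reverse.map (fun j => sjZ j)).foldr (· ∘ ·) id)
            ∘ (actZ ε π ∘ actZ (fun j => ε (π j)) π.symm) := by
          rw [actZ_inv_right]; rfl
      _ = (((L.reverse.map (fun j => sjZ j)).foldr (· ∘ ·) id)
            ∘ ((L.map (fun j => sjZ j)).foldr (· ∘ ·) id)) ∘ actZ (fun j => ε (π j)) π.symm := by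
          rw [hL2]; rfl
      _ = actZ (fun j => ε (π j)) π.symm := by rw [hrc.1]; rfl
  exact key.symm

theorem lenW_inv (ε : Fin n → Bool) (π : Equiv.Perm (Fin n)) :
    lenW (actZ ε π) = lenW (actZ (fun j => ε (π j)) π.symm) := by
  have hset : {r | IsWord (actZ ε π) r} = {r | IsWord (actZ (fun j => ε (π j)) π.symm) r} := by
    ext r
    constructor
    · exact isWord_inv ε π r
    · intro h
      have h2 := isWord_inv (fun j => ε (π j)) π.symm r h
      have he : (fun j => ε (π (π.symm j))) = ε := funext fun j => by
        rw [Equiv.apply_symm_apply]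
      rw [he, Equiv.symm_symm] at h2
      exact h2
  rw [lenW, lenW, hset]

theorem Rk_bound {a : ℤ} (ha : a ≠ 0 ∧ a.natAbs ≤ n) : 1 ≤ Rk n a ∧ Rk n a ≤ 2 * n := by
  obtain ⟨h1, h2⟩ := ha; unfold Rk; split_ifs <;> omega

/-- adjacent strict increase implies strict monotonicity, for `Fin n → ℤ` -/
theorem adj_strictMono {f : Fin n → ℤ}
    (h : ∀ p q : Fin n, (p : ℕ) + 1 = (q : ℕ) → f p < f q) :
    ∀ i j : Fin n, i < j → f i < f j := by
  have key : ∀ (d : ℕ) (i j : Fin n), (j : ℕ) = (i : ℕ) + d + 1 → f i < f j := by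
    intro d
    induction d with
    | zero => intro i j hij; exact h i j (by omega)
    | succ d ih =>
      intro i j hij
      have hmid : (i : ℕ) + d + 1 < n := by have := j.isLt; omega
      have h1 := ih i ⟨(i : ℕ) + d + 1, hmid⟩ (by simp)
      have h2 := h ⟨(i : ℕ) + d + 1, hmid⟩ j (by simp; omega)
      omega
  intro i j hij
  rw [Fin.lt_def] at hij
  exact key ((j : ℕ) - (i : ℕ) - 1) i j (by omega)

/-- a strictly monotone permutation of `Fin n` is the identity -/
theorem perm_strictMono_id (τ : Equiv.Perm (Fin n))
    (h : ∀ i j : Fin n, i < j → τ i < τ j) : ∀ x, τ x = x := by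
  have hsymm : ∀ i j : Fin n, i < j → τ.symm i < τ.symm j := by
    intro i j hij
    rcases lt_trichotomy (τ.symm i) (τ.symm j) with hh | hh | hh
    · exact hh
    · exfalso; have := congrArg τ hh; simp at this; subst this; exact lt_irrefl _ hij
    · exfalso
      have := h _ _ hh
      simp at this
      exact lt_irrefl _ (lt_trans hij this)
  have hle : ∀ (σ : Equiv.Perm (Fin n)), (∀ i j : Fin n, i < j → σ i < σ j) →
      ∀ (k : ℕ) (hk : k < n), k ≤ (σ ⟨k, hk⟩ : ℕ) := by
    intro σ hσ k
    induction k with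
    | zero => intro hk; exact Nat.zero_le _
    | succ k ih =>
      intro hk
      have hk' : k < n := by omega
      have h1 := ih hk'
      have h2 := hσ ⟨k, hk'⟩ ⟨k+1, hk⟩ (by rw [Fin.lt_def]; simp)
      rw [Fin.lt_def] at h2
      omega
  intro x
  obtain ⟨k, hk⟩ := x
  have h1 := hle τ h k hk
  have h2 := hle τ.symm hsymm (τ ⟨k, hk⟩ : ℕ) (τ ⟨k, hk⟩).isLt
  have h3 : τ.symm ⟨(τ ⟨k, hk⟩ : ℕ), (τ ⟨k, hk⟩).isLt⟩ = ⟨k, hk⟩ := by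
    have : (⟨(τ ⟨k, hk⟩ : ℕ), (τ ⟨k, hk⟩).isLt⟩ : Fin n) = τ ⟨k, hk⟩ := by apply Fin.ext; rfl
    rw [this]; simp
  rw [h3] at h2
  apply Fin.ext
  simp at h2 ⊢
  omega

section Sahi

variable (α : Fin n → ℤ) (π : Equiv.Perm (Fin n))

theorem abs_anti (hπ : SahiPerm α π) :
    ∀ a b : Fin n, a < b → (α (π b)).natAbs ≤ (α (π a)).natAbs := by
  intro a b hab
  rcases lt_trichotomy (π a) (π b) with h | h | h
  · have hiff := hπ (π a) (π b) h
    simp only [Equiv.symm_apply_apply] at hiff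
    have hcond := hiff.mp hab
    rcases hcond with hlt | ⟨hpos, heq⟩
    · omega
    · rcases heq with he | he <;> rw [he] <;> simp [Int.natAbs_neg]
  · exfalso
    have := π.injective h
    subst this
    exact lt_irrefl _ hab
  · have hiff := hπ (π b) (π a) h
    simp only [Equiv.symm_apply_apply] at hiff
    by_contra hcon
    have : b < a := hiff.mpr (Or.inl (by omega))
    exact lt_irrefl _ (lt_trans hab this)

theorem lam_eq (hπ : SahiPerm α π) (lam : Fin n → ℤ) (hlamP : IsPartition lam)
    (hlamO : ∃ (ε : Fin n → Bool) (σ : Equiv.Perm (Fin n)), actZ ε σ α = lam) :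
    ∀ j, lam j = ((α (π j)).natAbs : ℤ) := by
  obtain ⟨ε, σ, hσ⟩ := hlamO
  set f : Fin n → ℤ := fun j => -(((α (π j)).natAbs : ℤ)) with hf
  have hmono : Monotone f := by
    apply monotone_iff_forall_lt.mpr
    intro a b hab
    have := abs_anti α π hπ a b hab
    simp only [hf, neg_le_neg_iff]
    exact_mod_cast this
  set τ : Equiv.Perm (Fin n) := σ.symm.trans π.symm with hτ
  have hcomp : ∀ j, lam j = -(f (τ j)) := by
    intro j
    have hj := congrFun hσ j
    rw [actZ] at hj
    have hpos := hlamP.2 j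
    have hτj : π (τ j) = σ.symm j := by simp [hτ]
    simp only [hf, hτj, neg_neg]
    rcases Bool.eq_false_or_eq_true (ε j) with hb | hb <;> rw [hb] at hj <;> simp at hj <;> omega
  have hmono2 : Monotone (f ∘ τ) := by
    apply monotone_iff_forall_lt.mpr
    intro a b hab
    have h1 := hcomp a
    have h2 := hcomp b
    have h3 := hlamP.1 a b (le_of_lt hab)
    simp only [Function.comp_apply]
    omega
  have e1 : f ∘ τ = f ∘ Tuple.sort f := Tuple.comp_sort_eq_comp_iff_monotone.mpr hmono2
  have e2 : f ∘ (Equiv.refl (Fin n)) = f ∘ Tuple.sort f := by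
    apply Tuple.comp_sort_eq_comp_iff_monotone.mpr
    simpa using hmono
  have e3 : f ∘ τ = f := by
    rw [e1, ← e2]
    rfl
  intro j
  have := congrFun e3 j
  simp only [Function.comp_apply] at this
  have h1 := hcomp j
  simp only [hf] at this h1 ⊢
  omega

/-- the target element's window vector -/
theorem target_uvec (j : Fin n) :
    uvec (fun k => decide (α (π k) < 0)) π.symm j
      = (if α (π j) < 0 then -1 else 1) * ((π j : ℕ) + 1 : ℤ) := by
  rw [uvec_apply]
  simp [Equiv.symm_symm, decide_eq_true_eq]

theorem target_nd1 (hπ : SahiPerm α π) (lam : Fin n → ℤ)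
    (hlam : ∀ j, lam j = ((α (π j)).natAbs : ℤ)) :
    ∀ p q : Fin n, (p : ℕ) + 1 = (q : ℕ) → lam p = lam q →
      Rk n (uvec (fun k => decide (α (π k) < 0)) π.symm p)
        < Rk n (uvec (fun k => decide (α (π k) < 0)) π.symm q) := by
  intro p q hpq hleq
  have hplt : p < q := by rw [Fin.lt_def]; omega
  have hup := target_uvec α π p
  have huq := target_uvec α π q
  have habs : (α (π p)).natAbs = (α (π q)).natAbs := by
    have h1 := hlam p
    have h2 := hlam q
    omega
  have ha := (π p).isLt
  have hb := (π q).isLt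
  rcases lt_trichotomy (π p) (π q) with h | h | h
  · have hiff := hπ (π p) (π q) h
    simp only [Equiv.symm_apply_apply] at hiff
    have hcond := hiff.mp hplt
    have hpos : 0 ≤ α (π p) := by
      rcases hcond with hlt | ⟨hp, _⟩
      · omega
      · exact hp
    rw [Fin.lt_def] at h
    rw [hup, huq, if_neg (by omega)]
    by_cases hq : α (π q) < 0
    · rw [if_pos hq]; unfold Rk; split_ifs <;> omega
    · rw [if_neg hq]; unfold Rk; split_ifs <;> omega
  · exfalso
    have := π.injective h
    subst this
    exact lt_irrefl _ hplt
  · have hiff := hπ (π q) (π p) h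
    simp only [Equiv.symm_apply_apply] at hiff
    have hnot : ¬ (q < p) := by rw [Fin.lt_def]; omega
    have hcond := fun hc => hnot (hiff.mpr hc)
    have hq : α (π q) < 0 := by
      by_contra hcon
      push_neg at hcon
      apply hcond
      right
      refine ⟨hcon, ?_⟩
      omega
    rw [Fin.lt_def] at h
    rw [hup, huq, if_pos hq]
    by_cases hp : α (π p) < 0
    · rw [if_pos hp]; unfold Rk; split_ifs <;> omega
    · rw [if_neg hp]; unfold Rk; split_ifs <;> omega

theorem target_nd2 (lam : Fin n → ℤ)
    (hlam : ∀ j, lam j = ((α (π j)).natAbs : ℤ)) :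
    ∀ m : Fin n, lam m = 0 → 0 < uvec (fun k => decide (α (π k) < 0)) π.symm m := by
  intro m h0
  have h1 := hlam m
  have h2 : α (π m) = 0 := by omega
  rw [target_uvec, h2, if_neg (by omega)]
  have := (π m).isLt
  omega

end Sahi

section Heart

variable (α : Fin n → ℤ) (π : Equiv.Perm (Fin n))

theorem heart (hπ : SahiPerm α π) (lam : Fin n → ℤ) (hlamP : IsPartition lam)
    (hlam : ∀ j, lam j = ((α (π j)).natAbs : ℤ))
    (ε' : Fin n → Bool) (π' : Equiv.Perm (Fin n)) (hact : actZ ε' π' α = lam)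
    (hnd1 : ∀ p q : Fin n, (p : ℕ) + 1 = (q : ℕ) → lam p = lam q →
      Rk n (uvec ε' π' p) < Rk n (uvec ε' π' q))
    (hnd2 : ∀ m : Fin n, (m : ℕ) + 1 = n → lam m = 0 → 0 < uvec ε' π' m) :
    actZ ε' π' = actZ (fun k => decide (α (π k) < 0)) π.symm := by
  have hc : ∀ j, (if ε' j then (-1 : ℤ) else 1) * α (π'.symm j) = lam j :=
    fun j => congrFun hact j
  have habs : ∀ j, ((α (π'.symm j)).natAbs : ℤ) = lam j := by
    intro j
    have h1 := hc j
    have h2 := hlamP.2 j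
    rcases Bool.eq_false_or_eq_true (ε' j) with hb | hb <;> rw [hb] at h1 <;>
      simp at h1 <;> omega
  -- Step A: on zero positions the sign is +
  have hzero : ∀ (d : ℕ) (j : Fin n), (j : ℕ) + d + 1 = n → lam j = 0 → 0 < uvec ε' π' j := by
    intro d
    induction d with
    | zero => intro j hj h0; exact hnd2 j (by omega) h0
    | succ d ih =>
      intro j hj h0
      have hq : (j : ℕ) + 1 < n := by omega
      set q : Fin n := ⟨(j : ℕ) + 1, hq⟩ with hqdef
      have hlamq : lam q = 0 := by
        have h1 := hlamP.1 j q (by rw [Fin.le_def]; simp [hqdef])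
        have h2 := hlamP.2 q
        omega
      have hq0 := ih q (by simp [hqdef]; omega) hlamq
      have hRk := hnd1 j q rfl (by omega)
      have hbq := (SPV_uvec ε' π').1 q
      have hbj := (SPV_uvec ε' π').1 j
      unfold Rk at hRk
      split_ifs at hRk <;> omega
  have hzero' : ∀ j : Fin n, lam j = 0 → 0 < uvec ε' π' j := by
    intro j h0
    exact hzero (n - (j : ℕ) - 1) j (by have := j.isLt; omega) h0
  -- signs are determined
  have hsign : ∀ j, ε' j = decide (α (π'.symm j) < 0) := by
    intro j
    by_cases h0 : lam j = 0
    · have hα : α (π'.symm j) = 0 := by have := habs j; omega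
      have hpos := hzero' j h0
      rw [uvec_apply] at hpos
      have hb1 : (0 : ℤ) ≤ ((π'.symm j : ℕ) : ℤ) := Int.natCast_nonneg _
      have hεf : ε' j = false := by
        by_contra hbc
        have hb : ε' j = true := by revert hbc; cases (ε' j) <;> simp
        rw [hb] at hpos
        simp at hpos
        omega
      rw [hεf, hα]
      simp
    · have h1 := hc j
      have h2 := hlamP.2 j
      rcases Bool.eq_false_or_eq_true (ε' j) with hb | hb <;> rw [hb] <;> rw [hb] at h1 <;>
        simp at h1 ⊢ <;> omega
  -- key sequences
  set Φ : Fin n → ℤ := fun k =>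
    (2 * n + 2) * (-(((α k).natAbs : ℤ))) + Rk n ((if α k < 0 then -1 else 1) * ((k : ℕ) + 1))
    with hΦ
  have hval' : ∀ j, uvec ε' π' j
      = (if α (π'.symm j) < 0 then -1 else 1) * ((π'.symm j : ℕ) + 1 : ℤ) := by
    intro j
    rw [uvec_apply, hsign j]
    simp [decide_eq_true_eq]
  have hkey' : ∀ j, (2 * n + 2) * (-(lam j)) + Rk n (uvec ε' π' j) = Φ (π'.symm j) := by
    intro j
    simp only [hΦ]
    rw [hval' j, ← habs j]
  have hkey : ∀ j, (2 * n + 2) * (-(lam j)) + Rk n (uvec (fun k => decide (α (π k) < 0)) π.symm j)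
      = Φ (π j) := by
    intro j
    simp only [hΦ]
    rw [target_uvec, hlam j]
  -- strict monotonicity of both key sequences
  have hBnd : ∀ (ε0 : Fin n → Bool) (π0 : Equiv.Perm (Fin n)) (j : Fin n),
      1 ≤ Rk n (uvec ε0 π0 j) ∧ Rk n (uvec ε0 π0 j) ≤ 2 * n :=
    fun ε0 π0 j => Rk_bound ((SPV_uvec ε0 π0).1 j)
  have hmono' : ∀ i j : Fin n, i < j →
      (2 * n + 2) * (-(lam i)) + Rk n (uvec ε' π' i)
        < (2 * n + 2) * (-(lam j)) + Rk n (uvec ε' π' j) := by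
    apply adj_strictMono
    intro p q hpq
    have hlampq := hlamP.1 p q (by rw [Fin.le_def]; omega)
    have hb1 := hBnd ε' π' p
    have hb2 := hBnd ε' π' q
    by_cases he : lam p = lam q
    · have h6 := hnd1 p q hpq he
      rw [he]
      linarith
    · have hd : lam q + 1 ≤ lam p := by omega
      have h5 : (2 * (n : ℤ) + 2) * (-(lam p)) + (2 * (n : ℤ) + 2)
          ≤ (2 * (n : ℤ) + 2) * (-(lam q)) := by nlinarith [Int.natCast_nonneg n]
      omega
  have hmono : ∀ i j : Fin n, i < j →
      (2 * n + 2) * (-(lam i)) + Rk n (uvec (fun k => decide (α (π k) < 0)) π.symm i)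
        < (2 * n + 2) * (-(lam j)) + Rk n (uvec (fun k => decide (α (π k) < 0)) π.symm j) := by
    apply adj_strictMono
    intro p q hpq
    have hlampq := hlamP.1 p q (by rw [Fin.le_def]; omega)
    have hb1 := hBnd (fun k => decide (α (π k) < 0)) π.symm p
    have hb2 := hBnd (fun k => decide (α (π k) < 0)) π.symm q
    by_cases he : lam p = lam q
    · have h6 := target_nd1 α π hπ lam hlam p q hpq he
      rw [he]
      linarith
    · have hd : lam q + 1 ≤ lam p := by omega
      have h5 : (2 * (n : ℤ) + 2) * (-(lam p)) + (2 * (n : ℤ) + 2)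
          ≤ (2 * (n : ℤ) + 2) * (-(lam q)) := by nlinarith [Int.natCast_nonneg n]
      omega
  -- the comparison permutation
  set τ : Equiv.Perm (Fin n) := π'.symm.trans π.symm with hτ
  have hτval : ∀ j, π (τ j) = π'.symm j := by intro j; simp [hτ]
  have hτmono : ∀ i j : Fin n, i < j → τ i < τ j := by
    intro i j hij
    have h1 : Φ (π (τ i)) < Φ (π (τ j)) := by
      rw [hτval, hτval, ← hkey' i, ← hkey' j]
      exact hmono' i j hij
    rcases lt_trichotomy (τ i) (τ j) with hh | hh | hh
    · exact hh
    · exfalso; rw [hh] at h1; exact lt_irrefl _ h1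
    · exfalso
      have h2 : Φ (π (τ j)) < Φ (π (τ i)) := by
        rw [← hkey (τ j), ← hkey (τ i)]
        exact hmono (τ j) (τ i) hh
      omega
  have hτid := perm_strictMono_id τ hτmono
  have hρ : ∀ j, π'.symm j = π j := by
    intro j
    rw [← hτval j, hτid j]
  funext β j
  have h2 : ε' j = decide (α (π j) < 0) := by rw [hsign j, hρ j]
  show (if ε' j then (-1 : ℤ) else 1) * β (π'.symm j)
      = (if decide (α (π j) < 0) then (-1 : ℤ) else 1) * β (π.symm.symm j)
  rw [h2, hρ j, Equiv.symm_symm]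

end Heart

section Minimal

variable (α : Fin n → ℤ) (π : Equiv.Perm (Fin n))

theorem stab_swap (lam : Fin n → ℤ) (p : Fin n) (h : (p : ℕ) + 1 < n)
    (he : lam p = lam ⟨(p : ℕ) + 1, h⟩) : sjZ p lam = lam := by
  rw [sjZ, dif_pos h]
  funext m
  simp only [Function.comp_apply, Equiv.swap_apply_def]
  split_ifs with h1 h2
  · rw [h1, he]
  · rw [h2, he]
  · rfl

theorem stab_last (lam : Fin n → ℤ) (m : Fin n) (h : ¬ ((m : ℕ) + 1 < n))
    (h0 : lam m = 0) : sjZ m lam = lam := by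
  rw [sjZ, dif_neg h]
  funext k
  rw [Function.update_apply]
  split_ifs with h1
  · rw [h1, h0]; ring
  · rfl

theorem lemmaM (hπ : SahiPerm α π) (lam : Fin n → ℤ) (hlamP : IsPartition lam)
    (hlam : ∀ j, lam j = ((α (π j)).natAbs : ℤ)) :
    ∀ (N : ℕ) (ε' : Fin n → Bool) (π' : Equiv.Perm (Fin n)),
      Fcnt n (uvec ε' π') = N → actZ ε' π' α = lam →
      Fcnt n (uvec (fun k => decide (α (π k) < 0)) π.symm) ≤ N ∧
      (actZ ε' π' ≠ actZ (fun k => decide (α (π k) < 0)) π.symm →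
        Fcnt n (uvec (fun k => decide (α (π k) < 0)) π.symm) < N) := by
  intro N
  induction N using Nat.strong_induction_on with
  | _ N ih =>
    intro ε' π' hN hact
    by_cases hex : ∃ j, descIdx (uvec ε' π') j ∧ sjZ j lam = lam
    · obtain ⟨j, hdj, hstab⟩ := hex
      have hF := (F_sjZ (uvec ε' π') (SPV_uvec ε' π') j).1 hdj
      obtain ⟨ε1, π1, h1⟩ := sjZ_eq_actZ (n := n) j
      have hcomp : sjZ j ∘ actZ ε' π'
          = actZ (fun m => xor (ε1 m) (ε' (π1.symm m))) (π1 * π') := by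
        rw [h1, actZ_comp]
      have huv : uvec (fun m => xor (ε1 m) (ε' (π1.symm m))) (π1 * π') = sjZ j (uvec ε' π') :=
        (congrFun hcomp (tv n)).symm
      have hN1 : Fcnt n (uvec (fun m => xor (ε1 m) (ε' (π1.symm m))) (π1 * π')) = N - 1 := by
        rw [huv]; omega
      have hact1 : actZ (fun m => xor (ε1 m) (ε' (π1.symm m))) (π1 * π') α = lam := by
        have := congrFun hcomp α
        rw [Function.comp_apply, hact, hstab] at this
        exact this.symm
      have hih := ih (N - 1) (by omega) _ _ hN1 hact1
      constructor
      · omega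
      · intro _; omega
    · -- no stabilizing descent: the element is the canonical one
      have hnd1 : ∀ p q : Fin n, (p : ℕ) + 1 = (q : ℕ) → lam p = lam q →
          Rk n (uvec ε' π' p) < Rk n (uvec ε' π' q) := by
        intro p q hpq he
        have hplt : (p : ℕ) + 1 < n := by have := q.isLt; omega
        have hqe : (⟨(p : ℕ) + 1, hplt⟩ : Fin n) = q := by apply Fin.ext; simp; omega
        have hstab : sjZ p lam = lam := stab_swap lam p hplt (by rw [hqe]; exact he)
        have hnd : ¬ descIdx (uvec ε' π') p := fun hd => hex ⟨p, hd, hstab⟩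
        rw [descIdx, dif_pos hplt, hqe] at hnd
        have hne : uvec ε' π' p ≠ uvec ε' π' q := by
          intro hh
          have := (SPV_uvec ε' π').2 p q (by rw [hh])
          rw [this] at hpq
          omega
        have : Rk n (uvec ε' π' p) ≠ Rk n (uvec ε' π' q) :=
          fun hh => hne (Rk_inj ((SPV_uvec ε' π').1 p) ((SPV_uvec ε' π').1 q) hh)
        omega
      have hnd2 : ∀ m : Fin n, (m : ℕ) + 1 = n → lam m = 0 → 0 < uvec ε' π' m := by
        intro m hm h0
        have hstab : sjZ m lam = lam := stab_last lam m (by omega) h0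
        have hnd : ¬ descIdx (uvec ε' π') m := fun hd => hex ⟨m, hd, hstab⟩
        rw [descIdx, dif_neg (by omega)] at hnd
        have := ((SPV_uvec ε' π').1 m).1
        omega
      have heq := heart α π hπ lam hlamP hlam ε' π' hact hnd1 hnd2
      have huveq : uvec (fun k => decide (α (π k) < 0)) π.symm = uvec ε' π' := by
        rw [uvec, uvec, heq]
      constructor
      · rw [huveq]; omega
      · intro hne; exact absurd heq hne

end Minimal

end SahiAux

open SahiAux in
/-- `w_α = σ_α π_α` is the unique element of minimal length in `Wₙ` with
`w_α⁻¹ α = α⁺`, i.e. with `w_α(α⁺) = α`, where `α⁺` is the unique partition in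
the `Wₙ`-orbit of `α`, `σ_α = (sgn α₁, …, sgn αₙ)` and `π_α` is the Sahi
permutation of `α`. -/
theorem stmt2 {n : ℕ} (α : Fin n → ℤ) (π : Equiv.Perm (Fin n)) (hπ : SahiPerm α π)
    (lam : Fin n → ℤ) (hlamP : IsPartition lam)
    (hlamO : ∃ (ε : Fin n → Bool) (σ : Equiv.Perm (Fin n)), actZ ε σ α = lam) :
    actZ (fun j => decide (α j < 0)) π lam = α ∧
    (∃ r, IsWord (actZ (fun j => decide (α j < 0)) π) r) ∧
    ∀ w' : (Fin n → ℤ) → (Fin n → ℤ), (∃ r, IsWord w' r) → w' lam = α →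
      w' ≠ actZ (fun j => decide (α j < 0)) π →
      lenW (actZ (fun j => decide (α j < 0)) π) < lenW w' := by
  have hlam : ∀ j, lam j = ((α (π j)).natAbs : ℤ) := lam_eq α π hπ lam hlamP hlamO
  refine ⟨?_, ?_, ?_⟩
  · funext j
    show (if decide (α j < 0) = true then (-1 : ℤ) else 1) * lam (π.symm j) = α j
    have h1 := hlam (π.symm j)
    rw [Equiv.apply_symm_apply] at h1
    rw [h1]
    by_cases h : α j < 0
    · rw [if_pos (decide_eq_true h)]
      omega
    · rw [if_neg (by simpa using h)]
      omega
  · exact ⟨_, isWord_actZ _ _ _ rfl⟩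
  · intro w' hw' hw'lam hneq
    obtain ⟨r, L, hL1, hL2⟩ := hw'
    obtain ⟨ε2, π2, h2⟩ := word_eq_actZ (n := n) L
    have hw'eq : w' = actZ ε2 π2 := hL2.trans h2
    have hlen1 : lenW (actZ (fun j => decide (α j < 0)) π)
        = Fcnt n (uvec (fun k => decide (α (π k) < 0)) π.symm) := by
      rw [lenW_inv]
      exact lenW_actZ _ _
    have hlen2 : lenW w' = Fcnt n (uvec (fun j => ε2 (π2 j)) π2.symm) := by
      rw [hw'eq, lenW_inv]
      exact lenW_actZ _ _
    have hv'α : actZ (fun j => ε2 (π2 j)) π2.symm α = lam := by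
      have hα : α = actZ ε2 π2 lam := by rw [← hw'eq, hw'lam]
      rw [hα]
      exact congrFun (actZ_inv_left ε2 π2) lam
    have hM := lemmaM α π hπ lam hlamP hlam
      (Fcnt n (uvec (fun j => ε2 (π2 j)) π2.symm)) (fun j => ε2 (π2 j)) π2.symm rfl hv'α
    have hne2 : actZ (fun j => ε2 (π2 j)) π2.symm
        ≠ actZ (fun k => decide (α (π k) < 0)) π.symm := by
      intro hcon
      apply hneq
      have e3 : actZ (fun k => decide (α (π k) < 0)) π.symm
          ∘ actZ (fun j => decide (α j < 0)) π = id :=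
        actZ_inv_left (fun j => decide (α j < 0)) π
      calc w' = actZ ε2 π2 := hw'eq
        _ = actZ ε2 π2 ∘ (actZ (fun k => decide (α (π k) < 0)) π.symm
              ∘ actZ (fun j => decide (α j < 0)) π) := by rw [e3]; rfl
        _ = (actZ ε2 π2 ∘ actZ (fun j => ε2 (π2 j)) π2.symm)
              ∘ actZ (fun j => decide (α j < 0)) π := by rw [hcon]; rfl
        _ = actZ (fun j => decide (α j < 0)) π := by rw [actZ_inv_right]; rfl
    have hlt := hM.2 hne2
    rw [hlen1, hlen2]
    exact hlt
end
end

section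
/- Let $n > 1$ and $a \in \mathbb{C} \setminus \{0\}$. For every $W_{n-1}$-invariant Laurent polynomial $f$ in $n-1$ variables of degree $d$, there exists a $W_n$-invariant Laurent polynomial $g$ in $n$ variables of degree $d$ such that $g(x_1,\ldots,x_{n-1},a) = f(x_1,\ldots,x_{n-1})$. -/
noncomputable section

/-- The weight `|α| = |α₁| + ⋯ + |αₙ|`. -/
def wtZ {n : ℕ} (α : Fin n → ℤ) : ℕ := ∑ i, (α i).natAbs

/-- A Laurent polynomial (coefficient function) is `Wₙ`-invariant iff its
coefficients are constant on `Wₙ`-orbits of exponents. -/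
def WInv {n : ℕ} (c : (Fin n → ℤ) →₀ ℂ) : Prop :=
  ∀ (ε : Fin n → Bool) (π : Equiv.Perm (Fin n)) (α : Fin n → ℤ), c (actZ ε π α) = c α

/-- Evaluation of the Laurent polynomial `∑_α c_α x^α`. -/
def evalL {n : ℕ} (c : (Fin n → ℤ) →₀ ℂ) (x : Fin n → ℂ) : ℂ :=
  c.sum fun α a => a * ∏ i, x i ^ α i

-- sign unit facts
lemma sgn_ne_zero (b : Bool) : ((if b then -1 else 1 : ℤ)) ≠ 0 := by cases b <;> norm_num

lemma sgn_mul_self (b : Bool) : ((if b then -1 else 1 : ℤ)) * (if b then -1 else 1) = 1 := by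
  cases b <;> norm_num

lemma actZ_eq_zero_iff {n : ℕ} (ε : Fin n → Bool) (π : Equiv.Perm (Fin n)) (α : Fin n → ℤ)
    (j : Fin n) : actZ ε π α j = 0 ↔ α (π.symm j) = 0 := by
  unfold actZ
  constructor
  · intro h
    rcases mul_eq_zero.mp h with h | h
    · exact absurd h (sgn_ne_zero _)
    · exact h
  · intro h; rw [h, mul_zero]

lemma actZ_left_inv {n : ℕ} (ε : Fin n → Bool) (π : Equiv.Perm (Fin n)) (α : Fin n → ℤ) :
    actZ (ε ∘ π) π⁻¹ (actZ ε π α) = α := by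
  funext j
  unfold actZ
  simp only [Equiv.Perm.inv_def, Equiv.symm_symm, Function.comp_apply, Equiv.symm_apply_apply]
  rw [← mul_assoc, sgn_mul_self, one_mul]

lemma actZ_right_inv {n : ℕ} (ε : Fin n → Bool) (π : Equiv.Perm (Fin n)) (γ : Fin n → ℤ) :
    actZ ε π (actZ (ε ∘ π) π⁻¹ γ) = γ := by
  funext j
  unfold actZ
  simp only [Equiv.Perm.inv_def, Equiv.symm_symm, Function.comp_apply, Equiv.apply_symm_apply]
  rw [← mul_assoc, sgn_mul_self, one_mul]

-- invariance in convenient form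
lemma WInv.eval_comp {n : ℕ} {f : (Fin n → ℤ) →₀ ℂ} (hf : WInv f) (α : Fin n → ℤ)
    (s : Fin n → Bool) (σ : Equiv.Perm (Fin n)) :
    f (fun k => (if s k then -1 else 1) * α (σ k)) = f α := by
  have := hf s σ⁻¹ α
  unfold actZ at this
  simpa only [actZ, Equiv.Perm.inv_def, Equiv.symm_symm] using this

lemma exists_perm_comp {n m : ℕ} (u v : Fin n → Fin m) (hu : Function.Injective u)
    (hv : Function.Injective v) (h : Set.range u = Set.range v) :
    ∃ σ : Equiv.Perm (Fin n), u = v ∘ σ := by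
  refine ⟨(Equiv.ofInjective u hu).trans ((Equiv.setCongr h).trans (Equiv.ofInjective v hv).symm), ?_⟩
  funext k
  simp only [Function.comp_apply, Equiv.trans_apply]
  rw [Equiv.apply_ofInjective_symm hv]
  rfl

-- general: composing with any injection having the same range as succAbove j₀, with signs
lemma comp_range_eq {f : (Fin n → ℤ) →₀ ℂ} (hf : WInv f) (β : Fin (n+1) → ℤ)
    (s : Fin n → Bool) (u : Fin n → Fin (n+1)) (hu : Function.Injective u)
    (j₀ : Fin (n+1)) (hr : Set.range u = Set.range j₀.succAbove) :
    f (fun k => (if s k then -1 else 1) * β (u k)) = f (β ∘ j₀.succAbove) := by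
  obtain ⟨σ, hσ⟩ := exists_perm_comp u j₀.succAbove hu Fin.succAbove_right_injective hr
  have : (fun k => (if s k then -1 else 1) * β (u k))
      = fun k => (if s k then -1 else 1) * (β ∘ j₀.succAbove) (σ k) := by
    funext k; rw [hσ]; rfl
  rw [this, hf.eval_comp]

-- independence of the choice of removed zero
lemma remove_zero_indep {f : (Fin n → ℤ) →₀ ℂ} (hf : WInv f) (β : Fin (n+1) → ℤ)
    {j j' : Fin (n+1)} (hj : β j = 0) (hj' : β j' = 0) :
    f (β ∘ j.succAbove) = f (β ∘ j'.succAbove) := by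
  have hswap : β ∘ (Equiv.swap j j') = β := by
    funext i
    rcases eq_or_ne i j with rfl | h1
    · simp [Equiv.swap_apply_left, hj, hj']
    rcases eq_or_ne i j' with rfl | h2
    · simp [Equiv.swap_apply_right, hj, hj']
    · simp [Equiv.swap_apply_of_ne_of_ne h1 h2]
  have hu : Function.Injective ((Equiv.swap j j') ∘ j.succAbove) :=
    (Equiv.injective _).comp Fin.succAbove_right_injective
  have hrange : Set.range ((Equiv.swap j j') ∘ j.succAbove) = Set.range j'.succAbove := by
    ext x
    simp only [Set.range_comp, Fin.range_succAbove, Set.mem_image, Set.mem_compl_iff,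
      Set.mem_singleton_iff]
    constructor
    · rintro ⟨y, hy, rfl⟩
      intro hx
      apply hy
      have : y = Equiv.swap j j' j' := by
        apply (Equiv.swap j j').injective
        rw [hx]; simp
      simpa using this
    · intro hx
      refine ⟨Equiv.swap j j' x, ?_, by simp⟩
      intro h
      apply hx
      have h2 := congrArg (Equiv.swap j j') h
      simpa using h2
  have key := comp_range_eq hf β (fun _ => false) _ hu j' hrange
  simp only [Bool.false_eq_true, if_false, one_mul] at key
  calc f (β ∘ j.succAbove) = f (fun k => β ((Equiv.swap j j') (j.succAbove k))) := by
        congr 1; funext k; exact (congrFun hswap _).symm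
    _ = f (β ∘ j'.succAbove) := key


open Function Fin

variable {n : ℕ}

/-- value obtained by removing a zero entry -/
def remVal (f : (Fin n → ℤ) →₀ ℂ) (β : Fin (n+1) → ℤ) : ℂ :=
  if h : ∃ j, β j = 0 then f (β ∘ (Fin.succAbove (Classical.choose h))) else 0

lemma remVal_eq {f : (Fin n → ℤ) →₀ ℂ} (hf : WInv f) (β : Fin (n+1) → ℤ)
    (j : Fin (n+1)) (hj : β j = 0) : remVal f β = f (β ∘ j.succAbove) := by
  have h : ∃ j, β j = 0 := ⟨j, hj⟩
  rw [remVal, dif_pos h]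
  exact remove_zero_indep hf β (Classical.choose_spec h) hj

lemma remVal_of_no_zero {f : (Fin n → ℤ) →₀ ℂ} (β : Fin (n+1) → ℤ)
    (h : ¬ ∃ j, β j = 0) : remVal f β = 0 := dif_neg h

/-- recover β from a zero position and the removal -/
lemma eq_insertNth {β : Fin (n+1) → ℤ} {j : Fin (n+1)} (hj : β j = 0) :
    β = Fin.insertNth j 0 (β ∘ j.succAbove) := by
  funext i
  rcases eq_or_ne i j with rfl | h
  · rw [Fin.insertNth_apply_same, hj]
  · obtain ⟨k, rfl⟩ := Fin.exists_succAbove_eq h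
    rw [Fin.insertNth_apply_succAbove]; rfl

def liftF (f : (Fin n → ℤ) →₀ ℂ) : (Fin (n+1) → ℤ) →₀ ℂ :=
  Finsupp.onFinset
    ((Finset.univ ×ˢ f.support).image fun p : Fin (n+1) × (Fin n → ℤ) =>
      Fin.insertNth p.1 0 p.2)
    (remVal f)
    (by
      intro β hb
      rw [remVal] at hb
      split at hb
      case isTrue h =>
        set j := Classical.choose h with hjdef
        have hj : β j = 0 := Classical.choose_spec h
        simp only [Finset.mem_image, Finset.mem_product, Finset.mem_univ, true_and,
          Prod.exists]
        exact ⟨j, β ∘ j.succAbove, by simpa using Finsupp.mem_support_iff.mpr hb,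
          (eq_insertNth hj).symm⟩
      case isFalse => exact absurd rfl hb)

lemma liftF_apply (f : (Fin n → ℤ) →₀ ℂ) (β : Fin (n+1) → ℤ) :
    liftF f β = remVal f β := rfl

lemma liftF_snoc {f : (Fin n → ℤ) →₀ ℂ} (hf : WInv f) (α : Fin n → ℤ) :
    liftF f (Fin.snoc α 0) = f α := by
  rw [liftF_apply, remVal_eq hf _ (Fin.last n) (by simp)]
  congr 1
  funext k
  simp [Fin.succAbove_last]

lemma liftF_WInv {f : (Fin n → ℤ) →₀ ℂ} (hf : WInv f) : WInv (liftF f) := by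
  intro ε π β
  rw [liftF_apply, liftF_apply]
  by_cases h : ∃ j, β j = 0
  · obtain ⟨j₀, hj₀⟩ := h
    have hz : actZ ε π β (π j₀) = 0 := by
      unfold actZ; simp [hj₀]
    rw [remVal_eq hf _ (π j₀) hz, remVal_eq hf _ j₀ hj₀]
    have hu : Function.Injective (π.symm ∘ (π j₀).succAbove) :=
      (Equiv.injective _).comp Fin.succAbove_right_injective
    have hrange : Set.range (π.symm ∘ (π j₀).succAbove) = Set.range j₀.succAbove := by
      ext x
      simp only [Set.range_comp, Fin.range_succAbove, Set.mem_image, Set.mem_compl_iff,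
        Set.mem_singleton_iff]
      constructor
      · rintro ⟨y, hy, rfl⟩
        intro hx
        exact hy (by simpa using congrArg π hx)
      · intro hx
        exact ⟨π x, fun hc => hx (by simpa using congrArg π hc), by simp⟩
    have key := comp_range_eq hf β (ε ∘ (π j₀).succAbove) _ hu j₀ hrange
    calc f ((actZ ε π β) ∘ (π j₀).succAbove)
        = f (fun k => (if (ε ∘ (π j₀).succAbove) k then -1 else 1)
            * β ((π.symm ∘ (π j₀).succAbove) k)) := rfl
      _ = f (β ∘ j₀.succAbove) := key
  · have h' : ¬ ∃ j, actZ ε π β j = 0 := by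
      rintro ⟨j, hj⟩
      unfold actZ at hj
      rcases mul_eq_zero.mp hj with hc | hc
      · exact sgn_ne_zero _ hc
      · exact h ⟨_, hc⟩
    rw [remVal_of_no_zero _ h, remVal_of_no_zero _ h']

lemma liftF_wt {f : (Fin n → ℤ) →₀ ℂ} {d : ℕ} (hf : WInv f)
    (hd : ∀ α ∈ f.support, wtZ α ≤ d) :
    ∀ β ∈ (liftF f).support, wtZ β ≤ d := by
  intro β hb
  have hb' : liftF f β ≠ 0 := Finsupp.mem_support_iff.mp hb
  rw [liftF_apply, remVal] at hb'
  split at hb'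
  case isFalse => exact absurd rfl hb'
  case isTrue h =>
    set j := Classical.choose h with hjdef
    have hj : β j = 0 := Classical.choose_spec h
    have hmem : (β ∘ j.succAbove) ∈ f.support := Finsupp.mem_support_iff.mpr hb'
    have := hd _ hmem
    calc wtZ β = (β j).natAbs + ∑ k, (β (j.succAbove k)).natAbs :=
          Fin.sum_univ_succAbove (fun i => (β i).natAbs) j
      _ = wtZ (β ∘ j.succAbove) := by rw [hj]; simp [wtZ, Function.comp]
      _ ≤ d := this

/-- extend a permutation of `Fin n` to `Fin (n+1)` fixing the last element -/
def extP (π : Equiv.Perm (Fin n)) : Equiv.Perm (Fin (n+1)) :=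
  (finSuccEquivLast.trans (Equiv.optionCongr π)).trans finSuccEquivLast.symm

def extB (ε : Fin n → Bool) : Fin (n+1) → Bool := Fin.snoc ε false

@[simp] lemma extP_castSucc (π : Equiv.Perm (Fin n)) (k : Fin n) :
    extP π (Fin.castSucc k) = Fin.castSucc (π k) := by
  simp [extP, finSuccEquivLast_castSucc]

@[simp] lemma extP_last (π : Equiv.Perm (Fin n)) : extP π (Fin.last n) = Fin.last n := by
  simp [extP, finSuccEquivLast_last]

@[simp] lemma extP_symm_castSucc (π : Equiv.Perm (Fin n)) (k : Fin n) :
    (extP π).symm (Fin.castSucc k) = Fin.castSucc (π.symm k) := by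
  rw [Equiv.symm_apply_eq, extP_castSucc, Equiv.apply_symm_apply]

@[simp] lemma extP_symm_last (π : Equiv.Perm (Fin n)) :
    (extP π).symm (Fin.last n) = Fin.last n := by
  rw [Equiv.symm_apply_eq, extP_last]

@[simp] lemma extB_castSucc (ε : Fin n → Bool) (k : Fin n) :
    extB ε (Fin.castSucc k) = ε k := by simp [extB]

@[simp] lemma extB_last (ε : Fin n → Bool) : extB ε (Fin.last n) = false := by simp [extB]

lemma extP_inv (π : Equiv.Perm (Fin n)) : (extP π)⁻¹ = extP π⁻¹ := by
  ext j
  induction j using Fin.lastCases with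
  | last => simp [Equiv.Perm.inv_def]
  | cast k => simp [Equiv.Perm.inv_def]

lemma extB_comp (ε : Fin n → Bool) (π : Equiv.Perm (Fin n)) :
    (extB ε) ∘ (extP π) = extB (ε ∘ π) := by
  funext j
  induction j using Fin.lastCases with
  | last => simp
  | cast k => simp

lemma act_ext_castSucc (ε : Fin n → Bool) (π : Equiv.Perm (Fin n)) (β : Fin (n+1) → ℤ) :
    (actZ (extB ε) (extP π) β) ∘ Fin.castSucc = actZ ε π (β ∘ Fin.castSucc) := by
  funext k
  simp only [Function.comp_apply, actZ, extB_castSucc, extP_symm_castSucc]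

lemma act_ext_last (ε : Fin n → Bool) (π : Equiv.Perm (Fin n)) (β : Fin (n+1) → ℤ) :
    (actZ (extB ε) (extP π) β) (Fin.last n) = β (Fin.last n) := by
  simp [actZ]

open scoped Classical in
def fiberSum (a : ℂ) (g : (Fin (n+1) → ℤ) →₀ ℂ) (α : Fin n → ℤ) : ℂ :=
  ∑ β ∈ g.support.filter (fun β => β ∘ Fin.castSucc = α), g β * a ^ (β (Fin.last n))

open scoped Classical in
lemma fiberSum_inv (a : ℂ) {g : (Fin (n+1) → ℤ) →₀ ℂ} (hg : WInv g)
    (ε : Fin n → Bool) (π : Equiv.Perm (Fin n)) (α : Fin n → ℤ) :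
    fiberSum a g (actZ ε π α) = fiberSum a g α := by
  unfold fiberSum
  refine (Finset.sum_nbij' (actZ (extB ε) (extP π)) (actZ (extB (ε ∘ π)) (extP π⁻¹))
    ?_ ?_ ?_ ?_ ?_).symm
  · intro β hb
    rw [Finset.mem_filter] at hb ⊢
    refine ⟨Finsupp.mem_support_iff.mpr ?_, ?_⟩
    · rw [hg]; exact Finsupp.mem_support_iff.mp hb.1
    · rw [act_ext_castSucc, hb.2]
  · intro γ hγ
    rw [Finset.mem_filter] at hγ ⊢
    refine ⟨Finsupp.mem_support_iff.mpr ?_, ?_⟩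
    · rw [hg]; exact Finsupp.mem_support_iff.mp hγ.1
    · rw [act_ext_castSucc, hγ.2, actZ_left_inv]
  · intro β _
    rw [← extB_comp, ← extP_inv, actZ_left_inv]
  · intro γ _
    rw [← extB_comp, ← extP_inv, actZ_right_inv]
  · intro β _
    rw [hg, act_ext_last]

lemma wtZ_castSucc (β : Fin (n+1) → ℤ) :
    wtZ β = wtZ (β ∘ Fin.castSucc) + (β (Fin.last n)).natAbs := by
  simpa [wtZ, Function.comp] using Fin.sum_univ_castSucc (fun i => (β i).natAbs)

lemma snocCompCast (α : Fin n → ℤ) (m : ℤ) :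
    (Fin.snoc α m : Fin (n+1) → ℤ) ∘ Fin.castSucc = α := by
  funext k; simp

lemma wtZ_snoc_zero (α : Fin n → ℤ) : wtZ (Fin.snoc α 0 : Fin (n+1) → ℤ) = wtZ α := by
  rw [wtZ_castSucc, snocCompCast]
  simp

open scoped Classical in
def remd (a : ℂ) (f : (Fin n → ℤ) →₀ ℂ) : (Fin n → ℤ) →₀ ℂ :=
  Finsupp.onFinset ((liftF f).support.image (fun β => β ∘ Fin.castSucc) ∪ f.support)
    (fun α => fiberSum a (liftF f) α - f α)
    (by
      intro α h
      by_contra hmem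
      rw [Finset.mem_union] at hmem
      push_neg at hmem
      have hfa : f α = 0 := by
        by_contra hc
        exact hmem.2 (Finsupp.mem_support_iff.mpr hc)
      have hT : fiberSum a (liftF f) α = 0 := by
        rw [fiberSum]
        apply Finset.sum_eq_zero
        intro β hb
        rw [Finset.mem_filter] at hb
        exact absurd (hb.2 ▸ Finset.mem_image_of_mem _ hb.1) hmem.1
      exact h (show fiberSum a (liftF f) α - f α = 0 by rw [hT, hfa, sub_zero]))

lemma remd_apply (a : ℂ) (f : (Fin n → ℤ) →₀ ℂ) (α : Fin n → ℤ) :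
    remd a f α = fiberSum a (liftF f) α - f α := rfl

lemma remd_WInv (a : ℂ) {f : (Fin n → ℤ) →₀ ℂ} (hf : WInv f) : WInv (remd a f) := by
  intro ε π α
  rw [remd_apply, remd_apply, fiberSum_inv a (liftF_WInv hf), hf]

open scoped Classical in
lemma remd_zero_of_wt (a : ℂ) {f : (Fin n → ℤ) →₀ ℂ} {d : ℕ} (hf : WInv f)
    (hd : ∀ α ∈ f.support, wtZ α ≤ d) (α : Fin n → ℤ) (hα : d ≤ wtZ α) :
    remd a f α = 0 := by
  rw [remd_apply]
  rcases lt_or_eq_of_le hα with hlt | heq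
  · have hfa : f α = 0 := by
      by_contra hc
      exact absurd (hd α (Finsupp.mem_support_iff.mpr hc)) (by omega)
    have hT : fiberSum a (liftF f) α = 0 := by
      rw [fiberSum]
      apply Finset.sum_eq_zero
      intro β hb
      rw [Finset.mem_filter] at hb
      have h1 := liftF_wt hf hd β hb.1
      have h2 := wtZ_castSucc β
      rw [hb.2] at h2
      omega
    rw [hT, hfa, sub_zero]
  · -- wtZ α = d
    have hsub : ((liftF f).support.filter (fun β => β ∘ Fin.castSucc = α))
        ⊆ {Fin.snoc α 0} := by
      intro β hb
      rw [Finset.mem_filter] at hb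
      have h1 := liftF_wt hf hd β hb.1
      have h2 := wtZ_castSucc β
      rw [hb.2] at h2
      have hlast : β (Fin.last n) = 0 := by
        have : (β (Fin.last n)).natAbs = 0 := by omega
        exact Int.natAbs_eq_zero.mp this
      have : β = Fin.snoc α 0 := by
        funext i
        induction i using Fin.lastCases with
        | last => rw [hlast]; simp
        | cast k =>
          rw [← hb.2]
          simp
      rw [this, Finset.mem_singleton]
    have hTf : fiberSum a (liftF f) α = f α := by
      rw [fiberSum]
      rcases Finset.subset_singleton_iff.mp hsub with he | he
      · rw [he, Finset.sum_empty]
        rw [← liftF_snoc hf α]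
        by_contra hc
        have hmem : Fin.snoc α 0 ∈ (liftF f).support :=
          Finsupp.mem_support_iff.mpr (fun h0 => hc (by rw [h0]))
        have : (Fin.snoc α 0 : Fin (n+1) → ℤ) ∈
            ((liftF f).support.filter (fun β => β ∘ Fin.castSucc = α)) := by
          rw [Finset.mem_filter]
          exact ⟨hmem, snocCompCast α 0⟩
        rw [he] at this
        exact absurd this (Finset.notMem_empty _)
      · rw [he, Finset.sum_singleton]
        have : (Fin.snoc α (0:ℤ) : Fin (n+1) → ℤ) (Fin.last n) = 0 := by simp
        rw [this, zpow_zero, mul_one, liftF_snoc hf]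
    rw [hTf, sub_self]

open scoped Classical in
lemma eval_decomp (a : ℂ) (f : (Fin n → ℤ) →₀ ℂ) (x : Fin n → ℂ) :
    evalL (liftF f) (Fin.snoc x a) = evalL f x + evalL (remd a f) x := by
  set U := ((liftF f).support.image (fun β => β ∘ Fin.castSucc) ∪ f.support) with hU
  have hmaps : ∀ β ∈ (liftF f).support, β ∘ Fin.castSucc ∈ U := fun β hb =>
    Finset.mem_union_left _ (Finset.mem_image_of_mem _ hb)
  have hL : evalL (liftF f) (Fin.snoc x a)
      = ∑ α ∈ U, fiberSum a (liftF f) α * ∏ k, x k ^ α k := by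
    rw [evalL, Finsupp.sum]
    rw [← Finset.sum_fiberwise_of_maps_to hmaps
      (fun β => liftF f β * ∏ i, (Fin.snoc x a : Fin (n+1) → ℂ) i ^ β i)]
    apply Finset.sum_congr rfl
    intro α _
    rw [fiberSum, Finset.sum_mul]
    apply Finset.sum_congr rfl
    intro β hb
    rw [Finset.mem_filter] at hb
    have hprod : ∏ i, (Fin.snoc x a : Fin (n+1) → ℂ) i ^ β i
        = (∏ k, x k ^ α k) * a ^ β (Fin.last n) := by
      rw [Fin.prod_univ_castSucc]
      congr 1
      · apply Finset.prod_congr rfl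
        intro k _
        rw [Fin.snoc_castSucc]
        congr 1
        exact congrFun hb.2 k
      · rw [Fin.snoc_last]
    rw [hprod]
    ring
  have h1 : evalL f x = ∑ α ∈ U, f α * ∏ k, x k ^ α k := by
    rw [evalL]
    exact Finsupp.sum_of_support_subset f Finset.subset_union_right _
      (fun i _ => zero_mul _)
  have h2 : evalL (remd a f) x = ∑ α ∈ U, remd a f α * ∏ k, x k ^ α k := by
    rw [evalL]
    exact Finsupp.sum_of_support_subset _ Finsupp.support_onFinset_subset _
      (fun i _ => zero_mul _)
  rw [hL, h1, h2, ← Finset.sum_add_distrib]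
  apply Finset.sum_congr rfl
  intro α _
  rw [remd_apply]
  ring

lemma key_lift (a : ℂ) : ∀ d : ℕ, ∀ f : (Fin n → ℤ) →₀ ℂ, WInv f →
    (∀ α ∈ f.support, wtZ α ≤ d) →
    ∃ g : (Fin (n+1) → ℤ) →₀ ℂ, WInv g ∧ (∀ β ∈ g.support, wtZ β ≤ d) ∧
      (∀ α, wtZ α = d → g (Fin.snoc α 0) = f α) ∧
      ∀ x : Fin n → ℂ, evalL g (Fin.snoc x a) = evalL f x := by
  intro d
  induction d using Nat.strong_induction_on with
  | _ d ih =>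
  intro f hf hd
  cases d with
  | zero =>
    refine ⟨liftF f, liftF_WInv hf, liftF_wt hf hd, fun α _ => liftF_snoc hf α, fun x => ?_⟩
    have hr : remd a f = 0 := by
      ext α
      exact remd_zero_of_wt a hf hd α (Nat.zero_le _)
    have hdec := eval_decomp a f x
    rw [hr] at hdec
    simpa [evalL, Finsupp.sum_zero_index] using hdec
  | succ e =>
    have hrd : ∀ α ∈ (remd a f).support, wtZ α ≤ e := by
      intro α hα
      by_contra hc
      exact Finsupp.mem_support_iff.mp hα
        (remd_zero_of_wt a hf hd α (by omega))
    obtain ⟨h, hWh, hdegh, _, hevalh⟩ := ih e (Nat.lt_succ_self e) (remd a f)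
      (remd_WInv a hf) hrd
    refine ⟨liftF f - h, ?_, ?_, ?_, ?_⟩
    · intro ε π β
      rw [Finsupp.sub_apply, Finsupp.sub_apply, liftF_WInv hf, hWh]
    · intro β hb
      rcases Finset.mem_union.mp (Finsupp.support_sub hb) with hb' | hb'
      · exact liftF_wt hf hd β hb'
      · exact le_trans (hdegh β hb') (Nat.le_succ e)
    · intro α hα
      have hh0 : h (Fin.snoc α 0) = 0 := by
        by_contra hc
        have := hdegh _ (Finsupp.mem_support_iff.mpr hc)
        rw [wtZ_snoc_zero, hα] at this
        omega
      rw [Finsupp.sub_apply, hh0, sub_zero, liftF_snoc hf]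
    · intro x
      have hsub : evalL (liftF f - h) (Fin.snoc x a)
          = evalL (liftF f) (Fin.snoc x a) - evalL h (Fin.snoc x a) := by
        rw [evalL, evalL, evalL]
        exact Finsupp.sum_sub_index (fun β b₁ b₂ => sub_mul _ _ _)
      rw [hsub, eval_decomp a f x, hevalh x]
      ring


/-- For every `W_n`-invariant Laurent polynomial `f` in `n` variables of degree `d`
and `a ≠ 0`, there is a `W_{n+1}`-invariant Laurent polynomial `g` in `n+1`
variables of degree `d` with `g(x, a) = f(x)`. -/
theorem stmt4 {n : ℕ} (hn : 1 ≤ n) (a : ℂ) (ha : a ≠ 0) (d : ℕ)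
    (f : (Fin n → ℤ) →₀ ℂ) (hfW : WInv f)
    (hfdeg : ∀ α ∈ f.support, wtZ α ≤ d) (hfdeg' : ∃ α ∈ f.support, wtZ α = d) :
    ∃ g : (Fin (n + 1) → ℤ) →₀ ℂ, WInv g ∧
      (∀ α ∈ g.support, wtZ α ≤ d) ∧ (∃ α ∈ g.support, wtZ α = d) ∧
      ∀ x : Fin n → ℂ, (∀ i, x i ≠ 0) → evalL g (Fin.snoc x a) = evalL f x := by
  obtain ⟨g, hgW, hgdeg, hgsnoc, hgeval⟩ := key_lift a d f hfW hfdeg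
  refine ⟨g, hgW, hgdeg, ?_, fun x _ => hgeval x⟩
  obtain ⟨α₀, hα₀mem, hα₀wt⟩ := hfdeg'
  refine ⟨Fin.snoc α₀ 0, ?_, by rw [wtZ_snoc_zero, hα₀wt]⟩
  rw [Finsupp.mem_support_iff, hgsnoc α₀ hα₀wt]
  exact Finsupp.mem_support_iff.mp hα₀mem
end
end

section
/- Let $0 < |q| < 1$, $n \ge 1$, $d \ge 0$, and $\tau \in \mathbb{C}^n$ with $0 < |\tau_1| < \cdots < |\tau_n| < 1$. For every function $\overline{f}$ from the set $\Lambda_{n,d}^+$ of partitions of length $\le n$ and weight $\le d$ to $\mathbb{C}$, there is a unique $W_n$-invariant Laurent polynomial $f$ in $n$ variables of degree $\le d$ such that $f(\overline{\mu}) = \overline{f}(\mu)$ for all $\mu \in \Lambda_{n,d}^+$, where $\overline{\mu}_i = q^{\mu_i}\tau_i$. -/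
noncomputable section

/-- The chain condition `0 < |τ₁| < ⋯ < |τₙ| < 1`. -/
def TauChain {n : ℕ} (τ : Fin n → ℂ) : Prop :=
  (∀ i, 0 < ‖τ i‖) ∧ StrictMono (fun i => ‖τ i‖) ∧
    ∀ i, ‖τ i‖ < 1

namespace Interp

abbrev R (n : ℕ) := AddMonoidAlgebra ℂ (Fin n → ℤ)

open AddMonoidAlgebra Finsupp

variable {n : ℕ}

/-- exponent basis vector -/
def ee (i : Fin n) : Fin n → ℤ := Pi.single i 1

/-- the evaluation character -/
def chi (x : Fin n → ℂ) (hx : ∀ i, x i ≠ 0) : Multiplicative (Fin n → ℤ) →* ℂ where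
  toFun α := ∏ i, x i ^ (Multiplicative.toAdd α) i
  map_one' := by
    simp only [toAdd_one, Pi.zero_apply, zpow_zero, Finset.prod_const_one]
  map_mul' α β := by
    have h : ∀ i, x i ^ (Multiplicative.toAdd (α * β)) i
        = x i ^ (Multiplicative.toAdd α) i * x i ^ (Multiplicative.toAdd β) i :=
      fun i => zpow_add₀ (hx i) _ _
    simp only [h, Finset.prod_mul_distrib]

/-- evaluation as an algebra hom -/
def evA (x : Fin n → ℂ) (hx : ∀ i, x i ≠ 0) : R n →ₐ[ℂ] ℂ :=
  AddMonoidAlgebra.lift ℂ ℂ (Fin n → ℤ) (chi x hx)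

theorem evalL_eq_evA (x : Fin n → ℂ) (hx : ∀ i, x i ≠ 0) (c : R n) :
    evalL c.coeff x = evA x hx c := by
  rw [evA, AddMonoidAlgebra.lift_apply]
  refine Finsupp.sum_congr fun α _ => ?_
  simp [chi, smul_eq_mul]

theorem evA_single (x : Fin n → ℂ) (hx : ∀ i, x i ≠ 0) (α : Fin n → ℤ) (r : ℂ) :
    evA x hx (AddMonoidAlgebra.single α r) = r * ∏ i, x i ^ α i := by
  rw [evA, AddMonoidAlgebra.lift_single]; simp [chi, smul_eq_mul]

/-- evalL as a linear map -/
def evalLin (x : Fin n → ℂ) : ((Fin n → ℤ) →₀ ℂ) →ₗ[ℂ] ℂ :=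
  Finsupp.linearCombination _ (fun α => ∏ i, x i ^ α i)

theorem evalL_eq_lin (x : Fin n → ℂ) (c : (Fin n → ℤ) →₀ ℂ) : evalL c x = evalLin x c := by
  rw [evalLin, Finsupp.linearCombination_apply]
  refine Finsupp.sum_congr fun α _ => ?_
  simp [smul_eq_mul]

/-! ### the W action -/

theorem actZ_invol (ε : Fin n → Bool) (π : Equiv.Perm (Fin n)) (α : Fin n → ℤ) :
    actZ ε π (actZ (ε ∘ π) π.symm α) = α := by
  funext j
  simp only [actZ, Equiv.symm_symm, Function.comp_apply, Equiv.apply_symm_apply]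
  split <;> ring

theorem actZ_invol' (ε : Fin n → Bool) (π : Equiv.Perm (Fin n)) (α : Fin n → ℤ) :
    actZ (ε ∘ π) π.symm (actZ ε π α) = α := by
  funext j
  simp only [actZ, Equiv.symm_symm, Function.comp_apply, Equiv.symm_apply_apply]
  split <;> ring

/-- the action as an additive equivalence -/
def actE (ε : Fin n → Bool) (π : Equiv.Perm (Fin n)) : (Fin n → ℤ) ≃+ (Fin n → ℤ) where
  toFun := actZ ε π
  invFun := actZ (ε ∘ π) π.symm
  left_inv α := actZ_invol' ε π α
  right_inv α := actZ_invol ε π α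
  map_add' α β := by funext j; simp only [actZ, Pi.add_apply]; ring

/-- the action as an algebra automorphism -/
def Aw (ε : Fin n → Bool) (π : Equiv.Perm (Fin n)) : R n ≃ₐ[ℂ] R n :=
  AddMonoidAlgebra.domCongr ℂ ℂ (actE ε π)

theorem Aw_apply (ε : Fin n → Bool) (π : Equiv.Perm (Fin n)) (f : R n) (β : Fin n → ℤ) :
    (Aw ε π f).coeff β = f.coeff (actZ (ε ∘ π) π.symm β) :=
  AddMonoidAlgebra.coeff_domCongr (actE ε π) f β

theorem Aw_single (ε : Fin n → Bool) (π : Equiv.Perm (Fin n)) (γ : Fin n → ℤ) (r : ℂ) :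
    Aw ε π (AddMonoidAlgebra.single γ r) = AddMonoidAlgebra.single (actZ ε π γ) r :=
  AddMonoidAlgebra.domCongr_single (actE ε π) γ r

theorem winv_iff (f : R n) : WInv f.coeff ↔ ∀ ε π, Aw ε π f = f := by
  constructor
  · intro h ε π
    ext β
    rw [Aw_apply]
    exact h _ _ _
  · intro h ε π α
    have h2 := Finsupp.ext_iff.mp (congrArg AddMonoidAlgebra.coeff (h (ε ∘ π) π.symm)) α
    rw [Aw_apply] at h2
    simp only [Equiv.symm_symm] at h2
    have he : (ε ∘ π) ∘ π.symm = ε := by funext j; simp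
    rw [he] at h2
    exact h2



/-! ### basic monomials -/

def CC (v : ℂ) : R n := AddMonoidAlgebra.single 0 v
def XP (i : Fin n) : R n := AddMonoidAlgebra.single (ee i) 1
def XN (i : Fin n) : R n := AddMonoidAlgebra.single (-ee i) 1
def uu (k : ℤ) (i : Fin n) : R n := AddMonoidAlgebra.single (k • ee i) 1
def tf (c : ℂ) (i : Fin n) : R n := XP i + XN i - CC c

theorem CC_def (v : ℂ) : (CC v : R n) = AddMonoidAlgebra.single 0 v := rfl
theorem XP_def (i : Fin n) : XP i = AddMonoidAlgebra.single (ee i) 1 := rfl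
theorem uu_def (k : ℤ) (i : Fin n) : uu k i = AddMonoidAlgebra.single (k • ee i) 1 := rfl

theorem CC_mul (v w : ℂ) : (CC v : R n) * CC w = CC (v * w) := by
  rw [CC, CC, CC, AddMonoidAlgebra.single_mul_single, zero_add]

theorem CC_one : (CC 1 : R n) = 1 := rfl

theorem uu_mul (k l : ℤ) (i : Fin n) : uu k i * uu l i = uu (k + l) i := by
  rw [uu, uu, uu, AddMonoidAlgebra.single_mul_single, ← add_smul, one_mul]

theorem uu_zero (i : Fin n) : uu 0 i = 1 := by rw [uu, zero_smul]; rfl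

theorem XP_eq_uu (i : Fin n) : XP i = uu 1 i := by rw [XP, uu, one_smul]

theorem XP_mul_XN (i : Fin n) : XP i * XN i = (1 : R n) := by
  rw [XP, XN, AddMonoidAlgebra.single_mul_single, add_neg_cancel, one_mul]; rfl

/-! ### substitution homs -/

def zeroAt (i : Fin n) (α : Fin n → ℤ) : Fin n → ℤ := Function.update α i 0

theorem zeroAt_add (i : Fin n) (α β : Fin n → ℤ) :
    zeroAt i (α + β) = zeroAt i α + zeroAt i β := by
  funext j
  by_cases h : j = i <;> simp [zeroAt, Function.update, h]

def sigmaHom (i : Fin n) (a : ℂ) (ha : a ≠ 0) : Multiplicative (Fin n → ℤ) →* R n where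
  toFun α := AddMonoidAlgebra.single (zeroAt i (Multiplicative.toAdd α)) (a ^ (Multiplicative.toAdd α) i)
  map_one' := by
    simp only [toAdd_one]
    have : zeroAt i (0 : Fin n → ℤ) = 0 := by funext j; by_cases h : j = i <;> simp [zeroAt, Function.update, h]
    rw [this, Pi.zero_apply, zpow_zero]; rfl
  map_mul' α β := by
    simp only [toAdd_mul]
    rw [AddMonoidAlgebra.single_mul_single, ← zeroAt_add, Pi.add_apply, zpow_add₀ ha]

def sigmaL (i : Fin n) (a : ℂ) (ha : a ≠ 0) : R n →ₐ[ℂ] R n :=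
  AddMonoidAlgebra.lift ℂ (R n) (Fin n → ℤ) (sigmaHom i a ha)

theorem sigmaL_single (i : Fin n) (a : ℂ) (ha : a ≠ 0) (α : Fin n → ℤ) (r : ℂ) :
    sigmaL i a ha (AddMonoidAlgebra.single α r) = AddMonoidAlgebra.single (zeroAt i α) (r * a ^ (α i)) := by
  rw [sigmaL, AddMonoidAlgebra.lift_single]
  rw [show ((sigmaHom i a ha) (Multiplicative.ofAdd α)) = AddMonoidAlgebra.single (zeroAt i α) (a ^ α i) from rfl]
  rw [AddMonoidAlgebra.smul_single, smul_eq_mul]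

theorem zeroAt_ee (i : Fin n) : zeroAt i (ee i) = 0 := by
  funext j; by_cases h : j = i <;> simp [zeroAt, Function.update, ee, Pi.single_apply, h]

theorem sigmaL_XP_self (i : Fin n) (a : ℂ) (ha : a ≠ 0) : sigmaL i a ha (XP i) = CC a := by
  rw [XP, sigmaL_single, zeroAt_ee]
  simp [ee, CC]

theorem sigmaL_CC (i : Fin n) (a : ℂ) (ha : a ≠ 0) (v : ℂ) : sigmaL i a ha (CC v) = CC v := by
  rw [CC, sigmaL_single]
  have : zeroAt i (0 : Fin n → ℤ) = 0 := by funext j; by_cases h : j = i <;> simp [zeroAt, Function.update, h]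
  rw [this]; simp [CC]

theorem ee_apply_ne (i j : Fin n) (hij : j ≠ i) : (ee j) i = 0 := by
  rw [ee, Pi.single_apply, if_neg (fun hh => hij hh.symm)]

theorem sigmaL_XP_ne (i j : Fin n) (hij : j ≠ i) (a : ℂ) (ha : a ≠ 0) :
    sigmaL i a ha (XP j) = XP j := by
  rw [XP, sigmaL_single]
  have h1 : zeroAt i (ee j) = ee j := by
    funext l
    rcases eq_or_ne l i with rfl | h
    · rw [zeroAt, Function.update_self, ee_apply_ne _ _ hij]
    · rw [zeroAt, Function.update_of_ne h]
  rw [h1, ee_apply_ne i j hij, zpow_zero, one_mul]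

theorem sigmaL_factor_self (i : Fin n) (a : ℂ) (ha : a ≠ 0) :
    sigmaL i a ha (XP i - CC a) = 0 := by
  rw [map_sub, sigmaL_XP_self, sigmaL_CC, sub_self]

/-! ### divisibility -/

theorem dvd_uu_sub_CC (i : Fin n) (a : ℂ) (ha : a ≠ 0) (k : ℤ) :
    (XP i - CC a) ∣ (uu k i - CC (a ^ k)) := by
  have hnat : ∀ m0 : ℕ, (XP i - CC a) ∣ (uu (m0 : ℤ) i - CC (a ^ (m0 : ℤ))) := by
    intro m0
    induction m0 with
    | zero => rw [Int.natCast_zero, uu_zero, zpow_zero, CC_one, sub_self]; exact dvd_zero _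
    | succ m ih =>
      have hc : ((m + 1 : ℕ) : ℤ) = (m : ℤ) + 1 := by push_cast; ring
      rw [hc]
      have key : uu ((m : ℤ) + 1) i - CC (a ^ ((m : ℤ) + 1))
          = (uu (m : ℤ) i - CC (a ^ (m : ℤ))) * XP i + CC (a ^ (m : ℤ)) * (XP i - CC a) := by
        rw [zpow_add_one₀ ha, ← CC_mul,
          show uu ((m:ℤ)+1) i = uu (m:ℤ) i * uu 1 i from (uu_mul _ _ _).symm, ← XP_eq_uu]
        ring
      rw [key]
      exact dvd_add (ih.mul_right _) (Dvd.dvd.mul_left dvd_rfl _)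
  rcases Int.eq_nat_or_neg k with ⟨m0, rfl | rfl⟩
  · exact hnat m0
  · have key : uu (-(m0:ℤ)) i - CC (a ^ (-(m0:ℤ)))
        = -(uu (-(m0:ℤ)) i * CC (a ^ (-(m0:ℤ)))) * (uu (m0:ℤ) i - CC (a ^ (m0:ℤ))) := by
      have h1 : uu (-(m0:ℤ)) i * uu (m0:ℤ) i = 1 := by rw [uu_mul, neg_add_cancel, uu_zero]
      have h2 : (CC (a ^ (-(m0:ℤ))) : R n) * CC (a ^ (m0:ℤ)) = 1 := by
        rw [CC_mul, ← zpow_add₀ ha, neg_add_cancel, zpow_zero, CC_one]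
      calc uu (-(m0:ℤ)) i - CC (a ^ (-(m0:ℤ)))
          = uu (-(m0:ℤ)) i * (CC (a ^ (-(m0:ℤ))) * CC (a ^ (m0:ℤ)))
            - (uu (-(m0:ℤ)) i * uu (m0:ℤ) i) * CC (a ^ (-(m0:ℤ))) := by rw [h1, h2]; ring
        _ = -(uu (-(m0:ℤ)) i * CC (a ^ (-(m0:ℤ)))) * (uu (m0:ℤ) i - CC (a ^ (m0:ℤ))) := by ring
    rw [key]
    exact (hnat m0).mul_left _

theorem dvd_sub_sigmaL (i : Fin n) (a : ℂ) (ha : a ≠ 0) (f : R n) :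
    (XP i - CC a) ∣ (f - sigmaL i a ha f) := by
  induction f using AddMonoidAlgebra.induction with
  | zero => rw [map_zero, sub_zero]; exact dvd_zero _
  | single_add α r g hα hr ih =>
    rw [map_add, add_sub_add_comm]
    refine dvd_add ?_ ih
    rw [sigmaL_single]
    have hexp : zeroAt i α + α i • ee i = α := by
      funext j
      rcases eq_or_ne j i with rfl | h
      · simp [zeroAt, Function.update_self, ee, Pi.single_apply]
      · simp [zeroAt, Function.update_of_ne h, ee, Pi.single_apply, h]
    have L1 : (AddMonoidAlgebra.single (zeroAt i α) r : R n) * uu (α i) i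
        = AddMonoidAlgebra.single α r := by
      rw [uu_def, AddMonoidAlgebra.single_mul_single, mul_one, hexp]
    have L2 : (AddMonoidAlgebra.single (zeroAt i α) r : R n) * CC (a ^ (α i))
        = AddMonoidAlgebra.single (zeroAt i α) (r * a ^ (α i)) := by
      rw [CC_def, AddMonoidAlgebra.single_mul_single, add_zero]
    have key : (AddMonoidAlgebra.single α r : R n)
          - AddMonoidAlgebra.single (zeroAt i α) (r * a ^ (α i))
        = (AddMonoidAlgebra.single (zeroAt i α) r : R n) * (uu (α i) i - CC (a ^ (α i))) := by
      rw [mul_sub, L1, L2]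
    rw [key]
    exact (dvd_uu_sub_CC i a ha (α i)).mul_left _

theorem dvd_of_sigmaL_eq_zero (i : Fin n) (a : ℂ) (ha : a ≠ 0) (f : R n)
    (h : sigmaL i a ha f = 0) : (XP i - CC a) ∣ f := by
  have := dvd_sub_sigmaL i a ha f
  rwa [h, sub_zero] at this

theorem sigmaL_eq_zero_of_dvd (i : Fin n) (a : ℂ) (ha : a ≠ 0) (f : R n)
    (h : (XP i - CC a) ∣ f) : sigmaL i a ha f = 0 := by
  obtain ⟨g, rfl⟩ := h
  rw [map_mul, sigmaL_factor_self, zero_mul]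

theorem primish (i : Fin n) (a : ℂ) (ha : a ≠ 0) (g h : R n)
    (hd : (XP i - CC a) ∣ g * h) : (XP i - CC a) ∣ g ∨ (XP i - CC a) ∣ h := by
  have h0 := sigmaL_eq_zero_of_dvd i a ha _ hd
  rw [map_mul] at h0
  rcases mul_eq_zero.mp h0 with h1 | h1
  · exact Or.inl (dvd_of_sigmaL_eq_zero i a ha _ h1)
  · exact Or.inr (dvd_of_sigmaL_eq_zero i a ha _ h1)

theorem factor_ne_zero (j : Fin n) (b : ℂ) : (XP j - CC b : R n) ≠ 0 := by
  intro h
  have := Finsupp.ext_iff.mp (congrArg AddMonoidAlgebra.coeff h) (ee j)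
  rw [AddMonoidAlgebra.coeff_sub, Finsupp.sub_apply] at this
  have h1 : (XP j : R n).coeff (ee j) = 1 := by rw [XP, AddMonoidAlgebra.coeff_single_apply, if_pos rfl]
  have h2 : (CC b : R n).coeff (ee j) = 0 := by
    rw [CC, AddMonoidAlgebra.coeff_single_apply, if_neg]
    intro hh
    have := congrFun hh j
    simp [ee, Pi.single_apply] at this
  rw [h1, h2, AddMonoidAlgebra.coeff_zero, Finsupp.coe_zero] at this
  simp at this

theorem factor_not_dvd (i j : Fin n) (a b : ℂ) (ha : a ≠ 0) (hb : b ≠ 0)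
    (hne : i ≠ j ∨ a ≠ b) : ¬ ((XP i - CC a) ∣ (XP j - CC b)) := by
  intro hd
  have h0 := sigmaL_eq_zero_of_dvd i a ha _ hd
  by_cases hij : j = i
  · subst hij
    have hab : a ≠ b := hne.resolve_left (fun h => absurd rfl h)
    rw [map_sub, sigmaL_XP_self, sigmaL_CC] at h0
    have : CC (a - b) = (0 : R n) := by rw [← h0, CC, CC, CC, AddMonoidAlgebra.single_sub]
    rw [CC] at this
    exact sub_ne_zero.mpr hab (AddMonoidAlgebra.single_eq_zero.mp this)
  · rw [map_sub, sigmaL_XP_ne i j hij a ha, sigmaL_CC] at h0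
    exact factor_ne_zero j b h0

theorem prod_dvd_of_forall_dvd {ι : Type*} [DecidableEq ι] (S : Finset ι) (p : ι → R n) :
    ∀ f : R n,
    (∀ i ∈ S, ∀ g h : R n, p i ∣ g * h → p i ∣ g ∨ p i ∣ h) →
    (∀ i ∈ S, ∀ j ∈ S, i ≠ j → ¬ p i ∣ p j) →
    (∀ i ∈ S, p i ∣ f) → (∏ i ∈ S, p i) ∣ f := by
  induction S using Finset.induction_on with
  | empty => intro f _ _ _; simpa using one_dvd f
  | @insert j S hj ih =>
    intro f hprim hnd hdvd
    obtain ⟨g, rfl⟩ := hdvd j (Finset.mem_insert_self j S)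
    rw [Finset.prod_insert hj]
    have hGdvd : ∀ i ∈ S, p i ∣ g := by
      intro i hi
      have hiS : i ∈ insert j S := Finset.mem_insert_of_mem hi
      have hij : i ≠ j := by rintro rfl; exact hj hi
      rcases hprim i hiS _ _ (hdvd i hiS) with h | h
      · exact absurd h (hnd i hiS j (Finset.mem_insert_self j S) hij)
      · exact h
    exact mul_dvd_mul_left _ (ih g (fun i hi => hprim i (Finset.mem_insert_of_mem hi))
      (fun i hi j' hj' hij' => hnd i (Finset.mem_insert_of_mem hi) j' (Finset.mem_insert_of_mem hj') hij')
      hGdvd)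

/-! ### action on monomials and transport of divisibility -/

theorem actZ_zero (ε : Fin n → Bool) (π : Equiv.Perm (Fin n)) : actZ ε π (0 : Fin n → ℤ) = 0 := by
  funext j; simp [actZ]

theorem Aw_CC (ε : Fin n → Bool) (π : Equiv.Perm (Fin n)) (v : ℂ) :
    Aw ε π (CC v) = CC v := by
  rw [CC_def, show (AddMonoidAlgebra.single (0 : Fin n → ℤ) v : R n) = AddMonoidAlgebra.single 0 v from rfl,
    Aw_single, actZ_zero]

theorem actZ_ee (ε : Fin n → Bool) (π : Equiv.Perm (Fin n)) (i : Fin n) :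
    actZ ε π (ee i) = if ε (π i) then -ee (π i) else ee (π i) := by
  funext j
  rcases eq_or_ne j (π i) with rfl | hj
  · by_cases hε : ε (π i) <;>
      simp [actZ, ee, Pi.single_apply, Equiv.symm_apply_apply, hε]
  · have h' : π.symm j ≠ i := fun hh => hj (by rw [← hh, π.apply_symm_apply])
    by_cases hε : ε (π i) <;> simp [actZ, ee, Pi.single_apply, h', hj, hε]

theorem actZ_neg (ε : Fin n → Bool) (π : Equiv.Perm (Fin n)) (γ : Fin n → ℤ) :
    actZ ε π (-γ) = -actZ ε π γ := by
  funext j; simp only [actZ, Pi.neg_apply]; ring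

theorem Aw_XP (ε : Fin n → Bool) (π : Equiv.Perm (Fin n)) (i : Fin n) :
    Aw ε π (XP i) = if ε (π i) then XN (π i) else XP (π i) := by
  rw [XP_def, show (AddMonoidAlgebra.single (ee i) (1:ℂ) : R n) = AddMonoidAlgebra.single (ee i) 1 from rfl,
    Aw_single, actZ_ee]
  by_cases hε : ε (π i) <;> simp [hε, XN, XP]

theorem Aw_XN (ε : Fin n → Bool) (π : Equiv.Perm (Fin n)) (i : Fin n) :
    Aw ε π (XN i) = if ε (π i) then XP (π i) else XN (π i) := by
  rw [show (XN i : R n) = AddMonoidAlgebra.single (-(ee i)) 1 from rfl, Aw_single, actZ_neg, actZ_ee]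
  by_cases hε : ε (π i) <;> simp [hε, XN, XP]

theorem Aw_tf (ε : Fin n → Bool) (π : Equiv.Perm (Fin n)) (c : ℂ) (i : Fin n) :
    Aw ε π (tf c i) = tf c (π i) := by
  rw [tf, tf, map_sub, map_add, Aw_XP, Aw_XN, Aw_CC]
  by_cases hε : ε (π i) <;> simp [hε] <;> ring

theorem Aw_prod_tf (ε : Fin n → Bool) (π : Equiv.Perm (Fin n)) (c : ℂ) :
    Aw ε π (∏ i, tf c i) = ∏ i, tf c i := by
  rw [map_prod]
  simp only [Aw_tf]
  exact Equiv.prod_comp π (fun i => tf c i)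

theorem dvd_all_of_dvd_one (i0 : Fin n) (a : ℂ) (ha : a ≠ 0) (f : R n) (hf : WInv f.coeff)
    (h : (XP i0 - CC a) ∣ f) (i : Fin n) :
    ((XP i - CC a) ∣ f) ∧ ((XP i - CC a⁻¹) ∣ f) := by
  have hAwf := (winv_iff f).mp hf
  constructor
  · have hdvd2 := map_dvd (Aw (fun _ => false) (Equiv.swap i0 i)) h
    rw [hAwf _ _] at hdvd2
    rw [map_sub, Aw_XP, Aw_CC, Equiv.swap_apply_left] at hdvd2
    simpa using hdvd2
  · have hdvd2 := map_dvd (Aw (fun j => decide (j = i)) (Equiv.swap i0 i)) h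
    rw [hAwf _ _] at hdvd2
    rw [map_sub, Aw_XP, Aw_CC, Equiv.swap_apply_left] at hdvd2
    simp only [decide_eq_true_eq, if_pos rfl] at hdvd2
    -- hdvd2 : XN i - CC a ∣ f
    have e1 : XN i * XP i = (1 : R n) := by rw [mul_comm]; exact XP_mul_XN i
    have e2 : (CC a : R n) * CC a⁻¹ = 1 := by rw [CC_mul, mul_inv_cancel₀ ha, CC_one]
    have key : XN i - CC a = (XP i - CC a⁻¹) * (-(CC a) * XN i) := by
      linear_combination (CC a : R n) * e1 - XN i * e2
    exact dvd_trans ⟨_, key⟩ hdvd2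

theorem factor_pair (i : Fin n) (a : ℂ) (ha : a ≠ 0) :
    (XP i - CC a) * (XP i - CC a⁻¹) = XP i * tf (a + a⁻¹) i := by
  have e1 : XP i * XN i = (1 : R n) := XP_mul_XN i
  have e2 : (CC a : R n) * CC a⁻¹ = 1 := by rw [CC_mul, mul_inv_cancel₀ ha, CC_one]
  have e3 : (CC (a + a⁻¹) : R n) = CC a + CC a⁻¹ := AddMonoidAlgebra.single_add _ _ _
  rw [tf, e3]
  linear_combination e2 - e1

theorem prod_factor_dvd (a : ℂ) (ha : a ≠ 0) (haa : a ≠ a⁻¹) (f : R n) (hf : WInv f.coeff)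
    (i0 : Fin n) (h : (XP i0 - CC a) ∣ f) :
    ((∏ i, XP i) * (∏ i, tf (a + a⁻¹) i)) ∣ f := by
  have ha' : a⁻¹ ≠ 0 := inv_ne_zero ha
  have hall := fun i => dvd_all_of_dvd_one i0 a ha f hf h i
  have hval : ∀ b : Bool, (if b then a else a⁻¹) ≠ 0 := by intro b; cases b <;> simpa
  have hmain := prod_dvd_of_forall_dvd (Finset.univ : Finset (Fin n × Bool))
      (fun ib => XP ib.1 - CC (if ib.2 then a else a⁻¹)) f
      (fun ib _ g h' => primish ib.1 _ (hval ib.2) g h')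
      (fun ib hib0 jb hjb0 hne => by
        obtain ⟨i1, b1⟩ := ib
        obtain ⟨j1, b2⟩ := jb
        rcases eq_or_ne i1 j1 with heq | hne1
        · have hb : b1 ≠ b2 := by
            intro hb2; exact hne (Prod.ext heq hb2)
          refine factor_not_dvd _ _ _ _ (hval b1) (hval b2) (Or.inr ?_)
          cases b1 <;> cases b2 <;> simp only [if_true, if_false, Bool.ite_eq_true_distrib] <;>
            first
              | exact absurd rfl hb
              | exact haa
              | exact fun hh => haa hh.symm
        · exact factor_not_dvd _ _ _ _ (hval b1) (hval b2) (Or.inl hne1))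
      (fun ib _ => by
        obtain ⟨i1, b1⟩ := ib
        cases b1
        · simpa using (hall i1).2
        · simpa using (hall i1).1)
  rw [show (∏ ib ∈ (Finset.univ : Finset (Fin n × Bool)), (XP ib.1 - CC (if ib.2 then a else a⁻¹)))
      = (∏ i, XP i) * (∏ i, tf (a + a⁻¹) i) from ?_] at hmain
  · exact hmain
  · rw [Fintype.prod_prod_type, ← Finset.prod_mul_distrib]
    refine Finset.prod_congr rfl fun i _ => ?_
    rw [show (∏ b : Bool, (XP i - CC (if b then a else a⁻¹)))
        = (XP i - CC a) * (XP i - CC a⁻¹) from by rw [Fintype.prod_bool]; simp]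
    exact factor_pair i a ha

/-! ### coefficient bounds -/

theorem tf_mul_apply (c : ℂ) (j : Fin n) (P : R n) (β : Fin n → ℤ) :
    (tf c j * P).coeff β = P.coeff (-(ee j) + β) + P.coeff (ee j + β) - c * P.coeff β := by
  rw [tf, sub_mul, add_mul]
  rw [show (XP j : R n) = AddMonoidAlgebra.single (ee j) 1 from rfl,
    show (XN j : R n) = AddMonoidAlgebra.single (-(ee j)) 1 from rfl,
    show (CC c : R n) = AddMonoidAlgebra.single 0 c from rfl]
  rw [AddMonoidAlgebra.coeff_sub, AddMonoidAlgebra.coeff_add, Finsupp.sub_apply, Finsupp.add_apply]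
  rw [AddMonoidAlgebra.coeff_single_mul_apply, AddMonoidAlgebra.coeff_single_mul_apply,
    AddMonoidAlgebra.coeff_single_mul_apply]
  simp only [one_mul, neg_neg, neg_zero, zero_add]

theorem sum_le_wtZ (α : Fin n → ℤ) : (∑ i, α i) ≤ (wtZ α : ℤ) := by
  rw [wtZ, Nat.cast_sum]
  exact Finset.sum_le_sum fun i _ => Int.le_natAbs

theorem bound_lemma (g : R n) (c : ℂ) (S : Finset (Fin n)) :
    ∀ β : Fin n → ℤ, ((∏ i ∈ S, tf c i) * g).coeff β ≠ 0 →
      ∃ α ∈ g.coeff.support, ∀ i, β i - (if i ∈ S then 1 else 0) ≤ α i := by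
  induction S using Finset.induction_on with
  | empty =>
    intro β hβ
    rw [Finset.prod_empty, one_mul] at hβ
    refine ⟨β, Finsupp.mem_support_iff.mpr hβ, fun i => by simp⟩
  | @insert j S hj ih =>
    intro β hβ
    rw [Finset.prod_insert hj, mul_assoc, tf_mul_apply] at hβ
    set P := (∏ i ∈ S, tf c i) * g with hP
    have h3 : P.coeff (-(ee j) + β) ≠ 0 ∨ P.coeff (ee j + β) ≠ 0 ∨ P.coeff β ≠ 0 := by
      by_contra hc
      push_neg at hc
      obtain ⟨h1, h2, h3⟩ := hc
      rw [h1, h2, h3] at hβ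
      simp at hβ
    have hins : ∀ i : Fin n, i ≠ j → ((if i ∈ insert j S then (1:ℤ) else 0)
        = (if i ∈ S then 1 else 0)) := by
      intro i hij
      simp [Finset.mem_insert, hij]
    have hjS : (if j ∈ S then (1:ℤ) else 0) = 0 := by simp [hj]
    have hjins : (if j ∈ insert j S then (1:ℤ) else 0) = 1 := by simp
    rcases h3 with h | h | h
    · obtain ⟨α, hα, hb⟩ := ih _ h
      refine ⟨α, hα, fun i => ?_⟩
      rcases eq_or_ne i j with rfl | hij
      · have := hb i; rw [hjS] at this; rw [hjins]
        simp only [Pi.add_apply, Pi.neg_apply] at this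
        have hee : ee i i = 1 := by simp [ee]
        rw [hee] at this
        omega
      · have := hb i; rw [hins i hij]
        have hee : ee j i = 0 := ee_apply_ne i j (Ne.symm hij)
        simp only [Pi.add_apply, Pi.neg_apply, hee, neg_zero, zero_add] at this
        exact this
    · obtain ⟨α, hα, hb⟩ := ih _ h
      refine ⟨α, hα, fun i => ?_⟩
      rcases eq_or_ne i j with rfl | hij
      · have := hb i; rw [hjS] at this; rw [hjins]
        simp only [Pi.add_apply] at this
        have hee : ee i i = 1 := by simp [ee]
        rw [hee] at this
        omega
      · have := hb i; rw [hins i hij]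
        have hee : ee j i = 0 := ee_apply_ne i j (Ne.symm hij)
        simp only [Pi.add_apply, hee, zero_add] at this
        exact this
    · obtain ⟨α, hα, hb⟩ := ih _ h
      refine ⟨α, hα, fun i => ?_⟩
      rcases eq_or_ne i j with rfl | hij
      · have := hb i; rw [hjS] at this; rw [hjins]; omega
      · have := hb i; rw [hins i hij]; exact this

theorem claim_lemma (g : R n) (c : ℂ) (D : ℕ) (hg : ∀ α ∈ g.coeff.support, wtZ α ≤ D)
    (lam : Fin n → ℤ) (hpos : ∀ i, 0 ≤ lam i) (hwt : (∑ i, lam i) = (D : ℤ)) :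
    ∀ S : Finset (Fin n),
      ((∏ i ∈ S, tf c i) * g).coeff (fun i => lam i + (if i ∈ S then 1 else 0)) = g.coeff lam := by
  intro S
  induction S using Finset.induction_on with
  | empty =>
    rw [Finset.prod_empty, one_mul]
    congr 1
    funext i
    simp
  | @insert j S hj ih =>
    rw [Finset.prod_insert hj, mul_assoc, tf_mul_apply]
    set P := (∏ i ∈ S, tf c i) * g with hP
    have hjins : (if j ∈ insert j S then (1:ℤ) else 0) = 1 := by simp
    have hjS : (if j ∈ S then (1:ℤ) else 0) = 0 := by simp [hj]
    have hins : ∀ i : Fin n, i ≠ j →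
        ((if i ∈ insert j S then (1:ℤ) else 0) = (if i ∈ S then 1 else 0)) := by
      intro i hij; simp [Finset.mem_insert, hij]
    have heej : ee j j = 1 := by simp [ee]
    have hT1 : (-(ee j) + (fun i => lam i + (if i ∈ insert j S then (1:ℤ) else 0)))
        = (fun i => lam i + (if i ∈ S then (1:ℤ) else 0)) := by
      funext i
      rcases eq_or_ne i j with rfl | hij
      · simp only [Pi.add_apply, Pi.neg_apply, heej, hjins, hjS]; omega
      · have h1 : ee j i = 0 := ee_apply_ne i j (Ne.symm hij)
        simp only [Pi.add_apply, Pi.neg_apply, h1, neg_zero, zero_add, hins i hij]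
    have hbig : ∀ (γ : Fin n → ℤ), (∀ i, lam i ≤ γ i - (if i ∈ S then (1:ℤ) else 0)) →
        (∃ i0, lam i0 + 1 ≤ γ i0 - (if i0 ∈ S then (1:ℤ) else 0)) → P.coeff γ = 0 := by
      intro γ h1 h2
      by_contra hne
      obtain ⟨α, hα, hb⟩ := bound_lemma g c S γ hne
      obtain ⟨i0, hi0⟩ := h2
      have hsum : (∑ i, lam i) + 1 ≤ ∑ i, α i := by
        have h5 : ∀ i, lam i ≤ α i := fun i => le_trans (h1 i) (hb i)
        have h6 : lam i0 + 1 ≤ α i0 := le_trans hi0 (hb i0)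
        calc (∑ i, lam i) + 1 = ∑ i, (lam i + if i = i0 then 1 else 0) := by
              rw [Finset.sum_add_distrib]
              simp
          _ ≤ ∑ i, α i := by
              refine Finset.sum_le_sum fun i _ => ?_
              rcases eq_or_ne i i0 with rfl | hii
              · simpa using h6
              · simp [hii, h5 i]
      have hwtα := hg α hα
      have := sum_le_wtZ α
      omega
    have hT2 : P.coeff (ee j + (fun i => lam i + (if i ∈ insert j S then (1:ℤ) else 0))) = 0 := by
      refine hbig _ (fun i => ?_) ⟨j, ?_⟩
      · rcases eq_or_ne i j with rfl | hij
        · simp only [Pi.add_apply, heej, hjins, hjS]; omega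
        · have h1 : ee j i = 0 := ee_apply_ne i j (Ne.symm hij)
          simp only [Pi.add_apply, h1, zero_add, hins i hij]; omega
      · simp only [Pi.add_apply, heej, hjins, hjS]; omega
    have hT3 : P.coeff (fun i => lam i + (if i ∈ insert j S then (1:ℤ) else 0)) = 0 := by
      refine hbig _ (fun i => ?_) ⟨j, ?_⟩
      · rcases eq_or_ne i j with rfl | hij
        · simp only [hjins, hjS]; omega
        · simp only [hins i hij]; omega
      · simp only [hjins, hjS]; omega
    rw [hT1, ih, hT2, hT3]
    ring

/-! ### restriction to m variables -/

section Subst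

variable {m : ℕ}

def rst (α : Fin (m+1) → ℤ) : Fin m → ℤ := fun j => α j.castSucc

theorem rst_add (α β : Fin (m+1) → ℤ) : rst (α + β) = rst α + rst β := rfl

def ext0 (β : Fin m → ℤ) : Fin (m+1) → ℤ := Fin.snoc β 0

theorem ext0_last (β : Fin m → ℤ) : ext0 β (Fin.last m) = 0 := by
  rw [ext0, Fin.snoc_last]

theorem ext0_castSucc (β : Fin m → ℤ) (j : Fin m) : ext0 β j.castSucc = β j := by
  rw [ext0, Fin.snoc_castSucc]

theorem ext0_zero : ext0 (0 : Fin m → ℤ) = 0 := by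
  funext i
  induction i using Fin.lastCases with
  | last => rw [ext0_last]; rfl
  | cast j => rw [ext0_castSucc]; rfl

theorem ext0_add (β γ : Fin m → ℤ) : ext0 (β + γ) = ext0 β + ext0 γ := by
  funext i
  induction i using Fin.lastCases with
  | last => rw [Pi.add_apply, ext0_last, ext0_last, ext0_last]; rfl
  | cast j => rw [Pi.add_apply, ext0_castSucc, ext0_castSucc, ext0_castSucc]; rfl

def substHom (a : ℂ) (ha : a ≠ 0) : Multiplicative (Fin (m+1) → ℤ) →* R m where
  toFun α := AddMonoidAlgebra.single (rst (Multiplicative.toAdd α))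
      (a ^ (Multiplicative.toAdd α) (Fin.last m))
  map_one' := by
    show AddMonoidAlgebra.single (rst (0 : Fin (m+1) → ℤ)) (a ^ ((0 : Fin (m+1) → ℤ) (Fin.last m))) = 1
    rw [show ((0 : Fin (m+1) → ℤ) (Fin.last m)) = 0 from rfl, zpow_zero]
    rfl
  map_mul' α β := by
    show AddMonoidAlgebra.single (rst (Multiplicative.toAdd α + Multiplicative.toAdd β))
      (a ^ ((Multiplicative.toAdd α + Multiplicative.toAdd β) (Fin.last m))) = _
    rw [show ((Multiplicative.toAdd α + Multiplicative.toAdd β) (Fin.last m))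
      = (Multiplicative.toAdd α) (Fin.last m) + (Multiplicative.toAdd β) (Fin.last m) from rfl]
    rw [rst_add, zpow_add₀ ha, AddMonoidAlgebra.single_mul_single]

def substL (a : ℂ) (ha : a ≠ 0) : R (m+1) →ₐ[ℂ] R m :=
  AddMonoidAlgebra.lift ℂ (R m) (Fin (m+1) → ℤ) (substHom a ha)

theorem substL_single (a : ℂ) (ha : a ≠ 0) (α : Fin (m+1) → ℤ) (r : ℂ) :
    substL a ha (AddMonoidAlgebra.single α r)
      = AddMonoidAlgebra.single (rst α) (r * a ^ α (Fin.last m)) := by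
  rw [substL, AddMonoidAlgebra.lift_single]
  rw [show ((substHom a ha) (Multiplicative.ofAdd α))
    = AddMonoidAlgebra.single (rst α) (a ^ α (Fin.last m)) from rfl]
  rw [AddMonoidAlgebra.smul_single']

def upHom : Multiplicative (Fin m → ℤ) →* R (m+1) where
  toFun β := AddMonoidAlgebra.single (ext0 (Multiplicative.toAdd β)) 1
  map_one' := by
    show AddMonoidAlgebra.single (ext0 (0 : Fin m → ℤ)) (1:ℂ) = 1
    rw [ext0_zero]; rfl
  map_mul' β γ := by
    have h := AddMonoidAlgebra.single_mul_single (ext0 (Multiplicative.toAdd β))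
      (ext0 (Multiplicative.toAdd γ)) (1:ℂ) 1
    rw [one_mul, ← ext0_add] at h
    exact h.symm

def upL : R m →ₐ[ℂ] R (m+1) :=
  AddMonoidAlgebra.lift ℂ (R (m+1)) (Fin m → ℤ) upHom

theorem upL_single (β : Fin m → ℤ) (r : ℂ) :
    upL (AddMonoidAlgebra.single β r) = AddMonoidAlgebra.single (ext0 β) r := by
  rw [upL, AddMonoidAlgebra.lift_single]
  rw [show (upHom (Multiplicative.ofAdd β)) = AddMonoidAlgebra.single (ext0 β) (1:ℂ) from rfl]
  rw [AddMonoidAlgebra.smul_single', mul_one]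

theorem sigma_last_eq (a : ℂ) (ha : a ≠ 0) :
    (sigmaL (Fin.last m) a ha) = (upL.comp (substL a ha) : R (m+1) →ₐ[ℂ] R (m+1)) := by
  refine AddMonoidAlgebra.algHom_ext ?_ (Subsingleton.elim _ _)
  intro α
  rw [AlgHom.comp_apply]
  rw [show (AddMonoidAlgebra.single α (1:ℂ) : R (m+1)) = AddMonoidAlgebra.single α 1 from rfl]
  rw [sigmaL_single, substL_single, upL_single]
  have h : ext0 (rst α) = zeroAt (Fin.last m) α := by
    funext i
    induction i using Fin.lastCases with
    | last => rw [ext0_last, zeroAt, Function.update_self]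
    | cast j =>
      rw [ext0_castSucc, zeroAt, Function.update_of_ne (Fin.castSucc_lt_last j).ne, rst]
  rw [h]

theorem snoc_ne_zero (a : ℂ) (ha : a ≠ 0) (y : Fin m → ℂ) (hy : ∀ j, y j ≠ 0) :
    ∀ i, (Fin.snoc y a : Fin (m+1) → ℂ) i ≠ 0 := by
  intro i
  induction i using Fin.lastCases with
  | last => rw [Fin.snoc_last]; exact ha
  | cast j => rw [Fin.snoc_castSucc]; exact hy j

theorem evA_comp_substL (a : ℂ) (ha : a ≠ 0) (y : Fin m → ℂ) (hy : ∀ j, y j ≠ 0)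
    (f : R (m+1)) :
    evA y hy (substL a ha f) = evA (Fin.snoc y a) (snoc_ne_zero a ha y hy) f := by
  have key := AddMonoidAlgebra.algHom_ext
    (φ₁ := (evA y hy).comp (substL a ha))
    (φ₂ := evA (Fin.snoc y a) (snoc_ne_zero a ha y hy)) ?_ (Subsingleton.elim _ _)
  · exact DFunLike.congr_fun key f
  · intro α
    rw [AlgHom.comp_apply, substL_single]
    rw [show (AddMonoidAlgebra.single (rst α) ((1:ℂ) * a ^ α (Fin.last m)) : R m)
      = AddMonoidAlgebra.single (rst α) (1 * a ^ α (Fin.last m)) from rfl]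
    rw [show (AddMonoidAlgebra.single α (1:ℂ) : R (m+1)) = AddMonoidAlgebra.single α 1 from rfl]
    rw [evA_single, evA_single]
    rw [Fin.prod_univ_castSucc]
    simp only [Fin.snoc_castSucc, Fin.snoc_last, rst]
    ring

def permExt (π' : Equiv.Perm (Fin m)) : Equiv.Perm (Fin (m+1)) where
  toFun := Fin.snoc (fun j => (π' j).castSucc) (Fin.last m)
  invFun := Fin.snoc (fun j => (π'.symm j).castSucc) (Fin.last m)
  left_inv := by
    intro i
    induction i using Fin.lastCases with
    | last => simp [Fin.snoc_last]
    | cast j => simp [Fin.snoc_castSucc]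
  right_inv := by
    intro i
    induction i using Fin.lastCases with
    | last => simp [Fin.snoc_last]
    | cast j => simp [Fin.snoc_castSucc]

theorem permExt_symm_coe (π' : Equiv.Perm (Fin m)) :
    ((permExt π').symm : Fin (m+1) → Fin (m+1))
      = (Fin.snoc (fun j => ((π'.symm j).castSucc : Fin (m+1))) (Fin.last m) : Fin (m+1) → Fin (m+1)) := rfl

theorem permExt_symm_last (π' : Equiv.Perm (Fin m)) :
    (permExt π').symm (Fin.last m) = Fin.last m := by
  rw [show (permExt π').symm (Fin.last m)
    = (Fin.snoc (fun j => ((π'.symm j).castSucc : Fin (m+1))) (Fin.last m) : Fin (m+1) → Fin (m+1)) (Fin.last m)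
    from congrFun (permExt_symm_coe π') _, Fin.snoc_last]

theorem permExt_symm_castSucc (π' : Equiv.Perm (Fin m)) (j : Fin m) :
    (permExt π').symm j.castSucc = (π'.symm j).castSucc := by
  rw [show (permExt π').symm j.castSucc
    = (Fin.snoc (fun j => ((π'.symm j).castSucc : Fin (m+1))) (Fin.last m) : Fin (m+1) → Fin (m+1)) j.castSucc
    from congrFun (permExt_symm_coe π') _, Fin.snoc_castSucc]

theorem substL_comp_Aw (a : ℂ) (ha : a ≠ 0) (ε' : Fin m → Bool) (π' : Equiv.Perm (Fin m))
    (f : R (m+1)) :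
    substL a ha (Aw (Fin.snoc ε' false) (permExt π') f) = Aw ε' π' (substL a ha f) := by
  have key := AddMonoidAlgebra.algHom_ext
    (φ₁ := (substL a ha).comp (Aw (Fin.snoc ε' false) (permExt π')).toAlgHom)
    (φ₂ := ((Aw ε' π').toAlgHom.comp (substL a ha))) ?_ (Subsingleton.elim _ _)
  · exact DFunLike.congr_fun key f
  · intro α
    rw [AlgHom.comp_apply, AlgHom.comp_apply]
    simp only [AlgEquiv.toAlgHom_eq_coe, AlgEquiv.coe_algHom]
    rw [show (AddMonoidAlgebra.single α (1:ℂ) : R (m+1)) = AddMonoidAlgebra.single α 1 from rfl]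
    rw [Aw_single, show (AddMonoidAlgebra.single (actZ (Fin.snoc ε' false) (permExt π') α) (1:ℂ) : R (m+1))
      = AddMonoidAlgebra.single (actZ (Fin.snoc ε' false) (permExt π') α) 1 from rfl]
    rw [substL_single, substL_single]
    rw [show (AddMonoidAlgebra.single (rst α) ((1:ℂ) * a ^ α (Fin.last m)) : R m)
      = AddMonoidAlgebra.single (rst α) (1 * a ^ α (Fin.last m)) from rfl]
    rw [Aw_single]
    have hlast : (actZ (Fin.snoc ε' false) (permExt π') α) (Fin.last m) = α (Fin.last m) := by
      rw [actZ, permExt_symm_last]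
      simp [Fin.snoc_last]
    have hrest : rst (actZ (Fin.snoc ε' false) (permExt π') α) = actZ ε' π' (rst α) := by
      funext j
      rw [rst, actZ, actZ, permExt_symm_castSucc]
      simp [Fin.snoc_castSucc, rst]
    rw [hlast, hrest]

theorem winv_substL (a : ℂ) (ha : a ≠ 0) (f : R (m+1)) (hf : WInv f.coeff) :
    WInv (substL a ha f).coeff := by
  rw [winv_iff]
  intro ε' π'
  rw [← substL_comp_Aw a ha ε' π' f, (winv_iff f).mp hf]

theorem substL_support (a : ℂ) (ha : a ≠ 0) (f : R (m+1)) (β : Fin m → ℤ)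
    (hβ : β ∈ (substL a ha f).coeff.support) :
    ∃ α ∈ f.coeff.support, β = rst α := by
  have hrw : substL a ha f
      = f.coeff.sum (fun α r => AddMonoidAlgebra.single (rst α) (r * a ^ α (Fin.last m))) := by
    rw [substL, AddMonoidAlgebra.lift_apply]
    refine Finsupp.sum_congr fun α r => ?_
    rw [show ((substHom a ha) (Multiplicative.ofAdd α))
      = AddMonoidAlgebra.single (rst α) (a ^ α (Fin.last m)) from rfl]
    rw [AddMonoidAlgebra.smul_single']
  rw [hrw, AddMonoidAlgebra.coeff_finsuppSum] at hβ
  have h2 := Finsupp.support_sum hβ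
  rw [Finset.mem_biUnion] at h2
  obtain ⟨α, hα, hβ2⟩ := h2
  refine ⟨α, hα, ?_⟩
  have h3 := Finsupp.support_single_subset hβ2
  rw [Finset.mem_singleton] at h3
  exact h3

end Subst

/-! ### evaluation of the factors -/

theorem evalL_single (β : Fin n → ℤ) (r : ℂ) (x : Fin n → ℂ) :
    evalL (Finsupp.single β r) x = r * ∏ i, x i ^ β i := by
  rw [evalL, Finsupp.sum_single_index]
  rw [zero_mul]

theorem wtZ_act (ε : Fin n → Bool) (π : Equiv.Perm (Fin n)) (α : Fin n → ℤ) :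
    wtZ (actZ ε π α) = wtZ α := by
  unfold wtZ actZ
  have h : ∀ j, (((if ε j then (-1:ℤ) else 1) * α (π.symm j)).natAbs) = (α (π.symm j)).natAbs := by
    intro j; split <;> simp [Int.natAbs_mul]
  simp only [h]
  exact Equiv.sum_comp π.symm (fun j => (α j).natAbs)

theorem ee_self (i : Fin n) : ee i i = 1 := by simp [ee]

theorem evA_XP (x : Fin n → ℂ) (hx : ∀ i, x i ≠ 0) (i : Fin n) :
    evA x hx (XP i) = x i := by
  rw [show (XP i : R n) = AddMonoidAlgebra.single (ee i) 1 from rfl, evA_single, one_mul]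
  rw [Finset.prod_eq_single_of_mem i (Finset.mem_univ i)]
  · rw [ee_self, zpow_one]
  · intro b _ hb
    rw [ee_apply_ne b i (Ne.symm hb), zpow_zero]

theorem evA_XN (x : Fin n → ℂ) (hx : ∀ i, x i ≠ 0) (i : Fin n) :
    evA x hx (XN i) = (x i)⁻¹ := by
  rw [show (XN i : R n) = AddMonoidAlgebra.single (-(ee i)) 1 from rfl, evA_single, one_mul]
  rw [Finset.prod_eq_single_of_mem i (Finset.mem_univ i)]
  · rw [Pi.neg_apply, ee_self, zpow_neg, zpow_one]
  · intro b _ hb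
    rw [Pi.neg_apply, ee_apply_ne b i (Ne.symm hb), neg_zero, zpow_zero]

theorem evA_CC (x : Fin n → ℂ) (hx : ∀ i, x i ≠ 0) (v : ℂ) :
    evA x hx (CC v) = v := by
  rw [show (CC v : R n) = AddMonoidAlgebra.single 0 v from rfl, evA_single]
  simp

theorem evA_tf (x : Fin n → ℂ) (hx : ∀ i, x i ≠ 0) (c : ℂ) (i : Fin n) :
    evA x hx (tf c i) = x i + (x i)⁻¹ - c := by
  rw [tf, map_sub, map_add, evA_XP, evA_XN, evA_CC]

theorem tf_ne_zero (c : ℂ) (i : Fin n) : tf c i ≠ 0 := by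
  intro h
  have h2 := Finsupp.ext_iff.mp (congrArg AddMonoidAlgebra.coeff h) (ee i)
  rw [tf, AddMonoidAlgebra.coeff_sub, AddMonoidAlgebra.coeff_add, Finsupp.sub_apply, Finsupp.add_apply] at h2
  have e1 : (XP i : R n).coeff (ee i) = 1 := Finsupp.single_eq_same
  have e2 : (XN i : R n).coeff (ee i) = 0 := by
    refine Finsupp.single_eq_of_ne ?_
    intro hc
    have := congrFun hc i
    rw [Pi.neg_apply, ee_self] at this
    omega
  have e3 : (CC c : R n).coeff (ee i) = 0 := by
    refine Finsupp.single_eq_of_ne ?_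
    intro hc
    have := congrFun hc i
    rw [ee_self] at this
    simp at this
  rw [e1, e2, e3] at h2
  simp at h2

theorem prod_tf_ne_zero (c : ℂ) : (∏ i, tf c i : R n) ≠ 0 :=
  Finset.prod_ne_zero_iff.mpr fun i _ => tf_ne_zero c i

/-! ### the vanishing theorem -/

theorem wtZ_cast_sum (α : Fin n → ℤ) (h : ∀ i, 0 ≤ α i) : ((wtZ α : ℤ)) = ∑ i, α i := by
  rw [wtZ, Nat.cast_sum]
  refine Finset.sum_congr rfl fun i _ => Int.natAbs_of_nonneg (h i)

theorem sum_const_one_fin (k : ℕ) : (∑ _i : Fin k, (1:ℤ)) = (k:ℤ) := by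
  simp

set_option maxHeartbeats 1000000

theorem vanishR (q : ℂ) (hq0 : q ≠ 0) (hq1 : ‖q‖ < 1) :
    ∀ n : ℕ, ∀ d : ℕ, ∀ τ : Fin n → ℂ, TauChain τ →
      ∀ f : R n, WInv f.coeff → (∀ α ∈ f.coeff.support, wtZ α ≤ d) →
      (∀ μ : Fin n → ℤ, IsPartition μ → wtZ μ ≤ d →
        evalL f.coeff (fun i => q ^ μ i * τ i) = 0) → f = 0 := by
  intro n
  induction n with
  | zero =>
    intro d τ hτ f hf hsupp hv
    have h0 : IsPartition (0 : Fin 0 → ℤ) := ⟨fun i => i.elim0, fun i => i.elim0⟩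
    have hwt0 : wtZ (0 : Fin 0 → ℤ) ≤ d := by
      rw [wtZ]; simp
    have he := hv 0 h0 hwt0
    rw [Finsupp.unique_single f.coeff, evalL_single] at he
    simp only [Finset.univ_eq_empty, Finset.prod_empty, mul_one] at he
    rw [← AddMonoidAlgebra.coeff_eq_zero, Finsupp.unique_single f.coeff]
    exact Finsupp.single_eq_zero.mpr he
  | succ m ihm =>
    intro d
    induction d using Nat.strong_induction_on with
    | _ d ihd =>
    intro τ hτ f hf hsupp hv
    obtain ⟨hpos, hmono, hlt1⟩ := hτ
    have hτ0 : ∀ i, τ i ≠ 0 := fun i => by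
      intro h
      have := hpos i
      rw [h] at this
      simp at this
    set a := τ (Fin.last m) with ha_def
    have ha : a ≠ 0 := hτ0 _
    have hapos : 0 < ‖a‖ := hpos _
    have halt1 : ‖a‖ < 1 := hlt1 _
    -- Step A : substitution of the last variable vanishes identically
    have hsub0 : substL a ha f = 0 := by
      refine ihm d (fun j => τ j.castSucc)
        ⟨fun j => hpos _, fun j k hjk => hmono (Fin.castSucc_lt_castSucc_iff.mpr hjk),
          fun j => hlt1 _⟩
        _ (winv_substL a ha f hf) ?_ ?_
      · intro β hβ
        obtain ⟨α, hα, rfl⟩ := substL_support a ha f β hβ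
        refine le_trans ?_ (hsupp α hα)
        rw [wtZ, wtZ, Fin.sum_univ_castSucc]
        exact Nat.le_add_right _ _
      · intro μ' hμ' hwμ'
        have hy : ∀ j : Fin m, (q ^ μ' j * τ j.castSucc) ≠ 0 :=
          fun j => mul_ne_zero (zpow_ne_zero _ hq0) (hτ0 _)
        rw [evalL_eq_evA _ hy, evA_comp_substL, ← evalL_eq_evA]
        have hxeq : (Fin.snoc (fun j => q ^ μ' j * τ j.castSucc) a : Fin (m+1) → ℂ)
            = fun i => q ^ (Fin.snoc μ' 0 : Fin (m+1) → ℤ) i * τ i := by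
          funext i
          induction i using Fin.lastCases with
          | last =>
            rw [Fin.snoc_last, Fin.snoc_last, zpow_zero, one_mul]
          | cast j =>
            rw [Fin.snoc_castSucc, Fin.snoc_castSucc]
        rw [hxeq]
        refine hv _ ?_ ?_
        · constructor
          · intro i j hij
            induction j using Fin.lastCases with
            | last =>
              rw [Fin.snoc_last]
              induction i using Fin.lastCases with
              | last => rw [Fin.snoc_last]
              | cast i' => rw [Fin.snoc_castSucc]; exact hμ'.2 i'
            | cast j' =>
              induction i using Fin.lastCases with
              | last =>
                exfalso
                exact absurd (le_antisymm (Fin.le_last _) hij)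
                  (Fin.castSucc_lt_last j').ne
              | cast i' =>
                rw [Fin.snoc_castSucc, Fin.snoc_castSucc]
                exact hμ'.1 i' j' (Fin.castSucc_le_castSucc_iff.mp hij)
          · intro i
            induction i using Fin.lastCases with
            | last => rw [Fin.snoc_last]
            | cast i' => rw [Fin.snoc_castSucc]; exact hμ'.2 i'
        · rw [wtZ, Fin.sum_univ_castSucc]
          simp only [Fin.snoc_castSucc, Fin.snoc_last, Int.natAbs_zero, add_zero]
          exact hwμ'
    -- Step B : divisibility
    have hσ0 : sigmaL (Fin.last m) a ha f = 0 := by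
      have := congrArg (fun φ : R (m+1) →ₐ[ℂ] R (m+1) => φ f) (sigma_last_eq a ha)
      simp only [AlgHom.comp_apply] at this
      rw [this, hsub0, map_zero]
    have hdvd := dvd_of_sigmaL_eq_zero _ a ha f hσ0
    have haa : a ≠ a⁻¹ := by
      intro h
      have h2 : ‖a‖ * (‖a‖)⁻¹ = 1 := mul_inv_cancel₀ (ne_of_gt hapos)
      have h3 : ‖a⁻¹‖ = (‖a‖)⁻¹ := norm_inv _
      rw [← h] at h3
      nlinarith [h3, halt1, hapos, h2]
    obtain ⟨g, hfg⟩ := prod_factor_dvd a ha haa f hf (Fin.last m) hdvd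
    set c := a + a⁻¹ with hc_def
    set h' := (∏ i, tf c i : R (m+1)) with hh'def
    have hh'0 : h' ≠ 0 := prod_tf_ne_zero c
    set g' := (∏ i, XP i : R (m+1)) * g with hg'def
    have hf_eq : f = h' * g' := by rw [hfg, hg'def, hh'def]; ring
    have hwg' : WInv g'.coeff := by
      rw [winv_iff]
      intro ε π
      have h1 := (winv_iff f).mp hf ε π
      rw [hf_eq, map_mul, Aw_prod_tf] at h1
      rw [← hh'def] at h1
      exact mul_left_cancel₀ hh'0 h1
    by_cases hg'0 : g' = 0
    · rw [hf_eq, hg'0, mul_zero]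
    have hsupne : g'.coeff.support.Nonempty := Finsupp.support_nonempty_iff.mpr (fun h => hg'0 (AddMonoidAlgebra.coeff_eq_zero.mp h))
    obtain ⟨α0, hα0mem, hα0⟩ := Finset.exists_mem_eq_sup g'.coeff.support hsupne wtZ
    set lam := fun i => |α0 i| with hlam
    have hlam_act : actZ (fun i => decide (α0 i < 0)) (Equiv.refl _) α0 = lam := by
      funext i
      rw [actZ, hlam]
      simp only [Equiv.refl_symm, Equiv.refl_apply, decide_eq_true_eq]
      split
      · rw [abs_of_neg (by assumption)]; ring
      · rw [abs_of_nonneg (le_of_not_gt (by assumption))]; ring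
    have hg'lam : g'.coeff lam ≠ 0 := by
      rw [← hlam_act, hwg' _ _ _]
      exact Finsupp.mem_support_iff.mp hα0mem
    have hlampos : ∀ i, 0 ≤ lam i := fun i => abs_nonneg _
    have hwtabs : wtZ lam = wtZ α0 := by
      rw [wtZ, wtZ]
      refine Finset.sum_congr rfl fun i _ => ?_
      simp only [hlam]
      rw [Int.natAbs_abs]
    have hwtlam : (∑ i, lam i) = ((wtZ α0):ℤ) := by
      rw [← hwtabs, wtZ_cast_sum lam (fun i => by simp only [hlam]; exact abs_nonneg _)]
    have hgD : ∀ β ∈ g'.coeff.support, wtZ β ≤ wtZ α0 := fun β hβ => hα0 ▸ Finset.le_sup hβ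
    have hkey := claim_lemma g' c (wtZ α0) hgD lam hlampos hwtlam Finset.univ
    have hexp_eq : (fun i => lam i + (if i ∈ (Finset.univ : Finset (Fin (m+1))) then (1:ℤ) else 0))
        = fun i => lam i + 1 := by
      funext i; simp
    rw [hexp_eq] at hkey
    have hmemf : (fun i => lam i + 1) ∈ f.coeff.support := by
      rw [hf_eq]
      refine Finsupp.mem_support_iff.mpr ?_
      rw [show (h' * g' : R (m+1)) = (∏ i ∈ Finset.univ, tf c i) * g' from rfl, hkey]
      exact hg'lam
    have hDd := hsupp _ hmemf
    have hwt1 : (wtZ (fun i => lam i + 1) : ℤ) = ((wtZ α0):ℤ) + (m+1) := by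
      rw [wtZ_cast_sum _ (fun i => by have := hlampos i; omega)]
      rw [Finset.sum_add_distrib, sum_const_one_fin, hwtlam]
      push_cast
      ring
    have hDle : wtZ α0 + (m+1) ≤ d := by
      have h5 : (wtZ (fun i => lam i + 1) : ℤ) ≤ (d : ℤ) := by exact_mod_cast hDd
      rw [hwt1] at h5
      exact_mod_cast h5
    -- recursion at degree d - (m+1) with τ replaced by q•τ
    have hchain' : TauChain (fun i => q * τ i) := by
      have hq0' : 0 < ‖q‖ := norm_pos_iff.mpr hq0
      refine ⟨fun i => ?_, fun i j hij => ?_, fun i => ?_⟩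
      · rw [norm_mul]; exact mul_pos hq0' (hpos i)
      · simp only [norm_mul]
        exact mul_lt_mul_of_pos_left (hmono hij) hq0'
      · rw [norm_mul]
        nlinarith [hq1, hlt1 i, hpos i, hq0']
    have hvan' : ∀ μ : Fin (m+1) → ℤ, IsPartition μ → wtZ μ ≤ d - (m+1) →
        evalL g'.coeff (fun i => q ^ μ i * (q * τ i)) = 0 := by
      intro μ hμ hwμ
      have hν_part : IsPartition (fun i => μ i + 1) :=
        ⟨fun i j hij => by have := hμ.1 i j hij; show μ j + 1 ≤ μ i + 1; omega,
         fun i => by have := hμ.2 i; show (0:ℤ) ≤ μ i + 1; omega⟩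
      have hwν : wtZ (fun i => μ i + 1) ≤ d := by
        have h6 : (wtZ (fun i => μ i + 1) : ℤ) = (wtZ μ : ℤ) + (m+1) := by
          rw [wtZ_cast_sum _ (fun i => by have := hμ.2 i; show (0:ℤ) ≤ μ i + 1; omega),
            Finset.sum_add_distrib, sum_const_one_fin, wtZ_cast_sum _ hμ.2]
          push_cast
          ring
        omega
      have hx : ∀ i, (q ^ (μ i + 1) * τ i) ≠ 0 :=
        fun i => mul_ne_zero (zpow_ne_zero _ hq0) (hτ0 i)
      have hv2 := hv (fun i => μ i + 1) hν_part hwν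
      rw [hf_eq, evalL_eq_evA _ hx, map_mul] at hv2
      have habsq : 0 < ‖q‖ := norm_pos_iff.mpr hq0
      have hfac : evA _ hx h' ≠ 0 := by
        rw [hh'def, map_prod]
        refine Finset.prod_ne_zero_iff.mpr fun i _ => ?_
        rw [evA_tf]
        show q ^ (μ i + 1) * τ i + (q ^ (μ i + 1) * τ i)⁻¹ - c ≠ 0
        set z := q ^ (μ i + 1) * τ i with hz_def
        have hz0 : z ≠ 0 := hx i
        have hzabs : ‖z‖ < ‖a‖ := by
          rw [hz_def, norm_mul, norm_zpow]
          have h8 : ‖q‖ ^ (μ i + 1) ≤ ‖q‖ ^ (1:ℤ) :=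
            zpow_le_zpow_right_of_le_one₀ habsq (le_of_lt hq1) (by have := hμ.2 i; omega)
          rw [zpow_one] at h8
          have h9 : ‖q‖ ^ (μ i + 1) * ‖τ i‖
              ≤ ‖q‖ * ‖τ i‖ :=
            mul_le_mul_of_nonneg_right h8 (le_of_lt (hpos i))
          have h10 : ‖q‖ * ‖τ i‖ < 1 * ‖τ i‖ :=
            mul_lt_mul_of_pos_right hq1 (hpos i)
          have h11 : ‖τ i‖ ≤ ‖a‖ :=
            hmono.monotone (Fin.le_last i)
          nlinarith
        have hz1 : ‖z‖ < 1 := lt_trans hzabs halt1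
        have hza : z ≠ a := by
          intro h
          rw [h] at hzabs
          exact lt_irrefl _ hzabs
        have hzai : z ≠ a⁻¹ := by
          intro h
          have h12 : ‖z‖ = (‖a‖)⁻¹ := by rw [h, norm_inv]
          have h13 : ‖a‖ * (‖a‖)⁻¹ = 1 := mul_inv_cancel₀ (ne_of_gt hapos)
          nlinarith [h12, h13, hz1, halt1, hapos]
        have hid : (z + z⁻¹ - (a + a⁻¹)) * z = (z - a) * (z - a⁻¹) := by
          field_simp
          ring
        rw [hc_def]
        intro h0
        rw [h0, zero_mul] at hid
        exact mul_ne_zero (sub_ne_zero.mpr hza) (sub_ne_zero.mpr hzai) hid.symm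
      have hg'ev : evA _ hx g' = 0 := by
        rcases mul_eq_zero.mp hv2 with h | h
        · exact absurd h hfac
        · exact h
      have hpt : (fun i => q ^ μ i * (q * τ i)) = fun i => q ^ (μ i + 1) * τ i := by
        funext i
        rw [zpow_add_one₀ hq0]
        ring
      rw [hpt, evalL_eq_evA _ hx]
      exact hg'ev
    have hg'supp : ∀ β ∈ g'.coeff.support, wtZ β ≤ d - (m+1) := by
      intro β hβ
      have := hgD β hβ
      omega
    have := ihd (d - (m+1)) (by omega) (fun i => q * τ i) hchain' g' hwg' hg'supp hvan'
    exact absurd this hg'0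

theorem vanish (q : ℂ) (hq0 : q ≠ 0) (hq1 : ‖q‖ < 1) :
    ∀ n : ℕ, ∀ d : ℕ, ∀ τ : Fin n → ℂ, TauChain τ →
      ∀ f : (Fin n → ℤ) →₀ ℂ, WInv f → (∀ α ∈ f.support, wtZ α ≤ d) →
      (∀ μ : Fin n → ℤ, IsPartition μ → wtZ μ ≤ d →
        evalL f (fun i => q ^ μ i * τ i) = 0) → f = 0 :=
  fun n d τ hτ f hf hs hv =>
    AddMonoidAlgebra.ofCoeff_eq_zero.mp (vanishR q hq0 hq1 n d τ hτ (AddMonoidAlgebra.ofCoeff f) hf hs hv)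

/-! ### sorting to a partition -/

def sortAbs (α : Fin n → ℤ) : Fin n → ℤ :=
  fun i => (fun k => |α k|) (Tuple.sort (fun k => |α k|) (Fin.rev i))

theorem sortAbs_partition (α : Fin n → ℤ) : IsPartition (sortAbs α) := by
  constructor
  · intro i j hij
    exact (Tuple.monotone_sort (fun k => |α k|)) (Fin.rev_le_rev.mpr hij)
  · intro i
    exact abs_nonneg _

theorem sortAbs_orbit (α : Fin n → ℤ) : ∃ ε π, actZ ε π (sortAbs α) = α := by
  refine ⟨fun j => decide (α j < 0), ((Tuple.sort (fun k => |α k|)).symm.trans Fin.revPerm).symm, ?_⟩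
  funext j
  rw [actZ, Equiv.symm_symm]
  rw [show ((Tuple.sort (fun k => |α k|)).symm.trans Fin.revPerm) j
    = Fin.rev ((Tuple.sort (fun k => |α k|)).symm j) from rfl]
  rw [sortAbs, Fin.rev_rev, Equiv.apply_symm_apply]
  simp only [decide_eq_true_eq]
  split
  · rw [abs_of_neg (by assumption)]; ring
  · rw [abs_of_nonneg (le_of_not_gt (by assumption))]; ring

theorem wtZ_sortAbs (α : Fin n → ℤ) : wtZ (sortAbs α) = wtZ α := by
  obtain ⟨ε, π, h⟩ := sortAbs_orbit α
  conv_rhs => rw [← h]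
  rw [wtZ_act]

theorem apply_sortAbs (c : (Fin n → ℤ) →₀ ℂ) (hc : WInv c) (α : Fin n → ℤ) :
    c (sortAbs α) = c α := by
  obtain ⟨ε, π, h⟩ := sortAbs_orbit α
  conv_rhs => rw [← h]
  rw [hc]

theorem sortAbs_invariant (ε : Fin n → Bool) (π : Equiv.Perm (Fin n)) (α : Fin n → ℤ) :
    sortAbs (actZ ε π α) = sortAbs α := by
  funext i
  have hβ' : ∀ k, |actZ ε π α k| = |α (π.symm k)| := by
    intro k
    rw [actZ]
    split <;> simp [abs_mul]
  have hβ : (fun k => |actZ ε π α k|) = (fun k => |α k|) ∘ π.symm := funext hβ'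
  have key2 := congrFun (Tuple.comp_perm_comp_sort_eq_comp_sort (σ := π.symm)
    (f := fun k => |α k|)) (Fin.rev i)
  simp only [Function.comp_apply] at key2
  show |actZ ε π α (Tuple.sort (fun k => |actZ ε π α k|) (Fin.rev i))|
    = |α (Tuple.sort (fun k => |α k|) (Fin.rev i))|
  have hsorteq : Tuple.sort (fun k => |actZ ε π α k|) = Tuple.sort ((fun k => |α k|) ∘ π.symm) := by
    rw [hβ]
  rw [hβ' (Tuple.sort (fun k => |actZ ε π α k|) (Fin.rev i)), hsorteq]
  exact key2

theorem sortAbs_of_partition (μ : Fin n → ℤ) (hμ : IsPartition μ) : sortAbs μ = μ := by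
  have hβ : (fun k => |μ k|) = μ := funext fun k => abs_of_nonneg (hμ.2 k)
  have hmono : Monotone (μ ∘ (Fin.revPerm : Equiv.Perm (Fin n))) := by
    intro k l hkl
    exact hμ.1 (Fin.rev l) (Fin.rev k) (Fin.rev_le_rev.mpr hkl)
  have key : μ ∘ (Fin.revPerm : Equiv.Perm (Fin n)) = μ ∘ Tuple.sort μ :=
    Tuple.comp_sort_eq_comp_iff_monotone.mpr hmono
  funext i
  show |μ (Tuple.sort (fun k => |μ k|) (Fin.rev i))| = μ i
  rw [hβ, abs_of_nonneg (hμ.2 _)]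
  have h2 := congrFun key (Fin.rev i)
  simp only [Function.comp_apply, Fin.revPerm_apply, Fin.rev_rev] at h2
  exact h2.symm

/-! ### the interpolation construction -/

def Tset (n d : ℕ) : Finset (Fin n → ℤ) :=
  (Finset.Icc (fun _ => -(d:ℤ)) (fun _ => (d:ℤ))).filter (fun α => wtZ α ≤ d)

theorem mem_Tset (n d : ℕ) (α : Fin n → ℤ) : α ∈ Tset n d ↔ wtZ α ≤ d := by
  rw [Tset, Finset.mem_filter]
  constructor
  · exact fun h => h.2
  · intro h
    refine ⟨Finset.mem_Icc.mpr ⟨?_, ?_⟩, h⟩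
    · intro i
      have h1 : (α i).natAbs ≤ wtZ α := Finset.single_le_sum (f := fun i => (α i).natAbs)
        (fun i _ => Nat.zero_le _) (Finset.mem_univ i)
      have h2 : |α i| ≤ (d:ℤ) := by
        rw [Int.abs_eq_natAbs]
        exact_mod_cast le_trans h1 h
      have := abs_le.mp h2
      exact this.1
    · intro i
      have h1 : (α i).natAbs ≤ wtZ α := Finset.single_le_sum (f := fun i => (α i).natAbs)
        (fun i _ => Nat.zero_le _) (Finset.mem_univ i)
      have h2 : |α i| ≤ (d:ℤ) := by
        rw [Int.abs_eq_natAbs]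
        exact_mod_cast le_trans h1 h
      have := abs_le.mp h2
      exact this.2

noncomputable def Lam (n d : ℕ) : Finset (Fin n → ℤ) :=
  @Finset.filter _ IsPartition (Classical.decPred _) (Tset n d)

theorem mem_Lam (n d : ℕ) (μ : Fin n → ℤ) :
    μ ∈ Lam n d ↔ IsPartition μ ∧ wtZ μ ≤ d := by
  rw [Lam, @Finset.mem_filter _ IsPartition (Classical.decPred _) (Tset n d) μ, mem_Tset]
  tauto

def NN (n d : ℕ) (c : (Fin n → ℤ) → ℂ) : (Fin n → ℤ) →₀ ℂ :=
  ∑ α ∈ Tset n d, Finsupp.single α (c (sortAbs α))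

theorem NN_apply (n d : ℕ) (c : (Fin n → ℤ) → ℂ) (β : Fin n → ℤ) :
    NN n d c β = if β ∈ Tset n d then c (sortAbs β) else 0 := by
  rw [NN, Finset.sum_apply']
  rw [show (fun α => (Finsupp.single α (c (sortAbs α))) β)
    = fun α => if α = β then c (sortAbs α) else 0 from funext fun α => Finsupp.single_apply]
  rw [Finset.sum_ite_eq' (Tset n d) β (fun α => c (sortAbs α))]

theorem NN_winv (n d : ℕ) (c : (Fin n → ℤ) → ℂ) : WInv (NN n d c) := by
  intro ε π β
  rw [NN_apply, NN_apply]
  have h1 : (actZ ε π β ∈ Tset n d) ↔ (β ∈ Tset n d) := by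
    rw [mem_Tset, mem_Tset, wtZ_act]
  have h2 : sortAbs (actZ ε π β) = sortAbs β := sortAbs_invariant ε π β
  rw [h2]
  by_cases h : β ∈ Tset n d
  · rw [if_pos h, if_pos (h1.mpr h)]
  · rw [if_neg h, if_neg (fun hc => h (h1.mp hc))]

theorem NN_supp (n d : ℕ) (c : (Fin n → ℤ) → ℂ) :
    ∀ β ∈ (NN n d c).support, wtZ β ≤ d := by
  intro β hβ
  have h := Finsupp.mem_support_iff.mp hβ
  rw [NN_apply] at h
  by_cases h2 : β ∈ Tset n d
  · exact (mem_Tset n d β).mp h2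
  · rw [if_neg h2] at h
    exact absurd rfl h

theorem NN_partition (n d : ℕ) (c : (Fin n → ℤ) → ℂ) (μ : Fin n → ℤ)
    (hμ : IsPartition μ) (hw : wtZ μ ≤ d) : NN n d c μ = c μ := by
  rw [NN_apply, if_pos ((mem_Tset n d μ).mpr hw), sortAbs_of_partition μ hμ]

theorem NN_surj (n d : ℕ) (f : (Fin n → ℤ) →₀ ℂ) (hf : WInv f)
    (hsupp : ∀ α ∈ f.support, wtZ α ≤ d) : NN n d (fun γ => f γ) = f := by
  ext β
  rw [NN_apply]
  by_cases h : β ∈ Tset n d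
  · rw [if_pos h]
    exact apply_sortAbs f hf β
  · rw [if_neg h]
    by_contra hc
    exact h ((mem_Tset n d β).mpr (hsupp β (Finsupp.mem_support_iff.mpr fun h0 => hc h0.symm)))

noncomputable def NNlin (n d : ℕ) : ({μ // μ ∈ Lam n d} → ℂ) →ₗ[ℂ] ((Fin n → ℤ) →₀ ℂ) where
  toFun c := NN n d (fun γ => if h : γ ∈ Lam n d then c ⟨γ, h⟩ else 0)
  map_add' c1 c2 := by
    unfold NN
    rw [← Finset.sum_add_distrib]
    refine Finset.sum_congr rfl fun α _ => ?_
    rw [← Finsupp.single_add]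
    congr 1
    by_cases h : sortAbs α ∈ Lam n d <;> simp [h]
  map_smul' r c := by
    unfold NN
    rw [RingHom.id_apply, Finset.smul_sum]
    refine Finset.sum_congr rfl fun α _ => ?_
    rw [Finsupp.smul_single]
    congr 1
    by_cases h : sortAbs α ∈ Lam n d <;> simp [h]

theorem NNlin_apply (n d : ℕ) (c : {μ // μ ∈ Lam n d} → ℂ) :
    NNlin n d c = NN n d (fun γ => if h : γ ∈ Lam n d then c ⟨γ, h⟩ else 0) := rfl

noncomputable def EV (n d : ℕ) (q : ℂ) (τ : Fin n → ℂ) :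
    ((Fin n → ℤ) →₀ ℂ) →ₗ[ℂ] ({μ // μ ∈ Lam n d} → ℂ) :=
  LinearMap.pi (fun μ => evalLin (fun i => q ^ (μ.val i) * τ i))

theorem EV_apply (n d : ℕ) (q : ℂ) (τ : Fin n → ℂ) (f : (Fin n → ℤ) →₀ ℂ)
    (μ : {μ // μ ∈ Lam n d}) :
    EV n d q τ f μ = evalL f (fun i => q ^ (μ.val i) * τ i) := by
  rw [EV, LinearMap.pi_apply, ← evalL_eq_lin]

end Interp

open Interp in
/-- Symmetric interpolation theorem: for every function `f̄` on partitions of length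
`≤ n` and weight `≤ d` there is a unique `Wₙ`-invariant Laurent polynomial `f` of
degree `≤ d` with `f(μ̄) = f̄(μ)` for all such `μ`, where `μ̄ᵢ = q^{μᵢ} τᵢ`. -/
theorem stmt6 {n : ℕ} (hn : 1 ≤ n) (d : ℕ)
    (q : ℂ) (hq0 : 0 < ‖q‖) (hq1 : ‖q‖ < 1)
    (τ : Fin n → ℂ) (hτ : TauChain τ) (fb : (Fin n → ℤ) → ℂ) :
    ∃! f : (Fin n → ℤ) →₀ ℂ,
      WInv f ∧ (∀ α ∈ f.support, wtZ α ≤ d) ∧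
      ∀ μ : Fin n → ℤ, IsPartition μ → wtZ μ ≤ d →
        evalL f (fun i => q ^ μ i * τ i) = fb μ := by
  have hqne : q ≠ 0 := by
    intro h
    rw [h] at hq0
    simp at hq0
  have hinj : Function.Injective ((EV n d q τ).comp (NNlin n d)) := by
    rw [injective_iff_map_eq_zero]
    intro c hc
    have hf0 : NNlin n d c = 0 := by
      refine vanish q hqne hq1 n d τ hτ (NNlin n d c) ?_ ?_ ?_
      · rw [NNlin_apply]; exact NN_winv n d _
      · rw [NNlin_apply]; exact NN_supp n d _
      · intro μ hμ hw
        have hmem : μ ∈ Lam n d := (mem_Lam n d μ).mpr ⟨hμ, hw⟩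
        have h3 := congrFun hc ⟨μ, hmem⟩
        rw [LinearMap.comp_apply, EV_apply] at h3
        exact h3
    funext ν
    have hν := (mem_Lam n d ν.val).mp ν.2
    have h1 : (NNlin n d c) ν.val = c ν := by
      rw [NNlin_apply, NN_partition n d _ ν.val hν.1 hν.2, dif_pos ν.2]
    rw [hf0] at h1
    simp only [Finsupp.coe_zero, Pi.zero_apply] at h1
    exact h1.symm
  have hsurj : Function.Surjective ((EV n d q τ).comp (NNlin n d)) :=
    (LinearMap.injective_iff_surjective).mp hinj
  obtain ⟨c, hc⟩ := hsurj (fun ν => fb ν.val)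
  refine ⟨NNlin n d c, ⟨?_, ?_, ?_⟩, ?_⟩
  · rw [NNlin_apply]; exact NN_winv n d _
  · rw [NNlin_apply]; exact NN_supp n d _
  · intro μ hμ hw
    have hmem : μ ∈ Lam n d := (mem_Lam n d μ).mpr ⟨hμ, hw⟩
    have h3 := congrFun hc ⟨μ, hmem⟩
    rw [LinearMap.comp_apply, EV_apply] at h3
    exact h3
  · intro f₂ hf₂
    obtain ⟨hw2, hs2, hv2⟩ := hf₂
    have hdiff : f₂ - NNlin n d c = 0 := by
      refine vanish q hqne hq1 n d τ hτ (f₂ - NNlin n d c) ?_ ?_ ?_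
      · intro ε π α
        have hwN : WInv (NNlin n d c) := by rw [NNlin_apply]; exact NN_winv n d _
        rw [Finsupp.sub_apply, Finsupp.sub_apply, hw2, hwN]
      · intro α hα
        have h4 := Finsupp.support_sub (f := f₂) (g := NNlin n d c) hα
        rw [Finset.mem_union] at h4
        rcases h4 with h | h
        · exact hs2 α h
        · rw [NNlin_apply] at h
          exact NN_supp n d _ α h
      · intro μ hμ hwμ
        rw [evalL_eq_lin, map_sub]
        have h1 := hv2 μ hμ hwμ
        have hmem : μ ∈ Lam n d := (mem_Lam n d μ).mpr ⟨hμ, hwμ⟩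
        have h2 := congrFun hc ⟨μ, hmem⟩
        rw [LinearMap.comp_apply, EV_apply] at h2
        rw [evalL_eq_lin] at h1 h2
        rw [h1, h2]
        ring
    exact sub_eq_zero.mp hdiff
end
end

section
/- Let $0 < |q| < 1$ and $0 < |s| < 1$. For $m \in \mathbb{Z}_{\ge 0}$, the Laurent polynomial $R_m(x) := \dfrac{(sx;q)_m (sx^{-1};q)_m}{(q^m s^2;q)_m (q^{-m};q)_m}$ in one variable $x$ is invariant under $x \mapsto x^{-1}$, has degree $m$, and satisfies $R_m(q^k s) = \delta_{m,k}$ for $k = 0, 1, \ldots, m$. -/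
noncomputable section
open Finset

/-- The `q`-shifted factorial `(a;q)_k = (1-a)(1-qa)⋯(1-q^{k-1}a)`. -/
def qPoch (q a : ℂ) (k : ℕ) : ℂ := ∏ i ∈ Finset.range k, (1 - q ^ i * a)

/-- The one-variable symmetric interpolation polynomial
`R_m(x) = (sx;q)_m (sx⁻¹;q)_m / ((q^m s²;q)_m (q^{-m};q)_m)`. -/
def Rone (q s : ℂ) (m : ℕ) (x : ℂ) : ℂ :=
  (qPoch q (s * x) m * qPoch q (s * x⁻¹) m) /
    (qPoch q (q ^ m * s ^ 2) m * qPoch q (q ^ (-(m : ℤ))) m)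

/-- The one-variable nonsymmetric interpolation polynomial of degree `m ≥ 0`:
`G_m(x) = (qsx;q)_m (sx⁻¹;q)_m / ((q^{1+m} s²;q)_m (q^{-m};q)_m)`. -/
def Gone (q s : ℂ) (m : ℕ) (x : ℂ) : ℂ :=
  (qPoch q (q * s * x) m * qPoch q (s * x⁻¹) m) /
    (qPoch q (q ^ (1 + m) * s ^ 2) m * qPoch q (q ^ (-(m : ℤ))) m)

/-- The one-variable nonsymmetric interpolation polynomial of degree `-m`, `m > 0`:
`G_{-m}(x) = q^m s x (qsx;q)_{m-1} (sx⁻¹;q)_{m+1} / ((q^m s²;q)_{m+1} (q^{1-m};q)_{m-1})`. -/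
def GnegOne (q s : ℂ) (m : ℕ) (x : ℂ) : ℂ :=
  (q ^ m * s * x * qPoch q (q * s * x) (m - 1) * qPoch q (s * x⁻¹) (m + 1)) /
    (qPoch q (q ^ m * s ^ 2) (m + 1) * qPoch q (q ^ (1 - (m : ℤ))) (m - 1))

/-- Evaluation of a one-variable Laurent polynomial. -/
def eval1 (c : ℤ →₀ ℂ) (x : ℂ) : ℂ := c.sum fun j a => a * x ^ j

lemma aux_one_sub_ne (z : ℂ) (hz : ‖z‖ < 1) : (1 : ℂ) - z ≠ 0 := by
  intro h
  rw [sub_eq_zero] at h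
  rw [← h] at hz
  simp at hz

lemma aux_d_ne (q s : ℂ) (hq : q ≠ 0) (hq0 : 0 ≤ ‖q‖) (hq1 : ‖q‖ < 1)
    (hs1 : ‖s‖ < 1) (m : ℕ) :
    qPoch q (q ^ m * s ^ 2) m * qPoch q ((q : ℂ) ^ (-(m : ℤ))) m ≠ 0 := by
  apply mul_ne_zero
  · rw [qPoch]
    rw [Finset.prod_ne_zero_iff]
    intro i _
    apply aux_one_sub_ne
    rw [show q ^ i * (q ^ m * s ^ 2) = q ^ (i + m) * s ^ 2 by ring]
    rw [norm_mul, norm_pow, norm_pow]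
    calc ‖q‖ ^ (i + m) * ‖s‖ ^ 2
        ≤ 1 * ‖s‖ ^ 2 := by
          apply mul_le_mul_of_nonneg_right (pow_le_one₀ hq0 hq1.le) (by positivity)
      _ < 1 := by
          rw [one_mul]
          exact pow_lt_one₀ (by positivity) hs1 two_ne_zero
  · rw [qPoch]
    rw [Finset.prod_ne_zero_iff]
    intro i hi
    rw [Finset.mem_range] at hi
    have key : q ^ i * (q : ℂ) ^ (-(m : ℤ)) = (q ^ (m - i))⁻¹ := by
      rw [zpow_neg, zpow_natCast, pow_sub₀ q hq hi.le, mul_inv, inv_inv, mul_comm]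
    rw [key, sub_ne_zero]
    intro h
    have hne : (q : ℂ) ^ (m - i) = 1 := by
      rw [← inv_inv (q ^ (m - i)), ← h, inv_one]
    have := congrArg norm hne
    rw [norm_pow, norm_one] at this
    have h2 : ‖q‖ ^ (m - i) < 1 := pow_lt_one₀ hq0 hq1 (by omega)
    rw [this] at h2
    exact lt_irrefl _ h2

/-- `R_m` is invariant under `x ↦ x⁻¹`, is a Laurent polynomial of degree `m`,
and satisfies `R_m(q^k s) = δ_{m,k}` for `0 ≤ k ≤ m`. -/
theorem stmt7 (q s : ℂ) (hq0 : 0 < ‖q‖) (hq1 : ‖q‖ < 1)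
    (hs0 : 0 < ‖s‖) (hs1 : ‖s‖ < 1) (m : ℕ) :
    (∀ x : ℂ, x ≠ 0 → Rone q s m x⁻¹ = Rone q s m x) ∧
    (∃ c : ℤ →₀ ℂ, (∀ j ∈ c.support, j.natAbs ≤ m) ∧ (∃ j ∈ c.support, j.natAbs = m) ∧
      ∀ x : ℂ, x ≠ 0 → eval1 c x = Rone q s m x) ∧
    ∀ k : ℕ, k ≤ m → Rone q s m (q ^ k * s) = if k = m then 1 else 0 := by
  have hq : q ≠ 0 := by simpa using hq0.ne'
  have hs : s ≠ 0 := by simpa using hs0.ne'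
  have hd : qPoch q (q ^ m * s ^ 2) m * qPoch q ((q : ℂ) ^ (-(m : ℤ))) m ≠ 0 :=
    aux_d_ne q s hq hq0.le hq1 hs1 m
  set d : ℂ := qPoch q (q ^ m * s ^ 2) m * qPoch q ((q : ℂ) ^ (-(m : ℤ))) m with hd_def
  refine ⟨?_, ?_, ?_⟩
  · intro x hx
    rw [Rone, Rone, inv_inv, mul_comm (qPoch q (s * x⁻¹) m)]
  · -- Laurent polynomial structure
    classical
    open Polynomial in
    set A : ℂ[X] := ∏ i ∈ Finset.range m, (1 - C (q ^ i * s) * X) with hA_def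
    set B : ℂ[X] := ∏ i ∈ Finset.range m, (X - C (q ^ i * s)) with hB_def
    set p : ℂ[X] := C d⁻¹ * (A * B) with hp_def
    have hfac : ∀ i : ℕ, ((1 : ℂ[X]) - C (q ^ i * s) * X).natDegree = 1 ∧
        ((1 : ℂ[X]) - C (q ^ i * s) * X).leadingCoeff = -(q ^ i * s) := by
      intro i
      have ha : -(q ^ i * s) ≠ 0 := neg_ne_zero.mpr (mul_ne_zero (pow_ne_zero _ hq) hs)
      have h : (1 : ℂ[X]) - C (q ^ i * s) * X = C (-(q ^ i * s)) * X + C 1 := by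
        rw [map_neg, map_one]; ring
      exact ⟨by rw [h]; exact natDegree_linear ha, by rw [h]; exact leadingCoeff_linear ha⟩
    have hfacne : ∀ i ∈ Finset.range m, ((1 : ℂ[X]) - C (q ^ i * s) * X) ≠ 0 := by
      intro i _
      intro h
      have := (hfac i).1
      rw [h] at this
      simp at this
    have hAdeg : A.natDegree = m := by
      rw [hA_def, natDegree_prod _ _ hfacne,
        Finset.sum_congr rfl fun i _ => (hfac i).1]
      simp
    have hAlead : A.leadingCoeff = ∏ i ∈ Finset.range m, (-(q ^ i * s)) := by
      rw [hA_def, leadingCoeff_prod]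
      exact Finset.prod_congr rfl fun i _ => (hfac i).2
    have hAne : A ≠ 0 := by
      intro h
      have : A.leadingCoeff = 0 := by rw [h]; simp
      rw [hAlead] at this
      rw [Finset.prod_eq_zero_iff] at this
      obtain ⟨i, _, hi⟩ := this
      exact (neg_ne_zero.mpr (mul_ne_zero (pow_ne_zero _ hq) hs)) hi
    have hBmonic : B.Monic := monic_prod_of_monic _ _ fun i _ => monic_X_sub_C _
    have hBne : B ≠ 0 := hBmonic.ne_zero
    have hBdeg : B.natDegree = m := by
      rw [hB_def, natDegree_prod _ _ fun i _ => (monic_X_sub_C (q ^ i * s)).ne_zero,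
        Finset.sum_congr rfl fun i _ => natDegree_X_sub_C (q ^ i * s)]
      simp
    have hpne : p ≠ 0 := by
      apply mul_ne_zero _ (mul_ne_zero hAne hBne)
      simpa using inv_ne_zero hd
    have hpdeg : p.natDegree = 2 * m := by
      rw [hp_def, natDegree_mul (by simpa using inv_ne_zero hd) (mul_ne_zero hAne hBne),
        natDegree_mul hAne hBne, natDegree_C, hAdeg, hBdeg]
      ring
    set e : ℕ ↪ ℤ := ⟨fun n => (n : ℤ) - m, fun a b h => by simpa using h⟩ with he_def
    refine ⟨Finsupp.embDomain e p.toFinsupp.coeff, ?_, ?_, ?_⟩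
    · intro j hj
      rw [Finsupp.support_embDomain, Finset.mem_map] at hj
      obtain ⟨n, hn, rfl⟩ := hj
      have hn' : n ≤ p.natDegree := le_natDegree_of_mem_supp n hn
      rw [hpdeg] at hn'
      simp only [he_def, Function.Embedding.coeFn_mk]
      show ((n : ℤ) - m).natAbs ≤ m
      omega
    · refine ⟨(m : ℤ), ?_, by simp⟩
      rw [Finsupp.support_embDomain, Finset.mem_map]
      refine ⟨2 * m, ?_, by show ((2 * m : ℕ) : ℤ) - m = m; push_cast; ring⟩
      show 2 * m ∈ p.support
      rw [Polynomial.mem_support_iff, ← hpdeg, coeff_natDegree]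
      intro h
      exact hpne (leadingCoeff_eq_zero.mp h)
    · intro x hx
      have hxm : (x : ℂ) ^ m ≠ 0 := pow_ne_zero _ hx
      rw [eval1, Finsupp.sum_embDomain]
      have hzp : ∀ n : ℕ, (x : ℂ) ^ ((n : ℤ) - m) = x ^ n * ((x : ℂ) ^ m)⁻¹ := by
        intro n
        rw [zpow_sub₀ hx, zpow_natCast, zpow_natCast, div_eq_mul_inv]
      have step1 : (p.toFinsupp.coeff.sum fun n a => a * x ^ (e n)) = p.eval x * ((x : ℂ) ^ m)⁻¹ := by
        rw [eval_eq_sum, Polynomial.sum, Finsupp.sum, Finset.sum_mul]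
        apply Finset.sum_congr rfl
        intro n hn
        show p.coeff n * x ^ ((n : ℤ) - m) = p.coeff n * x ^ n * ((x : ℂ) ^ m)⁻¹
        rw [hzp n, mul_assoc]
      rw [step1]
      have hevalA : A.eval x = qPoch q (s * x) m := by
        rw [hA_def, eval_prod, qPoch]
        apply Finset.prod_congr rfl
        intro i _
        simp only [eval_sub, eval_one, eval_mul, eval_C, eval_X]
        ring
      have hevalB : B.eval x = x ^ m * qPoch q (s * x⁻¹) m := by
        rw [hB_def, eval_prod, qPoch,
          show (x : ℂ) ^ m = ∏ _i ∈ Finset.range m, x by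
            rw [Finset.prod_const, Finset.card_range],
          ← Finset.prod_mul_distrib]
        apply Finset.prod_congr rfl
        intro i _
        simp only [eval_sub, eval_X, eval_C]
        field_simp
      rw [hp_def, eval_mul, eval_mul, eval_C, hevalA, hevalB, Rone, ← hd_def]
      field_simp
  · intro k hk
    by_cases hkm : k = m
    · subst hkm
      rw [if_pos rfl, Rone]
      have h1 : s * (q ^ k * s) = q ^ k * s ^ 2 := by ring
      have h2 : s * (q ^ k * s)⁻¹ = q ^ (-(k : ℤ)) := by
        rw [zpow_neg, zpow_natCast]
        field_simp
      rw [h1, h2, ← hd_def, div_self hd]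
    · rw [if_neg hkm]
      have hkm' : k < m := lt_of_le_of_ne hk hkm
      have h2 : s * (q ^ k * s)⁻¹ = (q ^ k)⁻¹ := by
        field_simp
      rw [Rone, h2]
      have hz : qPoch q ((q ^ k)⁻¹) m = 0 := by
        rw [qPoch]
        apply Finset.prod_eq_zero (Finset.mem_range.mpr hkm')
        rw [mul_inv_cancel₀ (pow_ne_zero _ hq), sub_self]
      rw [hz, mul_zero, zero_div]
end
end

section
/- Let $0 < |q| < 1$ and $0 < |s| < 1$. For $m \in \mathbb{Z}_{\ge 0}$, the Laurent polynomial $G_m(x) := \dfrac{(qsx;q)_m (sx^{-1};q)_m}{(q^{1+m}s^2;q)_m (q^{-m};q)_m}$ has degree $\le m$ and satisfies $G_m(q^k s^{\mathrm{sgn}(k)}) = \delta_{m,k}$ for all $k \in \mathbb{Z}$ with $|k| \le m$, where $\mathrm{sgn}(k) = 1$ if $k \ge 0$ and $-1$ if $k < 0$. -/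
noncomputable section
open Finset

lemma one_sub_ne_zero_of_abs_ne {z : ℂ} (h : ‖z‖ ≠ 1) : 1 - z ≠ 0 := by
  intro h0
  apply h
  rw [sub_eq_zero] at h0
  rw [← h0]
  simp

lemma qPochSmall_ne {q a : ℂ} (hq : ‖q‖ ≤ 1) (ha : ‖a‖ < 1) (m : ℕ) :
    qPoch q a m ≠ 0 := by
  unfold qPoch
  refine Finset.prod_ne_zero_iff.2 fun i _ => ?_
  apply one_sub_ne_zero_of_abs_ne
  have h1 : ‖q ^ i * a‖ < 1 := by
    rw [norm_mul, norm_pow]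
    calc ‖q‖ ^ i * ‖a‖ ≤ 1 * ‖a‖ := by
          apply mul_le_mul_of_nonneg_right _ (norm_nonneg a)
          exact pow_le_one₀ (norm_nonneg q) hq
      _ < 1 := by simpa using ha
  exact ne_of_lt h1

lemma qPochNeg_ne {q : ℂ} (hq0 : 0 < ‖q‖) (hq1 : ‖q‖ < 1) (m : ℕ) :
    qPoch q (q ^ (-(m : ℤ))) m ≠ 0 := by
  have hq : q ≠ 0 := fun h => by simp [h] at hq0
  unfold qPoch
  refine Finset.prod_ne_zero_iff.2 fun i hi => ?_
  rw [Finset.mem_range] at hi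
  intro h0
  rw [sub_eq_zero] at h0
  have h1 : ‖q ^ i * q ^ (-(m : ℤ))‖ = 1 := by rw [← h0]; simp
  rw [norm_mul, norm_pow, norm_zpow, zpow_neg, zpow_natCast] at h1
  have h2 : ‖q‖ ^ i = ‖q‖ ^ m := by
    have hm : ‖q‖ ^ m ≠ 0 := pow_ne_zero _ (ne_of_gt hq0)
    field_simp at h1
    linarith [h1]
  have h3 : ‖q‖ ^ m < ‖q‖ ^ i :=
    pow_lt_pow_right_of_lt_one₀ hq0 hq1 hi
  rw [h2] at h3
  exact lt_irrefl _ h3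

/-- `G_m` (`m ≥ 0`) is a Laurent polynomial of degree `≤ m` and satisfies
`G_m(q^k s^{sgn k}) = δ_{m,k}` for all `k ∈ ℤ` with `|k| ≤ m`. -/
theorem stmt8 (q s : ℂ) (hq0 : 0 < ‖q‖) (hq1 : ‖q‖ < 1)
    (hs0 : 0 < ‖s‖) (hs1 : ‖s‖ < 1) (m : ℕ) :
    (∃ c : ℤ →₀ ℂ, (∀ j ∈ c.support, j.natAbs ≤ m) ∧
      ∀ x : ℂ, x ≠ 0 → eval1 c x = Gone q s m x) ∧
    ∀ k : ℤ, k.natAbs ≤ m →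
      Gone q s m (q ^ k * (if 0 ≤ k then s else s⁻¹)) = if k = (m : ℤ) then 1 else 0 := by
  have hq : q ≠ 0 := fun h => by simp [h] at hq0
  have hs : s ≠ 0 := fun h => by simp [h] at hs0
  have hD1 : qPoch q (q ^ (1 + m) * s ^ 2) m ≠ 0 := by
    apply qPochSmall_ne (le_of_lt hq1)
    rw [norm_mul, norm_pow, norm_pow]
    have h1 : ‖q‖ ^ (1 + m) < 1 := pow_lt_one₀ (norm_nonneg q) hq1 (by omega)
    have h2 : ‖s‖ ^ 2 ≤ 1 := pow_le_one₀ (norm_nonneg s) (le_of_lt hs1)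
    calc ‖q‖ ^ (1 + m) * ‖s‖ ^ 2 ≤ ‖q‖ ^ (1 + m) * 1 :=
          mul_le_mul_of_nonneg_left h2 (pow_nonneg (norm_nonneg q) _)
      _ < 1 := by simpa using h1
  have hD2 : qPoch q (q ^ (-(m : ℤ))) m ≠ 0 := qPochNeg_ne hq0 hq1 m
  have hdd : qPoch q (q ^ (1 + m) * s ^ 2) m * qPoch q (q ^ (-(m : ℤ))) m ≠ 0 :=
    mul_ne_zero hD1 hD2
  constructor
  · -- Laurent polynomial part
    set P : Polynomial ℂ := ∏ i ∈ Finset.range m,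
      (1 - Polynomial.C (q ^ i * (q * s)) * Polynomial.X) with hPdef
    set Q : Polynomial ℂ := ∏ i ∈ Finset.range m,
      (Polynomial.X - Polynomial.C (q ^ i * s)) with hQdef
    set F : Polynomial ℂ :=
      Polynomial.C (qPoch q (q ^ (1 + m) * s ^ 2) m * qPoch q (q ^ (-(m : ℤ))) m)⁻¹ * P * Q
      with hFdef
    have hdegP : P.natDegree ≤ m := by
      refine (Polynomial.natDegree_prod_le _ _).trans ?_
      have h1 : ∀ i ∈ Finset.range m,
          (1 - Polynomial.C (q ^ i * (q * s)) * Polynomial.X).natDegree ≤ 1 := by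
        intro i _
        refine (Polynomial.natDegree_sub_le _ _).trans ?_
        simp only [Polynomial.natDegree_one, max_le_iff]
        exact ⟨Nat.zero_le _, (Polynomial.natDegree_C_mul_le _ _).trans (by simp)⟩
      simpa using Finset.sum_le_card_nsmul (Finset.range m) _ 1 h1
    have hdegQ : Q.natDegree ≤ m := by
      refine (Polynomial.natDegree_prod_le _ _).trans ?_
      have h1 : ∀ i ∈ Finset.range m,
          (Polynomial.X - Polynomial.C (q ^ i * s)).natDegree ≤ 1 :=
        fun i _ => Polynomial.natDegree_X_sub_C_le _
      simpa using Finset.sum_le_card_nsmul (Finset.range m) _ 1 h1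
    have hdegF : F.natDegree ≤ m + m := by
      refine (Polynomial.natDegree_mul_le).trans ?_
      have h1 : (Polynomial.C (qPoch q (q ^ (1 + m) * s ^ 2) m *
          qPoch q (q ^ (-(m : ℤ))) m)⁻¹ * P).natDegree ≤ m :=
        (Polynomial.natDegree_C_mul_le _ _).trans hdegP
      omega
    refine ⟨Finsupp.embDomain ⟨fun i : ℕ => (i : ℤ) - m, by intro a b h; exact Int.natCast_inj.mp (sub_left_inj.mp h)⟩ F.toFinsupp.coeff,
      ?_, ?_⟩
    · intro j hj
      rw [Finsupp.support_embDomain, Finset.mem_map] at hj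
      obtain ⟨i, hi, rfl⟩ := hj
      have hi' : i ≤ m + m := le_trans (Polynomial.le_natDegree_of_mem_supp i hi) hdegF
      change ((i : ℤ) - m).natAbs ≤ m
      omega
    · intro x hx
      have key : eval1 (Finsupp.embDomain
          ⟨fun i : ℕ => (i : ℤ) - m, by intro a b h; exact Int.natCast_inj.mp (sub_left_inj.mp h)⟩ F.toFinsupp.coeff) x
          = F.eval x / x ^ m := by
        rw [eval1, Finsupp.sum_embDomain]
        rw [Polynomial.eval_eq_sum]
        simp only [Polynomial.sum_def, Finsupp.sum, Function.Embedding.coeFn_mk]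
        rw [Finset.sum_div]
        refine Finset.sum_congr rfl fun i _ => ?_
        change _ * x ^ ((i : ℤ) - m) = _
        rw [zpow_sub₀ hx, zpow_natCast, zpow_natCast, mul_div_assoc]
        rfl
      have hPev : Polynomial.eval x P = qPoch q (q * s * x) m := by
        rw [hPdef, Polynomial.eval_prod]
        unfold qPoch
        refine Finset.prod_congr rfl fun i _ => ?_
        simp only [Polynomial.eval_sub, Polynomial.eval_one, Polynomial.eval_mul,
          Polynomial.eval_C, Polynomial.eval_X]
        ring
      have hQev : (x⁻¹) ^ m * Polynomial.eval x Q = qPoch q (s * x⁻¹) m := by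
        rw [hQdef, Polynomial.eval_prod]
        unfold qPoch
        rw [show (x⁻¹ : ℂ) ^ m = ∏ _i ∈ Finset.range m, x⁻¹ from by simp,
          ← Finset.prod_mul_distrib]
        refine Finset.prod_congr rfl fun i _ => ?_
        simp only [Polynomial.eval_sub, Polynomial.eval_X, Polynomial.eval_C]
        rw [mul_sub, inv_mul_cancel₀ hx]
        ring
      rw [key, Gone, ← hPev, ← hQev]
      rw [hFdef]
      simp only [Polynomial.eval_mul, Polynomial.eval_C]
      field_simp
      rw [mul_assoc _ (x ^ m), ← mul_pow, mul_one_div_cancel hx, one_pow, mul_one]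
  · -- evaluation part
    intro k hk
    by_cases hk0 : 0 ≤ k
    · rw [if_pos hk0]
      obtain ⟨n, rfl⟩ : ∃ n : ℕ, k = (n : ℤ) := ⟨k.toNat, (Int.toNat_of_nonneg hk0).symm⟩
      have hnm : n ≤ m := by simpa using hk
      rw [zpow_natCast]
      by_cases hmn : n = m
      · subst hmn
        rw [if_pos rfl]
        rw [Gone]
        have e1 : q * s * (q ^ n * s) = q ^ (1 + n) * s ^ 2 := by ring
        have e2 : s * (q ^ n * s)⁻¹ = q ^ (-(n : ℤ)) := by
          rw [zpow_neg, zpow_natCast]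
          field_simp
        rw [e1, e2, div_self hdd]
      · rw [if_neg (by exact_mod_cast hmn)]
        have hlt : n < m := lt_of_le_of_ne hnm hmn
        have hz : qPoch q (s * (q ^ n * s)⁻¹) m = 0 := by
          unfold qPoch
          apply Finset.prod_eq_zero (Finset.mem_range.2 hlt)
          have e3 : s * (q ^ n * s)⁻¹ = (q ^ n)⁻¹ := by
            field_simp
          rw [e3, mul_inv_cancel₀ (pow_ne_zero _ hq), sub_self]
        rw [Gone, hz, mul_zero, zero_div]
    · rw [if_neg hk0]
      push_neg at hk0
      have hn1 : 1 ≤ k.natAbs := by omega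
      have hk' : k = -(k.natAbs : ℤ) := by omega
      rw [if_neg (by omega : ¬k = (m : ℤ))]
      have hfac : q ^ (k.natAbs - 1) * (q * s * (q ^ k * s⁻¹)) = 1 := by
        rw [hk']
        simp only [Int.natAbs_neg, Int.natAbs_natCast]
        have e4 : q * s * (q ^ (-(k.natAbs : ℤ)) * s⁻¹)
            = q * q ^ (-(k.natAbs : ℤ)) * (s * s⁻¹) := by ring
        rw [e4, mul_inv_cancel₀ hs, mul_one]
        have e5 : (q : ℂ) * q ^ (-(k.natAbs : ℤ)) = q ^ (1 - (k.natAbs : ℤ)) := by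
          rw [sub_eq_add_neg, zpow_add₀ hq, zpow_one]
        rw [e5, ← zpow_natCast q (k.natAbs - 1), ← zpow_add₀ hq]
        have e6 : ((k.natAbs - 1 : ℕ) : ℤ) + (1 - (k.natAbs : ℤ)) = 0 := by omega
        rw [e6, zpow_zero]
      have hz : qPoch q (q * s * (q ^ k * s⁻¹)) m = 0 := by
        unfold qPoch
        apply Finset.prod_eq_zero (Finset.mem_range.2 (show k.natAbs - 1 < m by omega))
        rw [hfac, sub_self]
      rw [Gone, hz, zero_mul, zero_div]
end
end

section
/- Let $0 < |q| < 1$ and $0 < |s| < 1$. For $m \in \mathbb{Z}_{> 0}$, the Laurent polynomial $G_{-m}(x) := \dfrac{q^m s x\,(qsx;q)_{m-1}(sx^{-1};q)_{m+1}}{(q^m s^2;q)_{m+1}(q^{1-m};q)_{m-1}}$ has degree $\le m$ and satisfies $G_{-m}(q^k s^{\mathrm{sgn}(k)}) = \delta_{-m,k}$ for all $k \in \mathbb{Z}$ with $|k| \le m$, where $\mathrm{sgn}(k) = 1$ if $k \ge 0$ and $-1$ if $k < 0$. -/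
noncomputable section
open Finset

lemma qPoch_eq_zero {q a : ℂ} {k i : ℕ} (hi : i < k) (h : q ^ i * a = 1) :
    qPoch q a k = 0 := by
  refine Finset.prod_eq_zero (Finset.mem_range.2 hi) ?_
  rw [h]; ring

lemma qPoch_ne_zero {q a : ℂ} (hq : ‖q‖ ≤ 1) (ha : ‖a‖ < 1) (k : ℕ) :
    qPoch q a k ≠ 0 := by
  unfold qPoch
  refine Finset.prod_ne_zero_iff.2 fun i _ h => ?_
  have h1 : q ^ i * a = 1 := (sub_eq_zero.mp h).symm
  have h2 : ‖q ^ i * a‖ = 1 := by rw [h1, norm_one]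
  rw [norm_mul, norm_pow] at h2
  have h3 : ‖q‖ ^ i * ‖a‖ < 1 :=
    lt_of_le_of_lt (mul_le_of_le_one_left (norm_nonneg a) (pow_le_one₀ (norm_nonneg q) hq)) ha
  linarith

lemma zpow_ne_one' {q : ℂ} (hq0 : 0 < ‖q‖) (hq1 : ‖q‖ < 1)
    {j : ℤ} (hj : j ≠ 0) : q ^ j ≠ 1 := by
  intro h
  have habs : ‖q‖ ^ j = 1 := by
    have := congrArg (fun z : ℂ => ‖z‖) h
    rwa [norm_zpow, norm_one] at this
  exact hj (zpow_right_injective₀ hq0 (ne_of_lt hq1) (habs.trans (zpow_zero _).symm))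

/-- `G_{-m}` (`m > 0`) is a Laurent polynomial of degree `≤ m` and satisfies
`G_{-m}(q^k s^{sgn k}) = δ_{-m,k}` for all `k ∈ ℤ` with `|k| ≤ m`. -/
theorem stmt9 (q s : ℂ) (hq0 : 0 < ‖q‖) (hq1 : ‖q‖ < 1)
    (hs0 : 0 < ‖s‖) (hs1 : ‖s‖ < 1) (m : ℕ) (hm : 0 < m) :
    (∃ c : ℤ →₀ ℂ, (∀ j ∈ c.support, j.natAbs ≤ m) ∧
      ∀ x : ℂ, x ≠ 0 → eval1 c x = GnegOne q s m x) ∧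
    ∀ k : ℤ, k.natAbs ≤ m →
      GnegOne q s m (q ^ k * (if 0 ≤ k then s else s⁻¹)) = if k = -(m : ℤ) then 1 else 0 := by
  have hq : q ≠ 0 := by
    intro h; rw [h, norm_zero] at hq0; exact lt_irrefl 0 hq0
  have hs : s ≠ 0 := by
    intro h; rw [h, norm_zero] at hs0; exact lt_irrefl 0 hs0
  obtain ⟨n, rfl⟩ : ∃ n, m = n + 1 := ⟨m - 1, (Nat.succ_pred_eq_of_pos hm).symm⟩
  constructor
  · -- Laurent polynomial part
    set D : ℂ := qPoch q (q ^ (n + 1) * s ^ 2) (n + 1 + 1) * qPoch q (q ^ (1 - ((n + 1 : ℕ) : ℤ))) (n + 1 - 1) with hD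
    set P : Polynomial ℂ :=
      Polynomial.C (q ^ (n + 1) * s / D) *
        (∏ i ∈ range n, (1 - Polynomial.C (q ^ (1 + i) * s) * Polynomial.X)) *
        ∏ i ∈ range (n + 2), (Polynomial.X - Polynomial.C (q ^ i * s)) with hP
    have hdeg : P.natDegree ≤ 2 * n + 2 := by
      refine le_trans Polynomial.natDegree_mul_le ?_
      have h1 : (Polynomial.C (q ^ (n + 1) * s / D) *
          ∏ i ∈ range n, (1 - Polynomial.C (q ^ (1 + i) * s) * Polynomial.X)).natDegree ≤ n := by
        refine le_trans Polynomial.natDegree_mul_le ?_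
        rw [Polynomial.natDegree_C, zero_add]
        refine le_trans (Polynomial.natDegree_prod_le _ _) ?_
        refine le_trans (Finset.sum_le_card_nsmul _ _ 1 fun i _ => ?_) (by simp)
        refine le_trans (Polynomial.natDegree_sub_le _ _) (max_le (by simp) ?_)
        exact le_trans (Polynomial.natDegree_C_mul_le _ _) (le_of_eq Polynomial.natDegree_X)
      have h2 : (∏ i ∈ range (n + 2), (Polynomial.X - Polynomial.C (q ^ i * s))).natDegree ≤ n + 2 := by
        refine le_trans (Polynomial.natDegree_prod_le _ _) ?_
        refine le_trans (Finset.sum_le_card_nsmul _ _ 1 fun i _ => Polynomial.natDegree_X_sub_C_le _) (by simp)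
      omega
    have hinj : Function.Injective (fun t : ℕ => (t : ℤ) - ((n : ℤ) + 1)) := by
      intro a b h
      simp only at h
      omega
    have v : ℕ →₀ ℂ := P.toFinsupp.coeff
    refine ⟨Finsupp.embDomain ⟨fun t : ℕ => (t : ℤ) - ((n : ℤ) + 1), hinj⟩
        (show ℕ →₀ ℂ from P.toFinsupp.coeff), ?_, ?_⟩
    · intro j hj
      rw [Finsupp.support_embDomain, Finset.mem_map] at hj
      obtain ⟨t, ht, rfl⟩ := hj
      have h1 : t ≤ P.natDegree := Polynomial.le_natDegree_of_mem_supp t ht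
      have h2 : t ≤ 2 * n + 2 := le_trans h1 hdeg
      simp only [Function.Embedding.coeFn_mk]
      omega
    · intro x hx
      rw [eval1, Finsupp.sum, Finsupp.support_embDomain, Finset.sum_map]
      have step1 : ∀ t ∈ (show ℕ →₀ ℂ from P.toFinsupp.coeff).support,
          (Finsupp.embDomain ⟨fun t : ℕ => (t : ℤ) - ((n : ℤ) + 1), hinj⟩
              (show ℕ →₀ ℂ from P.toFinsupp.coeff))
            ((⟨fun t : ℕ => (t : ℤ) - ((n : ℤ) + 1), hinj⟩ : ℕ ↪ ℤ) t) *
            x ^ ((⟨fun t : ℕ => (t : ℤ) - ((n : ℤ) + 1), hinj⟩ : ℕ ↪ ℤ) t)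
          = P.coeff t * x ^ t * x ^ (-((n : ℤ) + 1)) := by
        intro t ht
        rw [Finsupp.embDomain_apply_self]
        simp only [Function.Embedding.coeFn_mk]
        rw [show (t : ℤ) - ((n : ℤ) + 1) = (t : ℤ) + (-((n : ℤ) + 1)) by ring, zpow_add₀ hx,
          zpow_natCast, ← mul_assoc]
        rfl
      rw [Finset.sum_congr rfl step1]
      have step2 : ∑ t ∈ (show ℕ →₀ ℂ from P.toFinsupp.coeff).support, P.coeff t * x ^ t * x ^ (-((n : ℤ) + 1))
          = P.eval x * x ^ (-((n : ℤ) + 1)) := by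
        rw [Polynomial.eval_eq_sum, Polynomial.sum_def, Finset.sum_mul]
        rfl
      rw [step2]
      -- now evaluate P and compare with GnegOne
      have hev : P.eval x = (q ^ (n + 1) * s / D) *
          (∏ i ∈ range n, (1 - q ^ (1 + i) * s * x)) *
          ∏ i ∈ range (n + 2), (x - q ^ i * s) := by
        simp [hP, Polynomial.eval_prod, Polynomial.eval_sub, Polynomial.eval_mul]
      rw [hev]
      rw [GnegOne]
      have hA : qPoch q (q * s * x) (n + 1 - 1) = ∏ i ∈ range n, (1 - q ^ (1 + i) * s * x) := by
        simp only [Nat.add_sub_cancel, qPoch]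
        refine Finset.prod_congr rfl fun i _ => ?_
        rw [pow_add, pow_one]; ring
      have hB : qPoch q (s * x⁻¹) (n + 1 + 1) =
          (∏ i ∈ range (n + 2), (x - q ^ i * s)) * (x⁻¹) ^ (n + 2) := by
        rw [qPoch]
        have hfac : ∀ i ∈ range (n + 1 + 1), (1 - q ^ i * (s * x⁻¹)) = (x - q ^ i * s) * x⁻¹ := by
          intro i _
          field_simp
        rw [Finset.prod_congr rfl hfac, Finset.prod_mul_distrib, Finset.prod_const,
          Finset.card_range]
      rw [hA, hB]
      have hxp : x ^ (-((n : ℤ) + 1)) = (x⁻¹) ^ (n + 1) := by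
        rw [show -((n : ℤ) + 1) = -(((n + 1 : ℕ) : ℤ)) by push_cast; ring, zpow_neg,
          zpow_natCast, inv_pow]
      rw [hxp, hD]
      generalize qPoch q (q ^ (n + 1) * s ^ 2) (n + 1 + 1) = D1
      generalize qPoch q (q ^ (1 - ((n + 1 : ℕ) : ℤ))) (n + 1 - 1) = D2
      generalize (∏ i ∈ range n, (1 - q ^ (1 + i) * s * x)) = A
      generalize (∏ i ∈ range (n + 2), (x - q ^ i * s)) = B
      rw [pow_succ x⁻¹ (n + 1),
        show q ^ (n + 1) * s * x * A * (B * (x⁻¹ ^ (n + 1) * x⁻¹))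
          = q ^ (n + 1) * s * A * B * x⁻¹ ^ (n + 1) * (x * x⁻¹) from by ring,
        mul_inv_cancel₀ hx, mul_one]
      ring
  · -- evaluation part
    intro k hk
    by_cases hk0 : 0 ≤ k
    · rw [if_pos hk0, if_neg (by omega)]
      have harg : s * (q ^ k * s)⁻¹ = q ^ (-k) := by
        rw [mul_inv, zpow_neg,
          show s * ((q ^ k)⁻¹ * s⁻¹) = (q ^ k)⁻¹ * (s * s⁻¹) by ring,
          mul_inv_cancel₀ hs, mul_one]
      have hz : qPoch q (q ^ (-k)) (n + 1 + 1) = 0 := by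
        refine qPoch_eq_zero (i := k.toNat) (by omega) ?_
        rw [← zpow_natCast q k.toNat, ← zpow_add₀ hq]
        rw [show (k.toNat : ℤ) + -k = 0 by omega, zpow_zero]
      rw [GnegOne, harg, hz]
      simp
    · push_neg at hk0
      by_cases hkm : k = -((n : ℤ) + 1)
      · subst hkm
        rw [if_neg (by omega), if_pos (by push_cast; ring)]
        have h1 : q ^ (n + 1) * s * (q ^ (-((n : ℤ) + 1)) * s⁻¹) = 1 := by
          rw [← zpow_natCast q (n + 1)]
          rw [show q ^ ((n + 1 : ℕ) : ℤ) * s * (q ^ (-((n : ℤ) + 1)) * s⁻¹)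
              = (q ^ ((n + 1 : ℕ) : ℤ) * q ^ (-((n : ℤ) + 1))) * (s * s⁻¹) by ring]
          rw [← zpow_add₀ hq, show ((n + 1 : ℕ) : ℤ) + -((n : ℤ) + 1) = 0 by omega, zpow_zero,
            mul_inv_cancel₀ hs, one_mul]
        have h2 : q * s * (q ^ (-((n : ℤ) + 1)) * s⁻¹) = q ^ (1 - ((n + 1 : ℕ) : ℤ)) := by
          rw [show q * s * (q ^ (-((n : ℤ) + 1)) * s⁻¹) = (q ^ (1 : ℤ) * q ^ (-((n : ℤ) + 1))) * (s * s⁻¹) by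
            rw [zpow_one]; ring]
          rw [← zpow_add₀ hq, mul_inv_cancel₀ hs, mul_one]
          congr 1 <;> push_cast <;> ring
        have h3 : s * (q ^ (-((n : ℤ) + 1)) * s⁻¹)⁻¹ = q ^ (n + 1) * s ^ 2 := by
          rw [mul_inv, inv_inv, zpow_neg, inv_inv, ← zpow_natCast q (n + 1)]
          push_cast; ring
        rw [GnegOne, h1, h2, h3]
        have hBne : qPoch q (q ^ (n + 1) * s ^ 2) (n + 1 + 1) ≠ 0 := by
          refine qPoch_ne_zero hq1.le ?_ _
          rw [norm_mul, norm_pow, norm_pow]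
          have h4 : ‖q‖ ^ (n + 1) ≤ 1 := pow_le_one₀ (norm_nonneg q) hq1.le
          have h5 : ‖s‖ ^ 2 < 1 := by nlinarith
          nlinarith [pow_nonneg (norm_nonneg q) (n + 1), sq_nonneg (‖s‖)]
        have hAne : qPoch q (q ^ (1 - ((n + 1 : ℕ) : ℤ))) (n + 1 - 1) ≠ 0 := by
          rw [qPoch]
          refine Finset.prod_ne_zero_iff.2 fun i hi h => ?_
          have h1' : q ^ i * q ^ (1 - ((n + 1 : ℕ) : ℤ)) = 1 := (sub_eq_zero.mp h).symm
          rw [← zpow_natCast q i, ← zpow_add₀ hq] at h1'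
          have hi' : i < n + 1 - 1 := Finset.mem_range.mp hi
          exact zpow_ne_one' hq0 hq1 (by omega) h1'
        rw [one_mul, mul_comm (qPoch q (q ^ (n + 1) * s ^ 2) (n + 1 + 1)) _]
        rw [div_self (mul_ne_zero hAne hBne)]
      · rw [if_neg (not_le.mpr hk0), if_neg (by omega)]
        have harg : q * s * (q ^ k * s⁻¹) = q ^ (1 + k) := by
          rw [zpow_add₀ hq, zpow_one,
            show q * s * (q ^ k * s⁻¹) = (q * q ^ k) * (s * s⁻¹) by ring, mul_inv_cancel₀ hs, mul_one]
        have hz : qPoch q (q ^ (1 + k)) (n + 1 - 1) = 0 := by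
          refine qPoch_eq_zero (i := (-k - 1).toNat) (by omega) ?_
          rw [← zpow_natCast q (-k - 1).toNat, ← zpow_add₀ hq]
          rw [show ((-k - 1).toNat : ℤ) + (1 + k) = 0 by omega, zpow_zero]
        rw [GnegOne, harg, hz]
        simp
end
end
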